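/- arXiv:math/0407057 — 5 statements merged into one kernel-verified Lean document; each statement's English description precedes it below -/
import Mathlib

section
/- For each n ∈ ℝ₊^I with n ≠ 0, the optimization problem of maximizing G_n(Λ⁺) over the feasible set for n has a unique optimal solution Λ⁺(n) = (Λ_i(n) : i ∈ I₊(n)); moreover every component of Λ⁺(n) is strictly positive and is bounded above by C* = max_j C_j. -/
open Real Set

lemma myStrictConcaveOn.const_mul {f : ℝ → ℝ} {s : Set ℝ} (hf : StrictConcaveOn ℝ s f)
    {c : ℝ} (hc : 0 < c) : StrictConcaveOn ℝ s (fun x => c * f x) := by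
  refine ⟨hf.1, fun x hx y hy hxy a b ha hb hab => ?_⟩
  have := hf.2 hx hy hxy ha hb hab
  simp only [smul_eq_mul] at *
  nlinarith

lemma myStrictConvexOn.neg_const_mul {f : ℝ → ℝ} {s : Set ℝ} (hf : StrictConvexOn ℝ s f)
    {c : ℝ} (hc : c < 0) : StrictConcaveOn ℝ s (fun x => c * f x) := by
  refine ⟨hf.1, fun x hx y hy hxy a b ha hb hab => ?_⟩
  have := hf.2 hx hy hxy ha hb hab
  simp only [smul_eq_mul] at *
  nlinarith

lemma myStrictConvexOn_rpow_neg {p : ℝ} (hp : p < 0) :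
    StrictConvexOn ℝ (Set.Ioi 0) fun x : ℝ => x ^ p := by
  apply strictConvexOn_of_deriv2_pos (convex_Ioi 0)
  · intro x hx
    exact (Real.continuousAt_rpow_const x p (Or.inl (ne_of_gt hx))).continuousWithinAt
  · intro x hx
    rw [interior_Ioi] at hx
    have hx0 : (0:ℝ) < x := hx
    have hev : deriv (fun y : ℝ => y ^ p) =ᶠ[nhds x] fun y => p * y ^ (p - 1) := by
      filter_upwards [eventually_ne_nhds hx0.ne'] with y hy
      exact (Real.hasDerivAt_rpow_const (Or.inl hy)).deriv
    have h2 : deriv^[2] (fun y : ℝ => y ^ p) x = deriv (fun y : ℝ => p * y ^ (p - 1)) x := by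
      show deriv (deriv (fun y : ℝ => y ^ p)) x = _
      exact Filter.EventuallyEq.deriv_eq hev
    rw [h2]
    have hd : HasDerivAt (fun y : ℝ => p * y ^ (p - 1)) (p * ((p - 1) * x ^ (p - 1 - 1))) x :=
      (Real.hasDerivAt_rpow_const (p := p - 1) (Or.inl hx0.ne')).const_mul p
    rw [hd.deriv]
    have : (0:ℝ) < x ^ (p - 1 - 1) := Real.rpow_pos_of_pos hx0 _
    have hpp : 0 < p * (p - 1) := mul_pos_of_neg_of_neg hp (by linarith)
    nlinarith [mul_pos hpp this]


noncomputable section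

/-- Feasible set for the bandwidth allocation problem at state `n`: the vector
`Λ⁺ = (Λ_i : i ∈ I₊(n))` is embedded in `ℝ^I` by requiring `L i = 0` whenever `n i = 0`. -/
def Feasible {I J : ℕ} (A : Fin J → Fin I → ℝ) (C : Fin J → ℝ)
    (n : Fin I → ℝ) : Set (Fin I → ℝ) :=
  {L | (∀ i, 0 ≤ L i) ∧ (∀ i, n i = 0 → L i = 0) ∧ ∀ j, ∑ i, A j i * L i ≤ C j}

/-- The objective `G_n(Λ⁺)`, taking the value `⊥ = -∞` when `α ≥ 1` and some
coordinate of `Λ⁺` in `I₊(n)` vanishes. -/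
def Gfun {I : ℕ} (α : ℝ) (κ : Fin I → ℝ) (n L : Fin I → ℝ) : EReal :=
  if 1 ≤ α ∧ ∃ i, 0 < n i ∧ L i = 0 then ⊥
  else if α = 1 then
    ((∑ i, if 0 < n i then κ i * n i * Real.log (L i) else 0 : ℝ) : EReal)
  else
    ((∑ i, if 0 < n i then κ i * n i ^ α * L i ^ (1 - α) / (1 - α) else 0 : ℝ) : EReal)

/-- `L` is an optimal weighted α-fair bandwidth allocation for the state `n`,
i.e. a maximizer of `G_n` over the feasible set for `n` (with `L i = 0` for `i ∈ I₀(n)`). -/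
def IsAlloc {I J : ℕ} (A : Fin J → Fin I → ℝ) (C : Fin J → ℝ) (α : ℝ)
    (κ : Fin I → ℝ) (n L : Fin I → ℝ) : Prop :=
  L ∈ Feasible A C n ∧ ∀ L' ∈ Feasible A C n, Gfun α κ n L' ≤ Gfun α κ n L

/-- `f` is absolutely continuous on `[0, T]` for every `T > 0` (ε-δ definition with
finitely many pairwise disjoint subintervals). -/
def AbsContNonneg (f : ℝ → ℝ) : Prop :=
  ∀ T > (0:ℝ), ∀ ε > (0:ℝ), ∃ δ > (0:ℝ), ∀ (m : ℕ) (a b : Fin m → ℝ),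
    (∀ k, 0 ≤ a k ∧ a k ≤ b k ∧ b k ≤ T) →
    (∀ k l, k < l → b k ≤ a l ∨ b l ≤ a k) →
    (∑ k, (b k - a k)) < δ → (∑ k, |f (b k) - f (a k)|) < ε

/-- Fluid model solution: `n : [0,∞) → ℝ₊^I` absolutely continuous, and at every
regular point `t` the derivative conditions (13) and capacity condition (14) hold. -/
def IsFluidSol {I J : ℕ} (A : Fin J → Fin I → ℝ) (C : Fin J → ℝ)
    (ν μ : Fin I → ℝ) (Λ : (Fin I → ℝ) → Fin I → ℝ)
    (n : ℝ → Fin I → ℝ) : Prop :=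
  (∀ i, AbsContNonneg fun t => n t i) ∧
  (∀ t ∈ Ici (0:ℝ), ∀ i, 0 ≤ n t i) ∧
  ∀ t ∈ Ici (0:ℝ),
    (∀ i, DifferentiableWithinAt ℝ (fun s => n s i) (Ici 0) t) →
    (∀ i, (0 < n t i →
        HasDerivWithinAt (fun s => n s i) (ν i - μ i * Λ (n t) i) (Ici 0) t) ∧
      (n t i = 0 → HasDerivWithinAt (fun s => n s i) 0 (Ici 0) t)) ∧
    ∀ j, (∑ i, A j i * (if 0 < n t i then Λ (n t) i else ν i / μ i)) ≤ C j

/-- The set `J*` of critically loaded resources. -/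
def Jstar {I J : ℕ} (A : Fin J → Fin I → ℝ) (C : Fin J → ℝ)
    (ν μ : Fin I → ℝ) : Set (Fin J) :=
  {j | ∑ i, A j i * (ν i / μ i) = C j}

/-- The workload map `w(n)`. -/
def wl {I J : ℕ} (A : Fin J → Fin I → ℝ) (μ : Fin I → ℝ)
    (n : Fin I → ℝ) : Fin J → ℝ :=
  fun j => ∑ i, A j i * n i / μ i

/-- Feasible set of the workload optimization problem (22) for workload `w`. -/
def WFeasible {I J : ℕ} (A : Fin J → Fin I → ℝ) (C : Fin J → ℝ)
    (ν μ : Fin I → ℝ) (w : Fin J → ℝ) : Set (Fin I → ℝ) :=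
  {m | (∀ i, 0 ≤ m i) ∧ ∀ j ∈ Jstar A C ν μ, w j ≤ ∑ i, A j i * m i / μ i}

/-- The Lyapunov function `F`. -/
def Ffun {I : ℕ} (α : ℝ) (κ ν μ : Fin I → ℝ) (n : Fin I → ℝ) : ℝ :=
  (1 / (α + 1)) * ∑ i, ν i * κ i * μ i ^ (α - 1) * (n i / ν i) ^ (α + 1)

/-- The function `K` (the derivative of `F` along fluid model solutions). -/
def Kfun {I : ℕ} (α : ℝ) (κ ν μ : Fin I → ℝ)
    (Λ : (Fin I → ℝ) → Fin I → ℝ) (n : Fin I → ℝ) : ℝ :=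
  ∑ i, if 0 < n i then κ i * (μ i * n i / ν i) ^ α * (ν i / μ i - Λ n i) else 0

set_option maxHeartbeats 1000000

theorem stmt0 {I J : ℕ} (hI : 0 < I) (hJ : 0 < J)
    (A : Fin J → Fin I → ℝ) (hA01 : ∀ j i, A j i = 0 ∨ A j i = 1)
    (hAcol : ∀ i, ∃ j, A j i = 1) (hArank : LinearIndependent ℝ A)
    (C : Fin J → ℝ) (hC : ∀ j, 0 < C j)
    (α : ℝ) (hα : 0 < α) (κ : Fin I → ℝ) (hκ : ∀ i, 0 < κ i)
    (n : Fin I → ℝ) (hn : ∀ i, 0 ≤ n i) (hne : n ≠ 0) :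
    ∃ L : Fin I → ℝ, IsAlloc A C α κ n L ∧
      (∀ i, 0 < n i → 0 < L i ∧ L i ≤ ⨆ j, C j) ∧
      ∀ L' : Fin I → ℝ, IsAlloc A C α κ n L' → L' = L := by
  classical
  haveI : Nonempty (Fin J) := Fin.pos_iff_nonempty.mp hJ
  -- basic setup
  have hmemS : ∀ i, i ∈ Finset.univ.filter (fun i => 0 < n i) ↔ 0 < n i := by
    intro i; simp
  set S : Finset (Fin I) := Finset.univ.filter (fun i => 0 < n i) with hS
  have hSne : S.Nonempty := by
    obtain ⟨i, hi⟩ := Function.ne_iff.mp hne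
    exact ⟨i, (hmemS i).mpr (lt_of_le_of_ne (hn i) (Ne.symm (by simpa using hi)))⟩
  set Csup := ⨆ j, C j with hCsupdef
  have hCle : ∀ j, C j ≤ Csup := fun j => le_ciSup (Set.Finite.bddAbove (Set.finite_range C)) j
  have hCsup : 0 < Csup := lt_of_lt_of_le (hC (Classical.arbitrary _)) (hCle _)
  have h0F : (0 : Fin I → ℝ) ∈ Feasible A C n := by
    refine ⟨fun i => le_refl 0, fun i _ => rfl, fun j => ?_⟩
    simp only [Pi.zero_apply, mul_zero, Finset.sum_const_zero]
    exact (hC j).le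
  have hbnd : ∀ L ∈ Feasible A C n, ∀ i, L i ≤ Csup := by
    rintro L ⟨hL1, hL2, hL3⟩ i
    obtain ⟨j, hj⟩ := hAcol i
    have h2 : A j i * L i ≤ ∑ i', A j i' * L i' := by
      refine Finset.single_le_sum (f := fun i' => A j i' * L i') (fun i' _ => ?_) (Finset.mem_univ i)
      rcases hA01 j i' with h | h
      · simp [h]
      · rw [h, one_mul]; exact hL1 i'
    rw [hj, one_mul] at h2
    linarith [hL3 j, hCle j]
  -- strictly positive feasible point e
  set cmin := Finset.univ.inf' Finset.univ_nonempty C with hcmindef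
  have hcmin : 0 < cmin := (Finset.lt_inf'_iff _).mpr (fun j _ => hC j)
  set ε₀ := cmin / I with hε₀def
  have hε₀ : 0 < ε₀ := div_pos hcmin (by exact_mod_cast hI)
  set e : Fin I → ℝ := fun i => if 0 < n i then ε₀ else 0 with he
  have hepos : ∀ i, 0 < n i → e i = ε₀ := fun i hi => if_pos hi
  have heF : e ∈ Feasible A C n := by
    refine ⟨fun i => ?_, fun i hi => ?_, fun j => ?_⟩
    · rw [he]; dsimp only; split
      · exact hε₀.le
      · exact le_refl 0
    · rw [he]; dsimp only; rw [if_neg (by simp [hi])]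
    · calc ∑ i, A j i * e i ≤ ∑ _i : Fin I, ε₀ := by
            refine Finset.sum_le_sum (fun i _ => ?_)
            rcases hA01 j i with h | h
            · rw [h, zero_mul]; exact hε₀.le
            · rw [h, one_mul, he]; dsimp only; split
              · exact le_refl _
              · exact hε₀.le
        _ = I * ε₀ := by simp [Finset.sum_const, Finset.card_univ]
        _ = cmin := by
            rw [hε₀def]; field_simp
        _ ≤ C j := Finset.inf'_le _ (Finset.mem_univ j)
  -- compactness of the feasible set
  have hFsub : Feasible A C n ⊆ Set.Icc 0 (fun _ => Csup) := by
    rintro L hL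
    exact ⟨fun i => hL.1 i, fun i => hbnd L hL i⟩
  have hFclosed : IsClosed (Feasible A C n) := by
    have : Feasible A C n =
        (⋂ i, {L : Fin I → ℝ | 0 ≤ L i}) ∩ ((⋂ i, {L : Fin I → ℝ | n i = 0 → L i = 0}) ∩
          ⋂ j, {L : Fin I → ℝ | ∑ i, A j i * L i ≤ C j}) := by
      ext L
      simp only [Feasible, Set.mem_setOf_eq, Set.mem_inter_iff, Set.mem_iInter]
    rw [this]
    refine IsClosed.inter (isClosed_iInter (fun i => isClosed_le continuous_const (continuous_apply i)))
      (IsClosed.inter (isClosed_iInter (fun i => ?_))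
        (isClosed_iInter (fun j => isClosed_le (continuous_finset_sum _
          (fun i _ => continuous_const.mul (continuous_apply i))) continuous_const)))
    by_cases hni : n i = 0
    · have : {L : Fin I → ℝ | n i = 0 → L i = 0} = {L : Fin I → ℝ | L i = 0} := by
        ext L; simp [hni]
      rw [this]
      exact isClosed_eq (continuous_apply i) continuous_const
    · have : {L : Fin I → ℝ | n i = 0 → L i = 0} = Set.univ := by
        ext L; simp [hni]
      rw [this]; exact isClosed_univ
  have hFcpt : IsCompact (Feasible A C n) := IsCompact.of_isClosed_subset isCompact_Icc hFclosed hFsub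
  -- Gfun on points with no vanishing coordinate in S
  have hGne : ∀ L : Fin I → ℝ, (∀ i, 0 < n i → L i ≠ 0) →
      Gfun α κ n L = if α = 1 then
        (((∑ i, if 0 < n i then κ i * n i * Real.log (L i) else 0 : ℝ)) : EReal)
      else ((∑ i, if 0 < n i then κ i * n i ^ α * L i ^ (1 - α) / (1 - α) else 0 : ℝ) : EReal) := by
    intro L hL
    unfold Gfun
    rw [if_neg]
    rintro ⟨-, i, hi, h0⟩
    exact hL i hi h0
  -- positivity of any maximizer on I₊(n)
  have hposall : ∀ L, IsAlloc A C α κ n L → ∀ i, 0 < n i → 0 < L i := by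
    rintro L ⟨hLF, hLmax⟩ i hi
    rcases (hLF.1 i).lt_or_eq with h | h
    · exact h
    exfalso
    by_cases h1 : 1 ≤ α
    · -- for α ≥ 1 the objective takes value ⊥ at L, but is > ⊥ at e
      have hGL : Gfun α κ n L = ⊥ := by
        unfold Gfun; rw [if_pos ⟨h1, i, hi, h.symm⟩]
      have hGe : Gfun α κ n e ≠ ⊥ := by
        rw [hGne e (fun i' hi' => by rw [hepos i' hi']; exact hε₀.ne')]
        split <;> exact EReal.coe_ne_bot _
      have := hLmax e heF
      rw [hGL] at this
      exact hGe (le_bot_iff.mp this)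
    · -- for α < 1 perturb towards e
      push_neg at h1
      have hne1 : α ≠ 1 := by linarith
      have hp : (0:ℝ) < 1 - α := by linarith
      set g : (Fin I → ℝ) → ℝ :=
        fun X => ∑ i', if 0 < n i' then κ i' * n i' ^ α * X i' ^ (1 - α) / (1 - α) else 0 with hg
      have hGcoe : ∀ X : Fin I → ℝ, Gfun α κ n X = ((g X : ℝ) : EReal) := by
        intro X; unfold Gfun
        rw [if_neg (by rintro ⟨ha, -⟩; linarith), if_neg hne1]
      have hd : ∀ i', 0 < n i' → 0 < κ i' * n i' ^ α :=
        fun i' hi' => mul_pos (hκ i') (Real.rpow_pos_of_pos hi' α)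
      set c : ℝ := κ i * n i ^ α * ε₀ ^ (1 - α) / (1 - α) with hc_def
      have hc : 0 < c := div_pos (mul_pos (hd i hi) (Real.rpow_pos_of_pos hε₀ _)) hp
      set M : ℝ := g e - g L - c with hM_def
      set t : ℝ := min (1/2) ((c / (2 * (|M| + 1))) ^ α⁻¹) with ht_def
      have hD : (0:ℝ) < 2 * (|M| + 1) := by positivity
      have ht0 : 0 < t := lt_min (by norm_num) (Real.rpow_pos_of_pos (div_pos hc hD) _)
      have ht1 : t ≤ 1 := le_trans (min_le_left _ _) (by norm_num)
      have htα : t ^ α * (2 * (|M| + 1)) ≤ c := by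
        have h5 : t ^ α ≤ ((c / (2 * (|M| + 1))) ^ α⁻¹) ^ α :=
          Real.rpow_le_rpow ht0.le (min_le_right _ _) hα.le
        rw [← Real.rpow_mul (div_pos hc hD).le, inv_mul_cancel₀ hα.ne', Real.rpow_one] at h5
        rw [← le_div_iff₀ hD]
        exact h5
      set Lt : Fin I → ℝ := fun i' => L i' + t * (e i' - L i') with hLt
      have hLtF : Lt ∈ Feasible A C n := by
        refine ⟨fun i' => ?_, fun i' hi' => ?_, fun j => ?_⟩
        · have := hLF.1 i'
          have he' : 0 ≤ e i' := heF.1 i'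
          rw [hLt]; dsimp only; nlinarith
        · rw [hLt]; dsimp only; rw [hLF.2.1 i' hi', heF.2.1 i' hi']; ring
        · have hsum : ∑ i', A j i' * Lt i' =
              (1 - t) * (∑ i', A j i' * L i') + t * (∑ i', A j i' * e i') := by
            rw [Finset.mul_sum, Finset.mul_sum, ← Finset.sum_add_distrib]
            refine Finset.sum_congr rfl (fun i' _ => ?_)
            rw [hLt]; dsimp only; ring
          rw [hsum]
          have h6 := hLF.2.2 j
          have h7 := heF.2.2 j
          nlinarith
      -- key concavity estimate on each coordinate other than i
      have hterm : ∀ i' ∈ Finset.univ.erase i,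
          (1 - t) * (if 0 < n i' then κ i' * n i' ^ α * L i' ^ (1 - α) / (1 - α) else 0)
            + t * (if 0 < n i' then κ i' * n i' ^ α * e i' ^ (1 - α) / (1 - α) else 0)
          ≤ (if 0 < n i' then κ i' * n i' ^ α * Lt i' ^ (1 - α) / (1 - α) else 0) := by
        intro i' _
        by_cases hni : 0 < n i'
        · simp only [if_pos hni]
          have hcc := (Real.concaveOn_rpow hp.le (by linarith : (1:ℝ) - α ≤ 1)).2
            (Set.mem_Ici.mpr (hLF.1 i')) (Set.mem_Ici.mpr (heF.1 i'))
            (by linarith : (0:ℝ) ≤ 1 - t) ht0.le (by ring)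
          simp only [smul_eq_mul] at hcc
          have hLt' : Lt i' = (1 - t) * L i' + t * e i' := by rw [hLt]; dsimp only; ring
          rw [hLt']
          have h8 := mul_le_mul_of_nonneg_left hcc (hd i' hni).le
          have h9 := mul_le_mul_of_nonneg_right h8 (inv_nonneg.mpr hp.le)
          rw [div_eq_mul_inv, div_eq_mul_inv, div_eq_mul_inv]
          nlinarith [h9]
        · simp only [if_neg hni]; norm_num
      have hLi0 : L i = 0 := h.symm
      have hki : (if 0 < n i then κ i * n i ^ α * L i ^ (1 - α) / (1 - α) else 0) = 0 := by
        rw [if_pos hi, hLi0, Real.zero_rpow (by linarith : (1:ℝ) - α ≠ 0)]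
        simp
      have hke : (if 0 < n i then κ i * n i ^ α * e i ^ (1 - α) / (1 - α) else 0) = c := by
        rw [if_pos hi, hepos i hi, hc_def]
      have hkLt : (if 0 < n i then κ i * n i ^ α * Lt i ^ (1 - α) / (1 - α) else 0)
          = t ^ (1 - α) * c := by
        have : Lt i = t * ε₀ := by rw [hLt]; dsimp only; rw [hLi0, hepos i hi]; ring
        rw [if_pos hi, this, Real.mul_rpow ht0.le hε₀.le, hc_def]
        ring
      have hsum1 : ∀ X : Fin I → ℝ,
          g X = (∑ i' ∈ Finset.univ.erase i,
            (if 0 < n i' then κ i' * n i' ^ α * X i' ^ (1 - α) / (1 - α) else 0))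
            + (if 0 < n i then κ i * n i ^ α * X i ^ (1 - α) / (1 - α) else 0) := by
        intro X
        rw [hg]; exact (Finset.sum_erase_add _ _ (Finset.mem_univ i)).symm
      have hglt : (1 - t) * g L + t * (g e - c) + t ^ (1 - α) * c ≤ g Lt := by
        have h10 := Finset.sum_le_sum hterm
        rw [Finset.sum_add_distrib, ← Finset.mul_sum, ← Finset.mul_sum] at h10
        rw [hsum1 L, hsum1 e, hsum1 Lt, hki, hke, hkLt]
        linarith [h10]
      have htp : 0 < t ^ ((1:ℝ) - α) := Real.rpow_pos_of_pos ht0 _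
      have ht_eq : t = t ^ ((1:ℝ) - α) * t ^ α := by
        rw [← Real.rpow_add ht0]
        norm_num
      have hlast : t * |M| < t ^ ((1:ℝ) - α) * c := by
        nlinarith [mul_le_mul_of_nonneg_left htα htp.le, ht_eq, abs_nonneg M, ht0,
          mul_pos ht0 (by positivity : (0:ℝ) < |M| + 1)]
      have hMge : -(t * |M|) ≤ t * M := by nlinarith [neg_abs_le M, ht0]
      have hfinal : g L < g Lt := by nlinarith [hglt, hlast, hMge]
      have := hLmax Lt hLtF
      rw [hGcoe Lt, hGcoe L] at this
      exact absurd (EReal.coe_le_coe_iff.mp this) (not_le.mpr hfinal)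
  -- existence of a maximizer
  have hSmem : ∀ i ∈ S, 0 < n i := fun i hi => (hmemS i).mp hi
  have hexists : ∃ L, IsAlloc A C α κ n L := by
    by_cases h1 : 1 ≤ α
    swap
    · -- α < 1 : the objective is continuous on the compact feasible set
      push_neg at h1
      have hne1 : α ≠ 1 := by linarith
      set g : (Fin I → ℝ) → ℝ :=
        fun X => ∑ i', if 0 < n i' then κ i' * n i' ^ α * X i' ^ (1 - α) / (1 - α) else 0 with hg
      have hGcoe : ∀ X : Fin I → ℝ, Gfun α κ n X = ((g X : ℝ) : EReal) := by
        intro X; unfold Gfun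
        rw [if_neg (by rintro ⟨ha, -⟩; linarith), if_neg hne1]
      have hgc : Continuous g := by
        refine continuous_finset_sum _ (fun i _ => ?_)
        by_cases hni : 0 < n i
        · simp only [if_pos hni]
          have hr : Continuous fun x : ℝ => x ^ (1 - α) :=
            continuous_iff_continuousAt.mpr
              (fun x => Real.continuousAt_rpow_const x _ (Or.inr (by linarith)))
          exact (continuous_const.mul (hr.comp (continuous_apply i))).div_const _
        · simp only [if_neg hni]; exact continuous_const
      obtain ⟨L, hLF, hLmax⟩ := hFcpt.exists_isMaxOn ⟨0, h0F⟩ hgc.continuousOn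
      refine ⟨L, hLF, fun L' hL'F => ?_⟩
      rw [hGcoe, hGcoe]
      exact EReal.coe_le_coe_iff.mpr (hLmax hL'F)
    · by_cases hne1 : α = 1
      · -- α = 1 : logarithmic objective
        set g : (Fin I → ℝ) → ℝ :=
          fun X => ∑ i', if 0 < n i' then κ i' * n i' * Real.log (X i') else 0 with hg
        have hGcoe : ∀ X : Fin I → ℝ, (∀ i, 0 < n i → X i ≠ 0) →
            Gfun α κ n X = ((g X : ℝ) : EReal) := by
          intro X hX; rw [hGne X hX, if_pos hne1]
        set cm := S.inf' hSne (fun i => κ i * n i) with hcm_def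
        have hcm : 0 < cm := (Finset.lt_inf'_iff _).mpr
          (fun i hi => mul_pos (hκ i) (hSmem i hi))
        have hcmle : ∀ i, 0 < n i → cm ≤ κ i * n i :=
          fun i hi => Finset.inf'_le _ ((hmemS i).mpr hi)
        set B : ℝ := ∑ i ∈ S, κ i * n i * |Real.log Csup| with hB_def
        set V : ℝ := g e with hV_def
        set ε : ℝ := min ε₀ (min (1/2) (Real.exp ((V - B - 1)/cm))) with hε_def
        have hε0 : 0 < ε := lt_min hε₀ (lt_min (by norm_num) (Real.exp_pos _))
        have hεhalf : ε ≤ 1/2 := le_trans (min_le_right _ _) (min_le_left _ _)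
        have hεe : ε ≤ ε₀ := min_le_left _ _
        have hεlog : Real.log ε ≤ (V - B - 1)/cm := by
          calc Real.log ε ≤ Real.log (Real.exp ((V - B - 1)/cm)) :=
                Real.log_le_log hε0 (le_trans (min_le_right _ _) (min_le_right _ _))
          _ = (V - B - 1)/cm := Real.log_exp _
        set Fε : Set (Fin I → ℝ) := Feasible A C n ∩ {X | ∀ i, 0 < n i → ε ≤ X i} with hFε_def
        have hFε2closed : IsClosed {X : Fin I → ℝ | ∀ i, 0 < n i → ε ≤ X i} := by
          have h2 : {X : Fin I → ℝ | ∀ i, 0 < n i → ε ≤ X i} =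
              ⋂ i, {X : Fin I → ℝ | 0 < n i → ε ≤ X i} := by
            ext X; simp [Set.mem_iInter]
          rw [h2]
          refine isClosed_iInter (fun i => ?_)
          by_cases hni : 0 < n i
          · have h3 : {X : Fin I → ℝ | 0 < n i → ε ≤ X i} = {X : Fin I → ℝ | ε ≤ X i} := by
              ext X; simp [hni]
            rw [h3]; exact isClosed_le continuous_const (continuous_apply i)
          · have h3 : {X : Fin I → ℝ | 0 < n i → ε ≤ X i} = Set.univ := by ext X; simp [hni]
            rw [h3]; exact isClosed_univ
        have hFεcpt : IsCompact Fε := hFcpt.inter_right hFε2closed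
        have heFε : e ∈ Fε := ⟨heF, fun i hi => by rw [hepos i hi]; exact hεe⟩
        have hgcont : ContinuousOn g Fε := by
          refine continuousOn_finset_sum _ (fun i _ => ?_)
          by_cases hni : 0 < n i
          · simp only [if_pos hni]
            intro X hX
            have hXi : (0:ℝ) < X i := lt_of_lt_of_le hε0 (hX.2 i hni)
            have hcA : ContinuousAt (fun p : Fin I → ℝ => p i) X := (continuous_apply i).continuousAt
            exact (continuousAt_const.mul (hcA.log hXi.ne')).continuousWithinAt
          · simp only [if_neg hni]; exact continuousOn_const
        obtain ⟨L, hLFε, hLmax⟩ := hFεcpt.exists_isMaxOn ⟨e, heFε⟩ hgcont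
        have hLpos : ∀ i, 0 < n i → 0 < L i := fun i hi => lt_of_lt_of_le hε0 (hLFε.2 i hi)
        have hVL : V ≤ g L := hLmax heFε
        refine ⟨L, hLFε.1, fun X hXF => ?_⟩
        by_cases hz : ∃ i, 0 < n i ∧ X i = 0
        · have hXbot : Gfun α κ n X = ⊥ := by unfold Gfun; rw [if_pos ⟨h1, hz⟩]
          rw [hXbot]; exact bot_le
        · push_neg at hz
          rw [hGcoe X hz, hGcoe L (fun i hi => (hLpos i hi).ne')]
          refine EReal.coe_le_coe_iff.mpr ?_
          by_cases hbig : ∀ i, 0 < n i → ε ≤ X i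
          · exact hLmax ⟨hXF, hbig⟩
          · push_neg at hbig
            obtain ⟨k, hk, hkε⟩ := hbig
            have hXk : 0 < X k := (hXF.1 k).lt_of_ne (Ne.symm (hz k hk))
            have hsplit : g X = (∑ i' ∈ Finset.univ.erase k,
                (if 0 < n i' then κ i' * n i' * Real.log (X i') else 0))
                + (if 0 < n k then κ k * n k * Real.log (X k) else 0) :=
              (Finset.sum_erase_add _ _ (Finset.mem_univ k)).symm
            have hrest : (∑ i' ∈ Finset.univ.erase k,
                (if 0 < n i' then κ i' * n i' * Real.log (X i') else 0)) ≤ B := by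
              calc ∑ i' ∈ Finset.univ.erase k,
                    (if 0 < n i' then κ i' * n i' * Real.log (X i') else 0)
                  ≤ ∑ i' ∈ Finset.univ.erase k,
                    (if 0 < n i' then κ i' * n i' * |Real.log Csup| else 0) := by
                    refine Finset.sum_le_sum (fun i' _ => ?_)
                    by_cases hni : 0 < n i'
                    · simp only [if_pos hni]
                      have hXi : 0 < X i' := (hXF.1 i').lt_of_ne (Ne.symm (hz i' hni))
                      have hlog : Real.log (X i') ≤ |Real.log Csup| :=
                        le_trans (Real.log_le_log hXi (hbnd X hXF i')) (le_abs_self _)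
                      exact mul_le_mul_of_nonneg_left hlog (mul_pos (hκ i') hni).le
                    · simp [hni]
                _ ≤ ∑ i', (if 0 < n i' then κ i' * n i' * |Real.log Csup| else 0) := by
                    refine Finset.sum_le_sum_of_subset_of_nonneg
                      (Finset.erase_subset _ _) (fun i' _ _ => ?_)
                    by_cases hni : 0 < n i'
                    · simp only [if_pos hni]
                      exact mul_nonneg (mul_pos (hκ i') hni).le (abs_nonneg _)
                    · simp [hni]
                _ = B := by rw [hB_def, hS, Finset.sum_filter]
            have hterm_k : (if 0 < n k then κ k * n k * Real.log (X k) else 0)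
                ≤ cm * Real.log (X k) := by
              rw [if_pos hk]
              have hlogneg : Real.log (X k) < 0 :=
                Real.log_neg hXk (lt_of_lt_of_le hkε (by linarith))
              exact mul_le_mul_of_nonpos_right (hcmle k hk) hlogneg.le
            have hsmall : cm * Real.log (X k) < V - B - 1 := by
              have h5 : Real.log (X k) < Real.log ε := Real.log_lt_log hXk hkε
              have h6 : cm * Real.log (X k) < cm * Real.log ε := mul_lt_mul_of_pos_left h5 hcm
              have h7 : cm * ((V - B - 1)/cm) = V - B - 1 := by field_simp
              nlinarith [mul_le_mul_of_nonneg_left hεlog hcm.le]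
            linarith [hsplit.le, hrest, hterm_k, hsmall, hVL]
      · -- α > 1
        have hα1 : 1 < α := lt_of_le_of_ne h1 (Ne.symm hne1)
        have hq : 1 - α < 0 := by linarith
        set g : (Fin I → ℝ) → ℝ :=
          fun X => ∑ i', if 0 < n i' then κ i' * n i' ^ α * X i' ^ (1 - α) / (1 - α) else 0 with hg
        have hGcoe : ∀ X : Fin I → ℝ, (∀ i, 0 < n i → X i ≠ 0) →
            Gfun α κ n X = ((g X : ℝ) : EReal) := by
          intro X hX; rw [hGne X hX, if_neg hne1]
        set cm := S.inf' hSne (fun i => κ i * n i ^ α) with hcm_def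
        have hcm : 0 < cm := (Finset.lt_inf'_iff _).mpr
          (fun i hi => mul_pos (hκ i) (Real.rpow_pos_of_pos (hSmem i hi) α))
        have hcmle : ∀ i, 0 < n i → cm ≤ κ i * n i ^ α :=
          fun i hi => Finset.inf'_le _ ((hmemS i).mpr hi)
        set V : ℝ := g e with hV_def
        set R : ℝ := (α - 1) * (|V| + 1) / cm with hR_def
        have hR : 0 < R := div_pos (mul_pos (by linarith) (by positivity)) hcm
        set ε : ℝ := min ε₀ ((1/R) ^ (α - 1)⁻¹) with hε_def
        have hε0 : 0 < ε := lt_min hε₀ (Real.rpow_pos_of_pos (by positivity) _)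
        have hεe : ε ≤ ε₀ := min_le_left _ _
        have hεR : ε ^ (α - 1) ≤ 1/R := by
          calc ε ^ (α - 1) ≤ ((1/R) ^ (α - 1)⁻¹) ^ (α - 1) :=
                Real.rpow_le_rpow hε0.le (min_le_right _ _) (by linarith)
          _ = 1/R := by
              rw [← Real.rpow_mul (by positivity : (0:ℝ) ≤ 1/R),
                inv_mul_cancel₀ (by linarith : α - 1 ≠ 0), Real.rpow_one]
        have hsmall : ∀ x : ℝ, 0 < x → x < ε → cm * x ^ (1 - α) / (1 - α) < V := by
          intro x hx hxε
          have h5 : ε ^ (1 - α) < x ^ (1 - α) := Real.rpow_lt_rpow_of_neg hx hxε hq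
          have hεpow : 0 < ε ^ (α - 1) := Real.rpow_pos_of_pos hε0 _
          have h7 : R ≤ 1/ε ^ (α - 1) := by
            have := one_div_le_one_div_of_le hεpow hεR
            rwa [one_div_one_div] at this
          have h6 : R ≤ ε ^ (1 - α) := by
            rwa [show (1:ℝ) - α = -(α - 1) by ring, Real.rpow_neg hε0.le, ← one_div]
          have h8 : cm * R < cm * x ^ (1 - α) :=
            mul_lt_mul_of_pos_left (lt_of_le_of_lt h6 h5) hcm
          have h9 : cm * R = (α - 1) * (|V| + 1) := by
            rw [hR_def]; field_simp
          have h10 : cm * x ^ (1 - α) / (1 - α) < (cm * R) / (1 - α) := by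
            rw [div_eq_mul_inv, div_eq_mul_inv]
            exact mul_lt_mul_of_neg_right h8 (inv_neg''.mpr hq)
          have h11 : (cm * R) / (1 - α) = -(|V| + 1) := by
            rw [h9, div_eq_iff (by linarith : (1:ℝ) - α ≠ 0)]; ring
          have h12 : -(|V| + 1) < V := by linarith [neg_abs_le V]
          linarith
        set Fε : Set (Fin I → ℝ) := Feasible A C n ∩ {X | ∀ i, 0 < n i → ε ≤ X i} with hFε_def
        have hFε2closed : IsClosed {X : Fin I → ℝ | ∀ i, 0 < n i → ε ≤ X i} := by
          have h2 : {X : Fin I → ℝ | ∀ i, 0 < n i → ε ≤ X i} =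
              ⋂ i, {X : Fin I → ℝ | 0 < n i → ε ≤ X i} := by
            ext X; simp [Set.mem_iInter]
          rw [h2]
          refine isClosed_iInter (fun i => ?_)
          by_cases hni : 0 < n i
          · have h3 : {X : Fin I → ℝ | 0 < n i → ε ≤ X i} = {X : Fin I → ℝ | ε ≤ X i} := by
              ext X; simp [hni]
            rw [h3]; exact isClosed_le continuous_const (continuous_apply i)
          · have h3 : {X : Fin I → ℝ | 0 < n i → ε ≤ X i} = Set.univ := by ext X; simp [hni]
            rw [h3]; exact isClosed_univ
        have hFεcpt : IsCompact Fε := hFcpt.inter_right hFε2closed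
        have heFε : e ∈ Fε := ⟨heF, fun i hi => by rw [hepos i hi]; exact hεe⟩
        have hgcont : ContinuousOn g Fε := by
          refine continuousOn_finset_sum _ (fun i _ => ?_)
          by_cases hni : 0 < n i
          · simp only [if_pos hni]
            intro X hX
            have hXi : (0:ℝ) < X i := lt_of_lt_of_le hε0 (hX.2 i hni)
            have hcA : ContinuousAt (fun p : Fin I → ℝ => p i) X := (continuous_apply i).continuousAt
            exact ((continuousAt_const.mul (hcA.rpow_const (Or.inl hXi.ne'))).div_const
              _).continuousWithinAt
          · simp only [if_neg hni]; exact continuousOn_const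
        obtain ⟨L, hLFε, hLmax⟩ := hFεcpt.exists_isMaxOn ⟨e, heFε⟩ hgcont
        have hLpos : ∀ i, 0 < n i → 0 < L i := fun i hi => lt_of_lt_of_le hε0 (hLFε.2 i hi)
        have hVL : V ≤ g L := hLmax heFε
        refine ⟨L, hLFε.1, fun X hXF => ?_⟩
        by_cases hz : ∃ i, 0 < n i ∧ X i = 0
        · have hXbot : Gfun α κ n X = ⊥ := by unfold Gfun; rw [if_pos ⟨h1, hz⟩]
          rw [hXbot]; exact bot_le
        · push_neg at hz
          rw [hGcoe X hz, hGcoe L (fun i hi => (hLpos i hi).ne')]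
          refine EReal.coe_le_coe_iff.mpr ?_
          by_cases hbig : ∀ i, 0 < n i → ε ≤ X i
          · exact hLmax ⟨hXF, hbig⟩
          · push_neg at hbig
            obtain ⟨k, hk, hkε⟩ := hbig
            have hXk : 0 < X k := (hXF.1 k).lt_of_ne (Ne.symm (hz k hk))
            have hsplit : g X = (∑ i' ∈ Finset.univ.erase k,
                (if 0 < n i' then κ i' * n i' ^ α * X i' ^ (1 - α) / (1 - α) else 0))
                + (if 0 < n k then κ k * n k ^ α * X k ^ (1 - α) / (1 - α) else 0) :=
              (Finset.sum_erase_add _ _ (Finset.mem_univ k)).symm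
            have hrest : (∑ i' ∈ Finset.univ.erase k,
                (if 0 < n i' then κ i' * n i' ^ α * X i' ^ (1 - α) / (1 - α) else 0)) ≤ 0 := by
              refine Finset.sum_nonpos (fun i' _ => ?_)
              by_cases hni : 0 < n i'
              · simp only [if_pos hni]
                refine div_nonpos_of_nonneg_of_nonpos ?_ (by linarith)
                exact mul_nonneg (mul_nonneg (hκ i').le (Real.rpow_nonneg (hn i') _))
                  (Real.rpow_nonneg (hXF.1 i') _)
              · simp [hni]
            have hterm_k : (if 0 < n k then κ k * n k ^ α * X k ^ (1 - α) / (1 - α) else 0)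
                ≤ cm * X k ^ (1 - α) / (1 - α) := by
              rw [if_pos hk, div_eq_mul_inv, div_eq_mul_inv]
              refine mul_le_mul_of_nonpos_right ?_ (inv_nonpos.mpr (by linarith))
              exact mul_le_mul_of_nonneg_right (hcmle k hk) (Real.rpow_nonneg hXk.le _)
            have := hsmall (X k) hXk hkε
            linarith [hsplit.le, hrest, hterm_k, hVL]
  -- uniqueness
  have huniq : ∀ L L', IsAlloc A C α κ n L → IsAlloc A C α κ n L' → L' = L := by
    have hφ : ∃ φ : Fin I → ℝ → ℝ,
        (∀ i, 0 < n i → StrictConcaveOn ℝ (Set.Ioi 0) (φ i)) ∧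
        (∀ X : Fin I → ℝ, (∀ i, 0 < n i → 0 < X i) →
          Gfun α κ n X = ((∑ i, if 0 < n i then φ i (X i) else 0 : ℝ) : EReal)) := by
      by_cases hne1 : α = 1
      · refine ⟨fun i x => κ i * n i * Real.log x, fun i hi => ?_, fun X hX => ?_⟩
        · exact myStrictConcaveOn.const_mul strictConcaveOn_log_Ioi (mul_pos (hκ i) hi)
        · rw [hGne X (fun i hi => (hX i hi).ne'), if_pos hne1]
      · refine ⟨fun i x => κ i * n i ^ α * x ^ (1 - α) / (1 - α), fun i hi => ?_,
          fun X hX => ?_⟩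
        · show StrictConcaveOn ℝ (Set.Ioi 0) fun x : ℝ => κ i * n i ^ α * x ^ (1 - α) / (1 - α)
          have hrw : (fun x : ℝ => κ i * n i ^ α * x ^ (1 - α) / (1 - α))
              = fun x : ℝ => (κ i * n i ^ α / (1 - α)) * x ^ (1 - α) := by
            funext x; ring
          rw [hrw]
          rcases lt_or_gt_of_ne hne1 with hlt | hgt
          · have hpos : 0 < κ i * n i ^ α / (1 - α) :=
              div_pos (mul_pos (hκ i) (Real.rpow_pos_of_pos hi α)) (by linarith)
            exact myStrictConcaveOn.const_mul
              ((Real.strictConcaveOn_rpow (by linarith) (by linarith)).subset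
                (fun x hx => le_of_lt hx) (convex_Ioi 0)) hpos
          · have hneg : κ i * n i ^ α / (1 - α) < 0 :=
              div_neg_of_pos_of_neg (mul_pos (hκ i) (Real.rpow_pos_of_pos hi α))
                (by linarith)
            exact myStrictConvexOn.neg_const_mul
              (myStrictConvexOn_rpow_neg (by linarith)) hneg
        · rw [hGne X (fun i hi => (hX i hi).ne'), if_neg hne1]
    obtain ⟨φ, hφconc, hGeq⟩ := hφ
    rintro L L' hL hL'
    by_contra hneq
    obtain ⟨k, hk⟩ := Function.ne_iff.mp hneq
    have hLpos := hposall L hL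
    have hL'pos := hposall L' hL'
    have hnk : 0 < n k := by
      rcases (hn k).lt_or_eq with h | h
      · exact h
      · exact absurd (by rw [hL.1.2.1 k h.symm, hL'.1.2.1 k h.symm]) hk
    set m : Fin I → ℝ := fun i => (L i + L' i)/2 with hm
    have hmF : m ∈ Feasible A C n := by
      refine ⟨fun i => ?_, fun i hi => ?_, fun j => ?_⟩
      · have h2 := hL.1.1 i; have h3 := hL'.1.1 i; rw [hm]; dsimp only; linarith
      · rw [hm]; dsimp only; rw [hL.1.2.1 i hi, hL'.1.2.1 i hi]; norm_num
      · have hsum : ∑ i, A j i * m i = ((∑ i, A j i * L i) + (∑ i, A j i * L' i))/2 := by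
          rw [← Finset.sum_add_distrib, Finset.sum_div]
          refine Finset.sum_congr rfl (fun i _ => ?_)
          rw [hm]; dsimp only; ring
        rw [hsum]
        have h2 := hL.1.2.2 j; have h3 := hL'.1.2.2 j
        linarith
    have hmpos : ∀ i, 0 < n i → 0 < m i := fun i hi => by
      rw [hm]; dsimp only; have h2 := hLpos i hi; have h3 := hL'pos i hi; linarith
    have hGekq := le_antisymm (hL.2 L' hL'.1) (hL'.2 L hL.1)
    rw [hGeq L hLpos, hGeq L' hL'pos] at hGekq
    have hval : (∑ i, if 0 < n i then φ i (L' i) else 0)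
        = (∑ i, if 0 < n i then φ i (L i) else 0) := EReal.coe_eq_coe_iff.mp hGekq
    have hmid : ∀ i, (if 0 < n i then φ i (L i) else 0)/2
        + (if 0 < n i then φ i (L' i) else 0)/2
        ≤ (if 0 < n i then φ i (m i) else 0) := by
      intro i
      by_cases hni : 0 < n i
      · simp only [if_pos hni]
        by_cases heq : L i = L' i
        · have hmi : m i = L i := by rw [hm]; dsimp only; rw [← heq]; ring
          rw [hmi, ← heq]; linarith
        · have hstrict := (hφconc i hni).2 (Set.mem_Ioi.mpr (hLpos i hni))
            (Set.mem_Ioi.mpr (hL'pos i hni)) heq (by norm_num : (0:ℝ) < 1/2)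
            (by norm_num : (0:ℝ) < 1/2) (by norm_num)
          simp only [smul_eq_mul] at hstrict
          have hmi : m i = (1/2) * L i + (1/2) * L' i := by rw [hm]; dsimp only; ring
          rw [hmi]; linarith
      · simp [hni]
    have hmidk : (if 0 < n k then φ k (L k) else 0)/2
        + (if 0 < n k then φ k (L' k) else 0)/2
        < (if 0 < n k then φ k (m k) else 0) := by
      simp only [if_pos hnk]
      have hstrict := (hφconc k hnk).2 (Set.mem_Ioi.mpr (hLpos k hnk))
        (Set.mem_Ioi.mpr (hL'pos k hnk)) (Ne.symm hk) (by norm_num : (0:ℝ) < 1/2)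
        (by norm_num : (0:ℝ) < 1/2) (by norm_num)
      simp only [smul_eq_mul] at hstrict
      have hmi : m k = (1/2) * L k + (1/2) * L' k := by rw [hm]; dsimp only; ring
      rw [hmi]; linarith
    have hsumlt := Finset.sum_lt_sum (f := fun i => (if 0 < n i then φ i (L i) else 0)/2
        + (if 0 < n i then φ i (L' i) else 0)/2)
      (g := fun i => if 0 < n i then φ i (m i) else 0)
      (fun i (_ : i ∈ Finset.univ) => hmid i) ⟨k, Finset.mem_univ k, hmidk⟩
    rw [Finset.sum_add_distrib, ← Finset.sum_div, ← Finset.sum_div, hval] at hsumlt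
    have hcmp := hL.2 m hmF
    rw [hGeq m hmpos, hGeq L hLpos] at hcmp
    have := EReal.coe_le_coe_iff.mp hcmp
    linarith
  obtain ⟨L, hL⟩ := hexists
  exact ⟨L, hL, fun i hi => ⟨hposall L hL i hi, hbnd L hL.1 i⟩,
    fun L' hL' => huniq L L' hL hL'⟩
end
end

section
/- For each route i, the i-th component Λ_i(·) of the bandwidth allocation is continuous on the set {n ∈ ℝ₊^I : n_i > 0}. -/
open Real Set

noncomputable section

namespace BW
open Filter Topology


/-- φ α x = log x  (α = 1)  or  x^(1-α)/(1-α). -/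
def phi (α x : ℝ) : ℝ := if α = 1 then Real.log x else x ^ (1-α) / (1-α)

variable {α : ℝ}

lemma phi_mono (hα : 0 < α) {x y : ℝ} (hx : 0 < x) (hxy : x ≤ y) : phi α x ≤ phi α y := by
  unfold phi
  split_ifs with h
  · exact Real.log_le_log hx hxy
  · rcases lt_or_gt_of_ne h with h1 | h1
    · have hp : (0:ℝ) < 1 - α := by linarith
      have := Real.rpow_le_rpow hx.le hxy hp.le
      exact div_le_div_of_nonneg_right this hp.le
    · have hp : (1:ℝ) - α ≤ 0 := by linarith
      have := Real.rpow_le_rpow_of_nonpos hx hxy hp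
      simp only [div_eq_mul_inv]
      exact mul_le_mul_of_nonpos_right this (by simp; linarith)

lemma phi_zero (h1 : α < 1) : phi α 0 = 0 := by
  unfold phi
  rw [if_neg h1.ne, Real.zero_rpow (by linarith : (1:ℝ)-α ≠ 0), zero_div]

lemma phi_contAt (hα : 0 < α) {x : ℝ} (hx : 0 < x ∨ α < 1) : ContinuousAt (phi α) x := by
  rcases eq_or_ne α 1 with h | h
  · have hx0 : 0 < x := by rcases hx with h' | h'; exact h'; exfalso; rw [h] at h'; exact lt_irrefl _ h'
    have : ContinuousAt Real.log x := Real.continuousAt_log hx0.ne'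
    refine this.congr ?_
    filter_upwards [] with y
    simp [phi, h]
  · have hc : ContinuousAt (fun y : ℝ => y ^ (1-α) / (1-α)) x := by
      refine ContinuousAt.div_const ?_ _
      refine Real.continuousAt_rpow_const x (1-α) ?_
      rcases hx with h' | h'
      · exact Or.inl h'.ne'
      · exact Or.inr (by linarith)
    refine hc.congr ?_
    filter_upwards [] with y
    simp [phi, h]

lemma phi_sc (hα : 1 < α) : StrictConcaveOn ℝ (Ioi (0:ℝ)) (phi α) := by
  have hne : α ≠ 1 := by linarith
  apply strictConcaveOn_of_deriv2_neg (convex_Ioi 0)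
  · intro x hx
    exact (phi_contAt (by linarith) (Or.inl hx)).continuousWithinAt
  · intro x hx
    rw [interior_Ioi] at hx
    have e1 : ∀ y ∈ Ioi (0:ℝ), deriv (phi α) y = y ^ (-α) := by
      intro y hy
      have : phi α = fun z : ℝ => z ^ (1-α) / (1-α) := by
        funext z; simp [phi, hne]
      rw [this, deriv_div_const, Real.deriv_rpow_const]
      rw [show (1:ℝ)-α-1 = -α by ring,
        mul_div_cancel_left₀ _ (by linarith : (1:ℝ)-α ≠ 0)]
    have e2 : deriv (phi α) =ᶠ[nhds x] fun y : ℝ => y ^ (-α) :=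
      (isOpen_Ioi.eventually_mem hx).mono fun y hy => e1 y hy
    have : deriv^[2] (phi α) x = deriv (fun y : ℝ => y ^ (-α)) x := by
      rw [Function.iterate_succ_apply', Function.iterate_one]
      exact e2.deriv_eq
    rw [this, Real.deriv_rpow_const]
    have : (0:ℝ) < x ^ (-α - 1) := Real.rpow_pos_of_pos hx _
    nlinarith

lemma phi_mid_strict (hα : 0 < α) {a b : ℝ} (ha : 0 ≤ a) (hb : 0 ≤ b) (hab : a ≠ b)
    (h1 : 1 ≤ α → 0 < a ∧ 0 < b) : (phi α a + phi α b)/2 < phi α ((a+b)/2) := by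
  rcases lt_trichotomy α 1 with h | h | h
  · -- α < 1 : strict concavity of rpow on Ici 0
    have hp0 : (0:ℝ) < 1 - α := by linarith
    have hp1 : (1:ℝ) - α < 1 := by linarith
    have sc := Real.strictConcaveOn_rpow hp0 hp1
    have key := sc.2 (mem_Ici.2 ha) (mem_Ici.2 hb) hab one_half_pos one_half_pos (by norm_num)
    simp only [smul_eq_mul] at key
    have harg : (1/2 : ℝ) * a + (1/2) * b = (a+b)/2 := by ring
    rw [harg] at key
    have hne : α ≠ 1 := by linarith
    simp only [phi, if_neg hne]
    have : (a ^ (1-α) / (1-α) + b ^ (1-α) / (1-α))/2 = ((1/2)*a^(1-α) + (1/2)*b^(1-α))/(1-α) := by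
      ring
    rw [this]
    gcongr
  · -- α = 1
    obtain ⟨ha', hb'⟩ := h1 (le_of_eq h.symm)
    have key := strictConcaveOn_log_Ioi.2 (mem_Ioi.2 ha') (mem_Ioi.2 hb') hab
      one_half_pos one_half_pos (by norm_num)
    simp only [smul_eq_mul] at key
    have harg : (1/2 : ℝ) * a + (1/2) * b = (a+b)/2 := by ring
    rw [harg] at key
    simp only [phi, if_pos h]
    linarith
  · -- α > 1
    obtain ⟨ha', hb'⟩ := h1 h.le
    have key := (phi_sc h).2 (mem_Ioi.2 ha') (mem_Ioi.2 hb') hab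
      one_half_pos one_half_pos (by norm_num)
    simp only [smul_eq_mul] at key
    have harg : (1/2 : ℝ) * a + (1/2) * b = (a+b)/2 := by ring
    rw [harg] at key
    linarith



lemma phi_small (h1 : 1 ≤ α) (β : ℝ) : ∃ r > (0:ℝ), phi α r ≤ β := by
  rcases eq_or_lt_of_le h1 with h | h
  · refine ⟨Real.exp β, Real.exp_pos β, ?_⟩
    simp [phi, ← h, Real.log_exp]
  · have hne : α ≠ 1 := by linarith
    have hp : (1:ℝ) - α ≠ 0 := by linarith
    set t : ℝ := max (β * (1-α)) 1 with ht
    have ht1 : (1:ℝ) ≤ t := le_max_right _ _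
    have ht0 : (0:ℝ) < t := by linarith
    refine ⟨t ^ ((1:ℝ)/(1-α)), Real.rpow_pos_of_pos ht0 _, ?_⟩
    have hr : (t ^ ((1:ℝ)/(1-α))) ^ (1-α) = t := by
      rw [← Real.rpow_mul ht0.le, one_div_mul_cancel hp, Real.rpow_one]
    simp only [phi, if_neg hne, hr]
    rw [div_le_iff_of_neg (by linarith : (1:ℝ) - α < 0)]
    exact le_max_left _ _


lemma phi_mid_le (hα : 0 < α) {a b : ℝ} (ha : 0 ≤ a) (hb : 0 ≤ b)
    (h1 : 1 ≤ α → 0 < a ∧ 0 < b) : (phi α a + phi α b)/2 ≤ phi α ((a+b)/2) := by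
  rcases eq_or_ne a b with h | h
  · subst h
    rw [add_self_div_two, add_self_div_two]
  · exact (phi_mid_strict hα ha hb h h1).le

/-- Real-valued version of the objective. -/
def Greal {I : ℕ} (α : ℝ) (κ n L : Fin I → ℝ) : ℝ :=
  ∑ k, if 0 < n k then κ k * n k ^ α * phi α (L k) else 0

lemma Gfun_eq {I : ℕ} (α : ℝ) (κ n L : Fin I → ℝ) :
    Gfun α κ n L = if 1 ≤ α ∧ ∃ i, 0 < n i ∧ L i = 0 then (⊥ : EReal)
      else ((Greal α κ n L : ℝ) : EReal) := by
  unfold Gfun Greal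
  rcases em (1 ≤ α ∧ ∃ i, 0 < n i ∧ L i = 0) with h | h
  · rw [if_pos h, if_pos h]
  · rw [if_neg h, if_neg h]
    rcases eq_or_ne α 1 with h1 | h1
    · rw [if_pos h1]
      norm_num
      refine Finset.sum_congr rfl fun k _ => ?_
      split_ifs with hk
      · simp [phi, h1, Real.rpow_one]
      · rfl
    · rw [if_neg h1]
      norm_num
      refine Finset.sum_congr rfl fun k _ => ?_
      split_ifs with hk
      · simp [phi, h1, mul_div_assoc]
      · rfl

section
variable {I J : ℕ} {A : Fin J → Fin I → ℝ} {C : Fin J → ℝ} {α : ℝ} {κ : Fin I → ℝ}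

lemma hA0 (hA01 : ∀ j i, A j i = 0 ∨ A j i = 1) : ∀ j i, 0 ≤ A j i := by
  intro j i; rcases hA01 j i with h | h <;> rw [h] <;> norm_num

lemma feas_le_D (hA01 : ∀ j i, A j i = 0 ∨ A j i = 1) (hAcol : ∀ i, ∃ j, A j i = 1)
    (hC : ∀ j, 0 < C j) {n L : Fin I → ℝ} (hL : L ∈ Feasible A C n) (k : Fin I) :
    L k ≤ ∑ j, C j := by
  obtain ⟨j, hj⟩ := hAcol k
  have h2 : A j k * L k ≤ ∑ i, A j i * L i :=
    Finset.single_le_sum (f := fun i => A j i * L i)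
      (fun i _ => mul_nonneg (hA0 hA01 j i) (hL.1 i)) (Finset.mem_univ k)
  have h3 : ∑ i, A j i * L i ≤ C j := hL.2.2 j
  have h4 : C j ≤ ∑ j', C j' :=
    Finset.single_le_sum (fun j' _ => (hC j').le) (Finset.mem_univ j)
  rw [hj, one_mul] at h2
  linarith

lemma feas_ite (hA01 : ∀ j i, A j i = 0 ∨ A j i = 1) {n g : Fin I → ℝ}
    (hg : ∀ k, 0 ≤ g k) (hgC : ∀ j, ∑ i, A j i * g i ≤ C j) :
    (fun k => if 0 < n k then g k else 0) ∈ Feasible A C n := by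
  refine ⟨fun k => ?_, fun k hk => ?_, fun j => ?_⟩
  · dsimp only; split_ifs; exacts [hg k, le_refl 0]
  · dsimp only; rw [if_neg (by rw [hk]; exact lt_irrefl 0)]
  · refine le_trans (Finset.sum_le_sum fun k _ => ?_) (hgC j)
    dsimp only; split_ifs
    · exact le_refl _
    · rw [mul_zero]; exact mul_nonneg (hA0 hA01 j k) (hg k)

lemma sum_row_const (hA01 : ∀ j i, A j i = 0 ∨ A j i = 1) {c : ℝ} (hc : 0 ≤ c) (j : Fin J) :
    ∑ i, A j i * c ≤ I * c := by
  calc ∑ i, A j i * c ≤ ∑ _i : Fin I, c := by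
        refine Finset.sum_le_sum fun k _ => ?_
        rcases hA01 j k with h | h <;> rw [h] <;> simp [hc]
    _ = I * c := by simp [Finset.sum_const, Finset.card_univ, nsmul_eq_mul]

lemma Greal_le_of_isAlloc {n L M : Fin I → ℝ} (h : IsAlloc A C α κ n L)
    (hM : M ∈ Feasible A C n)
    (hpos : 1 ≤ α → ∀ k, 0 < n k → 0 < M k ∧ 0 < L k) :
    Greal α κ n M ≤ Greal α κ n L := by
  have hle := h.2 M hM
  rw [Gfun_eq, Gfun_eq] at hle
  have hM' : ¬(1 ≤ α ∧ ∃ i, 0 < n i ∧ M i = 0) := by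
    rintro ⟨h1, i, hi, hMi⟩; exact (hpos h1 i hi).1.ne' hMi
  have hL' : ¬(1 ≤ α ∧ ∃ i, 0 < n i ∧ L i = 0) := by
    rintro ⟨h1, i, hi, hLi⟩; exact (hpos h1 i hi).2.ne' hLi
  rw [if_neg hM', if_neg hL'] at hle
  exact_mod_cast hle

lemma pos_of_isAlloc (hI : 0 < I) (hJ : 0 < J) (hA01 : ∀ j i, A j i = 0 ∨ A j i = 1)
    (hC : ∀ j, 0 < C j) {n L : Fin I → ℝ} (h : IsAlloc A C α κ n L) (h1 : 1 ≤ α) :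
    ∀ k, 0 < n k → 0 < L k := by
  haveI : Nonempty (Fin J) := Fin.pos_iff_nonempty.mp hJ
  set cm : ℝ := Finset.univ.inf' Finset.univ_nonempty C with hcm
  have hcm0 : 0 < cm := by
    rw [hcm, Finset.lt_inf'_iff]
    exact fun j _ => hC j
  set c : ℝ := cm / I with hc
  have hc0 : 0 < c := div_pos hcm0 (by exact_mod_cast hI)
  have hfu : (fun k => if 0 < n k then c else 0) ∈ Feasible A C n := by
    refine feas_ite hA01 (fun k => hc0.le) fun j => ?_
    refine le_trans (sum_row_const hA01 hc0.le j) ?_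
    rw [hc, mul_div_cancel₀ _ (by exact_mod_cast hI.ne' : (I:ℝ) ≠ 0)]
    exact Finset.inf'_le _ (Finset.mem_univ j)
  have hle := h.2 _ hfu
  rw [Gfun_eq, Gfun_eq] at hle
  rw [if_neg (by rintro ⟨_, i, hi, hzi⟩; rw [if_pos hi] at hzi; exact hc0.ne' hzi)] at hle
  intro k hk
  rcases lt_or_eq_of_le (h.1.1 k) with h' | h'
  · exact h'
  · exfalso
    rw [if_pos ⟨h1, k, hk, h'.symm⟩] at hle
    exact (EReal.bot_lt_coe _).not_ge hle


lemma isAlloc_unique_coord (hI : 0 < I) (hJ : 0 < J)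
    (hA01 : ∀ j i, A j i = 0 ∨ A j i = 1) (hC : ∀ j, 0 < C j)
    (hα : 0 < α) (hκ : ∀ i, 0 < κ i) {n L L' : Fin I → ℝ}
    (hL : IsAlloc A C α κ n L) (hL' : IsAlloc A C α κ n L')
    {i : Fin I} (hi : 0 < n i) : L i = L' i := by
  by_contra hne
  have hposL : 1 ≤ α → ∀ k, 0 < n k → 0 < L k := fun h1 => pos_of_isAlloc hI hJ hA01 hC hL h1
  have hposL' : 1 ≤ α → ∀ k, 0 < n k → 0 < L' k := fun h1 => pos_of_isAlloc hI hJ hA01 hC hL' h1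
  set N : Fin I → ℝ := fun k => (L k + L' k)/2 with hN
  have hNfeas : N ∈ Feasible A C n := by
    refine ⟨fun k => by rw [hN]; dsimp only; have := hL.1.1 k; have := hL'.1.1 k; linarith, fun k hk => ?_, fun j => ?_⟩
    · rw [hN]; dsimp only; rw [hL.1.2.1 k hk, hL'.1.2.1 k hk]; norm_num
    · have : ∑ k, A j k * N k = ((∑ k, A j k * L k) + ∑ k, A j k * L' k)/2 := by
        rw [← Finset.sum_add_distrib, Finset.sum_div]
        exact Finset.sum_congr rfl fun k _ => by rw [hN]; ring
      rw [this]
      have := hL.1.2.2 j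
      have := hL'.1.2.2 j
      linarith
  have hGLL' : Greal α κ n L' = Greal α κ n L := by
    have h1 := Greal_le_of_isAlloc hL hL'.1 fun h1 k hk => ⟨hposL' h1 k hk, hposL h1 k hk⟩
    have h2 := Greal_le_of_isAlloc hL' hL.1 fun h1 k hk => ⟨hposL h1 k hk, hposL' h1 k hk⟩
    linarith
  have hGN : Greal α κ n N ≤ Greal α κ n L :=
    Greal_le_of_isAlloc hL hNfeas fun h1 k hk => ⟨by
      have := hposL h1 k hk; have := hposL' h1 k hk; rw [hN]; dsimp only; linarith,
      hposL h1 k hk⟩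
  have hstrict : (Greal α κ n L + Greal α κ n L')/2 < Greal α κ n N := by
    unfold Greal
    rw [← Finset.sum_add_distrib, Finset.sum_div]
    refine Finset.sum_lt_sum (fun k _ => ?_) ⟨i, Finset.mem_univ i, ?_⟩
    · split_ifs with hk
      · have key := phi_mid_le hα (hL.1.1 k) (hL'.1.1 k)
          (fun h1 => ⟨hposL h1 k hk, hposL' h1 k hk⟩)
        have hcnn : 0 ≤ κ k * n k ^ α := by
          have := (hκ k).le; positivity
        have := mul_le_mul_of_nonneg_left key hcnn
        rw [hN]; dsimp only
        calc (κ k * n k ^ α * phi α (L k) + κ k * n k ^ α * phi α (L' k))/2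
            = κ k * n k ^ α * ((phi α (L k) + phi α (L' k))/2) := by ring
          _ ≤ κ k * n k ^ α * phi α ((L k + L' k)/2) := this
      · norm_num
    · rw [if_pos hi, if_pos hi, if_pos hi]
      have key := phi_mid_strict hα (hL.1.1 i) (hL'.1.1 i) hne
        (fun h1 => ⟨hposL h1 i hi, hposL' h1 i hi⟩)
      have hc : 0 < κ i * n i ^ α := mul_pos (hκ i) (Real.rpow_pos_of_pos hi α)
      have := mul_lt_mul_of_pos_left key hc
      rw [hN]; dsimp only
      calc (κ i * n i ^ α * phi α (L i) + κ i * n i ^ α * phi α (L' i))/2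
          = κ i * n i ^ α * ((phi α (L i) + phi α (L' i))/2) := by ring
        _ < κ i * n i ^ α * phi α ((L i + L' i)/2) := this
  rw [hGLL'] at hstrict
  simp only [add_self_div_two] at hstrict
  linarith




lemma exists_c (hI : 0 < I) (hJ : 0 < J) (hC : ∀ j, 0 < C j) :
    ∃ c : ℝ, 0 < c ∧ ∀ j, (I:ℝ) * c ≤ C j := by
  haveI : Nonempty (Fin J) := Fin.pos_iff_nonempty.mp hJ
  set cm : ℝ := Finset.univ.inf' Finset.univ_nonempty C with hcm
  have hcm0 : 0 < cm := by
    rw [hcm, Finset.lt_inf'_iff]; exact fun j _ => hC j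
  refine ⟨cm / I, div_pos hcm0 (by exact_mod_cast hI), fun j => ?_⟩
  rw [mul_div_cancel₀ _ (by exact_mod_cast hI.ne' : (I:ℝ) ≠ 0)]
  exact Finset.inf'_le _ (Finset.mem_univ j)

lemma Greal_itevec (n g : Fin I → ℝ) :
    Greal α κ n (fun k => if 0 < n k then g k else 0)
      = ∑ k, if 0 < n k then κ k * n k ^ α * phi α (g k) else 0 := by
  refine Finset.sum_congr rfl fun k _ => ?_
  dsimp only
  split_ifs with h <;> rfl

lemma limu1 (hα : 0 < α) (hκ : ∀ i, 0 < κ i) {v : ℕ → Fin I → ℝ} {n₀ : Fin I → ℝ}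
    (hv : ∀ m k, 0 ≤ v m k)
    (hvk : ∀ k, Tendsto (fun m => v m k) atTop (nhds (n₀ k))) (hn₀ : ∀ k, 0 ≤ n₀ k)
    (k : Fin I) (r : ℝ) :
    Tendsto (fun m => if 0 < v m k then κ k * (v m k) ^ α * r else 0) atTop
      (nhds (if 0 < n₀ k then κ k * (n₀ k) ^ α * r else 0)) := by
  have hcoef : Tendsto (fun m => κ k * (v m k) ^ α * r) atTop (nhds (κ k * (n₀ k) ^ α * r)) :=
    ((((Real.continuousAt_rpow_const (n₀ k) α (Or.inr hα.le)).tendsto).comp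
      (hvk k)).const_mul (κ k)).mul_const r
  rcases (hn₀ k).lt_or_eq with hp | hp
  · rw [if_pos hp]
    refine hcoef.congr' ?_
    filter_upwards [(hvk k).eventually (eventually_gt_nhds hp)] with m hm
    rw [if_pos hm]
  · rw [if_neg (by rw [← hp]; exact lt_irrefl _)]
    have hb : Tendsto (fun m => κ k * (v m k) ^ α * |r|) atTop (nhds 0) := by
      have : Tendsto (fun m => κ k * (v m k) ^ α * |r|) atTop
          (nhds (κ k * (n₀ k) ^ α * |r|)) :=
        ((((Real.continuousAt_rpow_const (n₀ k) α (Or.inr hα.le)).tendsto).comp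
          (hvk k)).const_mul (κ k)).mul_const _
      rwa [← hp, Real.zero_rpow hα.ne', mul_zero, zero_mul] at this
    refine squeeze_zero_norm (fun m => ?_) hb
    have h1 : 0 ≤ κ k * (v m k) ^ α :=
      mul_nonneg (hκ k).le (Real.rpow_nonneg (hv m k) α)
    split_ifs with h
    · rw [Real.norm_eq_abs, abs_mul, abs_of_nonneg h1]
    · simpa using mul_nonneg h1 (abs_nonneg r)

set_option maxHeartbeats 1000000 in
lemma seq_key (hI : 0 < I) (hJ : 0 < J)
    (hA01 : ∀ j i, A j i = 0 ∨ A j i = 1) (hAcol : ∀ i, ∃ j, A j i = 1)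
    (hC : ∀ j, 0 < C j) (hα : 0 < α) (hκ : ∀ i, 0 < κ i)
    {Λ : (Fin I → ℝ) → Fin I → ℝ}
    (hΛ : ∀ n : Fin I → ℝ, (∀ k, 0 ≤ n k) → IsAlloc A C α κ n (Λ n))
    {n₀ : Fin I → ℝ} (hn₀ : ∀ k, 0 ≤ n₀ k) {i : Fin I} (hi : 0 < n₀ i)
    {v : ℕ → Fin I → ℝ} (hv : ∀ m k, 0 ≤ v m k)
    (hvt : Tendsto v atTop (nhds n₀))
    {L : Fin I → ℝ} (hWt : Tendsto (fun m => Λ (v m)) atTop (nhds L)) :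
    L i = Λ n₀ i := by
  classical
  obtain ⟨c, hc0, hcC⟩ := exists_c (I := I) hI hJ hC
  set D : ℝ := ∑ j, C j with hD
  set W : ℕ → Fin I → ℝ := fun m => Λ (v m) with hWdef
  have hvk : ∀ k, Tendsto (fun m => v m k) atTop (nhds (n₀ k)) :=
    fun k => (tendsto_pi_nhds.mp hvt) k
  have hWk : ∀ k, Tendsto (fun m => W m k) atTop (nhds (L k)) :=
    fun k => (tendsto_pi_nhds.mp hWt) k
  have hWf : ∀ m, W m ∈ Feasible A C (v m) := fun m => (hΛ (v m) (hv m)).1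
  have hW0 : ∀ m k, 0 ≤ W m k := fun m k => (hWf m).1 k
  have hWD : ∀ m k, W m k ≤ D := fun m k => feas_le_D hA01 hAcol hC (hWf m) k
  have hL0 : ∀ k, 0 ≤ L k := fun k =>
    ge_of_tendsto (hWk k) (Eventually.of_forall fun m => hW0 m k)
  have hLD : ∀ k, L k ≤ D := fun k =>
    le_of_tendsto (hWk k) (Eventually.of_forall fun m => hWD m k)
  -- feasibility of the constant-c vector for any nonneg state, and of mixtures
  have hrowc : ∀ j, ∑ k, A j k * c ≤ C j := fun j =>
    le_trans (sum_row_const hA01 hc0.le j) (hcC j)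
  -- Step 1 : positivity of the limit on positive coordinates when α ≥ 1
  have hLpos : 1 ≤ α → ∀ k, 0 < n₀ k → 0 < L k := by
    intro h1 k₀ hk₀
    by_contra hcon
    have hLk₀ : L k₀ = 0 := le_antisymm (le_of_not_gt hcon) (hL0 k₀)
    -- competitor: constant c
    have hcomp : ∀ m,
        (∑ k, if 0 < v m k then κ k * (v m k) ^ α * phi α c else 0)
          ≤ Greal α κ (v m) (W m) := by
      intro m
      rw [← Greal_itevec (v m) (fun _ => c)]
      refine Greal_le_of_isAlloc (hΛ (v m) (hv m))
        (feas_ite hA01 (fun _ => hc0.le) hrowc) ?_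
      intro h1' k hk
      exact ⟨by rw [if_pos hk]; exact hc0,
        pos_of_isAlloc hI hJ hA01 hC (hΛ (v m) (hv m)) h1' k hk⟩
    -- limits
    set X : ℝ := ∑ k, if 0 < n₀ k then κ k * (n₀ k) ^ α * phi α c else 0 with hX
    have hXlim : Tendsto (fun m => ∑ k, if 0 < v m k then κ k * (v m k) ^ α * phi α c else 0)
        atTop (nhds X) := tendsto_finset_sum _ fun k _ => limu1 hα hκ hv hvk hn₀ k _
    set B : ℕ → ℝ := fun m => ∑ k ∈ Finset.univ.erase k₀,
      if 0 < v m k then κ k * (v m k) ^ α * max 0 (phi α D) else 0 with hB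
    set Binf : ℝ := ∑ k ∈ Finset.univ.erase k₀,
      if 0 < n₀ k then κ k * (n₀ k) ^ α * max 0 (phi α D) else 0 with hBinf
    have hBlim : Tendsto B atTop (nhds Binf) :=
      tendsto_finset_sum _ fun k _ => limu1 hα hκ hv hvk hn₀ k _
    -- bound U by t_{k₀} + B
    have hUb : ∀ m, Greal α κ (v m) (W m) ≤
        (if 0 < v m k₀ then κ k₀ * (v m k₀) ^ α * phi α (W m k₀) else 0) + B m := by
      intro m
      have hsplit : Greal α κ (v m) (W m) =
          (if 0 < v m k₀ then κ k₀ * (v m k₀) ^ α * phi α (W m k₀) else 0)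
            + ∑ k ∈ Finset.univ.erase k₀,
              (if 0 < v m k then κ k * (v m k) ^ α * phi α (W m k) else 0) := by
        rw [Greal, ← Finset.add_sum_erase _ _ (Finset.mem_univ k₀)]
      rw [hsplit]
      refine add_le_add_right (Finset.sum_le_sum fun k _ => ?_) _
      split_ifs with hk
      · refine mul_le_mul_of_nonneg_left ?_
          (mul_nonneg (hκ k).le (Real.rpow_nonneg (hv m k) α))
        have hWpos : 0 < W m k := pos_of_isAlloc hI hJ hA01 hC (hΛ (v m) (hv m)) h1 k hk
        exact le_trans (phi_mono hα hWpos (hWD m k)) (le_max_right _ _)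
      · exact le_refl 0
    -- eventual inequalities
    have hE1 : ∀ᶠ m in atTop,
        X - 1 < ∑ k, if 0 < v m k then κ k * (v m k) ^ α * phi α c else 0 :=
      hXlim.eventually (eventually_gt_nhds (by linarith))
    have hE2 : ∀ᶠ m in atTop, B m < Binf + 1 :=
      hBlim.eventually (eventually_lt_nhds (by linarith))
    set β : ℝ := X - 1 - (Binf + 1) with hβ
    set δ : ℝ := κ k₀ * (n₀ k₀) ^ α / 2 with hδ
    have hδ0 : 0 < δ := by
      have := mul_pos (hκ k₀) (Real.rpow_pos_of_pos hk₀ α); rw [hδ]; linarith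
    have hE3 : ∀ᶠ m in atTop, δ < κ k₀ * (v m k₀) ^ α := by
      have hco : Tendsto (fun m => κ k₀ * (v m k₀) ^ α) atTop
          (nhds (κ k₀ * (n₀ k₀) ^ α)) :=
        (((Real.continuousAt_rpow_const (n₀ k₀) α (Or.inr hα.le)).tendsto).comp
          (hvk k₀)).const_mul (κ k₀)
      refine hco.eventually (eventually_gt_nhds ?_)
      have := mul_pos (hκ k₀) (Real.rpow_pos_of_pos hk₀ α); rw [hδ]; linarith
    obtain ⟨r, hr0, hrφ⟩ := phi_small h1 (min 0 (β / δ))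
    have hE4 : ∀ᶠ m in atTop, W m k₀ < r := by
      refine (hWk k₀).eventually (eventually_lt_nhds ?_)
      rw [hLk₀]; exact hr0
    have hE5 : ∀ᶠ m in atTop, 0 < v m k₀ :=
      (hvk k₀).eventually (eventually_gt_nhds hk₀)
    obtain ⟨m, h1m, h2m, h3m, h4m, h5m⟩ := (hE1.and (hE2.and (hE3.and (hE4.and hE5)))).exists
    -- contradiction at m
    have hWm : 0 < W m k₀ := pos_of_isAlloc hI hJ hA01 hC (hΛ (v m) (hv m)) h1 k₀ h5m
    have ht : (if 0 < v m k₀ then κ k₀ * (v m k₀) ^ α * phi α (W m k₀) else 0) ≤ δ * phi α r := by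
      rw [if_pos h5m]
      have h6 : phi α (W m k₀) ≤ phi α r := phi_mono hα hWm h4m.le
      have h7 : phi α r ≤ 0 := le_trans hrφ (min_le_left _ _)
      calc κ k₀ * (v m k₀) ^ α * phi α (W m k₀)
          ≤ κ k₀ * (v m k₀) ^ α * phi α r :=
            mul_le_mul_of_nonneg_left h6
              (mul_nonneg (hκ k₀).le (Real.rpow_nonneg (hv m k₀) α))
        _ ≤ δ * phi α r := mul_le_mul_of_nonpos_right h3m.le h7
    have h8 : δ * phi α r ≤ β := by
      have h9 : phi α r ≤ β / δ := le_trans hrφ (min_le_right _ _)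
      calc δ * phi α r ≤ δ * (β / δ) := mul_le_mul_of_nonneg_left h9 hδ0.le
        _ = β := by field_simp
    have h10 := hcomp m
    have h11 := hUb m
    rw [hβ] at h8
    linarith
  -- the zeroed-out limit L'
  set L' : Fin I → ℝ := fun k => if 0 < n₀ k then L k else 0 with hL'
  -- L' is feasible for n₀
  have hL'f : L' ∈ Feasible A C n₀ := by
    refine ⟨fun k => ?_, fun k hk => ?_, fun j => ?_⟩
    · rw [hL']; dsimp only; split_ifs; exacts [hL0 k, le_refl 0]
    · rw [hL']; dsimp only; rw [if_neg (by rw [hk]; exact lt_irrefl 0)]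
    · have hlim : Tendsto (fun m => ∑ k, A j k * W m k) atTop (nhds (∑ k, A j k * L k)) :=
        tendsto_finset_sum _ fun k _ => (hWk k).const_mul (A j k)
      have h12 : ∑ k, A j k * L k ≤ C j :=
        le_of_tendsto hlim (Eventually.of_forall fun m => (hWf m).2.2 j)
      refine le_trans (Finset.sum_le_sum fun k _ => ?_) h12
      refine mul_le_mul_of_nonneg_left ?_ (hA0 hA01 j k)
      rw [hL']; dsimp only; split_ifs; exacts [le_refl _, hL0 k]
  -- V and its limit
  set V : ℕ → ℝ := fun m => ∑ k,
    if 0 < n₀ k then (if 0 < v m k then κ k * (v m k) ^ α * phi α (W m k) else 0)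
    else (if 0 < v m k then κ k * (v m k) ^ α * max 0 (phi α D) else 0) with hV
  have hUV : ∀ m, Greal α κ (v m) (W m) ≤ V m := by
    intro m
    refine Finset.sum_le_sum fun k _ => ?_
    by_cases hk : 0 < n₀ k
    · rw [if_pos hk]
    · rw [if_neg hk]
      split_ifs with hvm
      · refine mul_le_mul_of_nonneg_left ?_
          (mul_nonneg (hκ k).le (Real.rpow_nonneg (hv m k) α))
        rcases lt_or_ge α 1 with ha | ha
        · rcases (hW0 m k).lt_or_eq with hw | hw
          · exact le_trans (phi_mono hα hw (hWD m k)) (le_max_right _ _)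
          · rw [← hw, phi_zero ha]; exact le_max_left _ _
        · have hWpos : 0 < W m k := pos_of_isAlloc hI hJ hA01 hC (hΛ (v m) (hv m)) ha k hvm
          exact le_trans (phi_mono hα hWpos (hWD m k)) (le_max_right _ _)
      · exact le_refl 0
  set Y : ℝ := ∑ k, if 0 < n₀ k then κ k * (n₀ k) ^ α * phi α (L k) else 0 with hY
  have hYL' : Greal α κ n₀ L' = Y := by
    refine Finset.sum_congr rfl fun k _ => ?_
    split_ifs with hk
    · rw [hL']; dsimp only; rw [if_pos hk]
    · rfl
  have hVlim : Tendsto V atTop (nhds Y) := by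
    refine tendsto_finset_sum _ fun k _ => ?_
    by_cases hk : 0 < n₀ k
    · simp only [if_pos hk]
      have hφ : Tendsto (fun m => phi α (W m k)) atTop (nhds (phi α (L k))) := by
        refine ((phi_contAt hα ?_).tendsto).comp (hWk k)
        rcases lt_or_ge α 1 with ha | ha
        · exact Or.inr ha
        · exact Or.inl (hLpos ha k hk)
      have hco : Tendsto (fun m => κ k * (v m k) ^ α) atTop (nhds (κ k * (n₀ k) ^ α)) :=
        (((Real.continuousAt_rpow_const (n₀ k) α (Or.inr hα.le)).tendsto).comp
          (hvk k)).const_mul (κ k)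
      refine (hco.mul hφ).congr' ?_
      filter_upwards [(hvk k).eventually (eventually_gt_nhds hk)] with m hm
      rw [if_pos hm]
    · simp only [if_neg hk]
      have := limu1 (n₀ := n₀) hα hκ hv hvk hn₀ k (max 0 (phi α D))
      rwa [if_neg hk] at this
  -- Step 2 : L' is an optimal allocation for n₀
  have hIsL' : IsAlloc A C α κ n₀ L' := by
    refine ⟨hL'f, fun M hM => ?_⟩
    rw [Gfun_eq, Gfun_eq]
    by_cases hMbad : 1 ≤ α ∧ ∃ k, 0 < n₀ k ∧ M k = 0
    · rw [if_pos hMbad]; exact bot_le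
    · rw [if_neg hMbad]
      rw [if_neg (by
        rintro ⟨h1, k, hk, hzk⟩
        rw [hL'] at hzk; dsimp only at hzk; rw [if_pos hk] at hzk
        exact (hLpos h1 k hk).ne' hzk)]
      rw [EReal.coe_le_coe_iff, hYL']
      -- it remains: Greal α κ n₀ M ≤ Y
      have hMpos : 1 ≤ α → ∀ k, 0 < n₀ k → 0 < M k := by
        intro h1 k hk
        rcases (hM.1 k).lt_or_eq with h | h
        · exact h
        · exact absurd ⟨h1, k, hk, h.symm⟩ hMbad
      -- for each ε ∈ (0,1], the mixed competitor
      have hXle : ∀ ε ∈ Ioc (0:ℝ) 1,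
          (∑ k, if 0 < n₀ k then κ k * (n₀ k) ^ α * phi α ((1-ε) * M k + ε * c) else 0) ≤ Y := by
        intro ε hε
        set g : Fin I → ℝ := fun k => (1-ε) * M k + ε * c with hg
        have hg0 : ∀ k, 0 < g k := fun k => by
          rw [hg]; dsimp only
          have h13 := hM.1 k
          have h14 : 0 < ε * c := mul_pos hε.1 hc0
          nlinarith [hε.2]
        have hgC : ∀ j, ∑ k, A j k * g k ≤ C j := by
          intro j
          have h15 : ∑ k, A j k * g k
              = (1-ε) * (∑ k, A j k * M k) + ε * (∑ k, A j k * c) := by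
            rw [Finset.mul_sum, Finset.mul_sum, ← Finset.sum_add_distrib]
            refine Finset.sum_congr rfl fun k _ => by rw [hg]; ring
          rw [h15]
          have h16 := hM.2.2 j
          have h17 := hrowc j
          nlinarith [hε.1, hε.2, hC j]
        have hcomp2 : ∀ m,
            (∑ k, if 0 < v m k then κ k * (v m k) ^ α * phi α (g k) else 0)
              ≤ Greal α κ (v m) (W m) := by
          intro m
          rw [← Greal_itevec (v m) g]
          refine Greal_le_of_isAlloc (hΛ (v m) (hv m)) (feas_ite hA01 (fun k => (hg0 k).le) hgC) ?_
          intro h1' k hk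
          exact ⟨by rw [if_pos hk]; exact hg0 k,
            pos_of_isAlloc hI hJ hA01 hC (hΛ (v m) (hv m)) h1' k hk⟩
        have hXεlim : Tendsto (fun m => ∑ k, if 0 < v m k then κ k * (v m k) ^ α * phi α (g k) else 0)
            atTop (nhds (∑ k, if 0 < n₀ k then κ k * (n₀ k) ^ α * phi α (g k) else 0)) :=
          tendsto_finset_sum _ fun k _ => limu1 hα hκ hv hvk hn₀ k _
        exact le_of_tendsto_of_tendsto' hXεlim hVlim fun m => le_trans (hcomp2 m) (hUV m)
      -- let ε → 0⁺
      have hεlim : Tendsto (fun ε : ℝ =>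
          ∑ k, if 0 < n₀ k then κ k * (n₀ k) ^ α * phi α ((1-ε) * M k + ε * c) else 0)
          (nhdsWithin 0 (Ioi 0)) (nhds (Greal α κ n₀ M)) := by
        rw [Greal]
        refine tendsto_finset_sum _ fun k _ => ?_
        by_cases hk : 0 < n₀ k
        · simp only [if_pos hk]
          have hcnt : Continuous fun ε : ℝ => (1-ε) * M k + ε * c :=
            ((continuous_const.sub continuous_id).mul continuous_const).add
              (continuous_id.mul continuous_const)
          have haff : Tendsto (fun ε : ℝ => (1-ε) * M k + ε * c)
              (nhdsWithin 0 (Ioi 0)) (nhds (M k)) := by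
            have h21 := (hcnt.tendsto 0).mono_left (nhdsWithin_le_nhds (s := Ioi (0:ℝ)))
            have h22 : (1-(0:ℝ)) * M k + 0 * c = M k := by ring
            rwa [h22] at h21
          have hφM : ContinuousAt (phi α) (M k) := by
            refine phi_contAt hα ?_
            rcases lt_or_ge α 1 with ha | ha
            · exact Or.inr ha
            · exact Or.inl (hMpos ha k hk)
          exact (hφM.tendsto.comp haff).const_mul (κ k * (n₀ k) ^ α)
        · simp only [if_neg hk]
          exact tendsto_const_nhds
      refine le_of_tendsto hεlim ?_
      filter_upwards [Ioc_mem_nhdsGT_of_mem (Set.mem_Ico.mpr ⟨le_refl (0:ℝ), zero_lt_one⟩)]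
        with ε hε
      exact hXle ε hε
  have h20 : L' i = Λ n₀ i :=
    isAlloc_unique_coord hI hJ hA01 hC hα hκ hIsL' (hΛ n₀ hn₀) hi
  rw [← h20, hL']; dsimp only; rw [if_pos hi]

end
end BW

open Filter Topology in
theorem stmt2 {I J : ℕ} (hI : 0 < I) (hJ : 0 < J)
    (A : Fin J → Fin I → ℝ) (hA01 : ∀ j i, A j i = 0 ∨ A j i = 1)
    (hAcol : ∀ i, ∃ j, A j i = 1) (hArank : LinearIndependent ℝ A)
    (C : Fin J → ℝ) (hC : ∀ j, 0 < C j)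
    (α : ℝ) (hα : 0 < α) (κ : Fin I → ℝ) (hκ : ∀ i, 0 < κ i)
    (Λ : (Fin I → ℝ) → Fin I → ℝ)
    (hΛ : ∀ n : Fin I → ℝ, (∀ i, 0 ≤ n i) → IsAlloc A C α κ n (Λ n))
    (i : Fin I) :
    ContinuousOn (fun n => Λ n i) {n : Fin I → ℝ | (∀ k, 0 ≤ n k) ∧ 0 < n i} := by
  classical
  intro n₀ hn₀mem
  obtain ⟨hn₀, hi⟩ := hn₀mem
  show Tendsto (fun n => Λ n i) _ _
  rw [tendsto_iff_seq_tendsto]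
  intro u hu
  have huS : ∀ᶠ m in atTop, u m ∈ {n : Fin I → ℝ | (∀ k, 0 ≤ n k) ∧ 0 < n i} :=
    hu.eventually eventually_mem_nhdsWithin
  set v : ℕ → Fin I → ℝ :=
    fun m => if (∀ k, 0 ≤ u m k) ∧ 0 < u m i then u m else n₀ with hvdef
  have hvS : ∀ m, (∀ k, 0 ≤ v m k) ∧ 0 < v m i := by
    intro m
    rw [hvdef]; dsimp only; split_ifs with h
    exacts [h, ⟨hn₀, hi⟩]
  have hveq : v =ᶠ[atTop] u := by
    filter_upwards [huS] with m hm
    rw [hvdef]; dsimp only; rw [if_pos hm]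
  have hvt : Tendsto v atTop (nhds n₀) :=
    (hu.mono_right nhdsWithin_le_nhds).congr' hveq.symm
  suffices hsuf : Tendsto (fun m => Λ (v m) i) atTop (nhds (Λ n₀ i)) by
    refine hsuf.congr' ?_
    filter_upwards [hveq] with m hm
    show Λ (v m) i = ((fun n => Λ n i) ∘ u) m
    rw [Function.comp_apply, hm]
  apply tendsto_of_subseq_tendsto
  intro ns hns
  have hbox : IsCompact (Set.pi (Set.univ : Set (Fin I)) fun _ => Icc (0:ℝ) (∑ j, C j)) :=
    isCompact_univ_pi fun _ => isCompact_Icc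
  have hmem : ∀ p, Λ (v (ns p)) ∈ Set.pi Set.univ fun _ : Fin I => Icc (0:ℝ) (∑ j, C j) := by
    intro p
    rw [Set.mem_univ_pi]
    intro k
    have hf := (hΛ (v (ns p)) (hvS (ns p)).1).1
    exact ⟨hf.1 k, BW.feas_le_D hA01 hAcol hC hf k⟩
  obtain ⟨L, hLbox, ms, hms, hconv⟩ := hbox.tendsto_subseq hmem
  have hv't : Tendsto (fun p => v (ns (ms p))) atTop (nhds n₀) :=
    hvt.comp (hns.comp hms.tendsto_atTop)
  have hkey : L i = Λ n₀ i :=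
    BW.seq_key hI hJ hA01 hAcol hC hα hκ hΛ hn₀ hi (fun p k => (hvS _).1 k) hv't hconv
  refine ⟨ms, ?_⟩
  have := (tendsto_pi_nhds.mp hconv) i
  rwa [hkey] at this
end
end

section
/- Fix n ∈ ℝ₊^I with n ≠ 0. A vector Λ⁺ = (Λ_i : i ∈ I₊(n)) is the unique optimal solution of the maximization of G_n over the feasible set for n if and only if there exists p ∈ ℝ₊^J such that: (i) p_j (C_j − Σ_{i∈I₊(n)} A_{ji} Λ_i) = 0 for all j; (ii) Σ_j p_j A_{ji} > 0 for all i ∈ I₊(n); (iii) Λ_i = n_i (κ_i / Σ_j p_j A_{ji})^{1/α} for all i ∈ I₊(n); and (iv) Σ_{i∈I₊(n)} A_{ji} Λ_i ≤ C_j for all j. -/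
open Real Set

noncomputable section

open scoped InnerProductSpace in
lemma farkas {N : ℕ} {ι : Type} [Fintype ι] (v : ι → Fin N → ℝ)
    (hv : ∀ k, 1 ≤ ∑ i, v k i) (g : Fin N → ℝ)
    (h : ¬ ∃ y : ι → ℝ, (∀ k, 0 ≤ y k) ∧ ∀ i, g i = ∑ k, y k * v k i) :
    ∃ d : Fin N → ℝ, (∀ k, ∑ i, v k i * d i ≤ 0) ∧ 0 < ∑ i, g i * d i := by
  classical
  set E := EuclideanSpace ℝ (Fin N)
  let e : E ≃L[ℝ] (Fin N → ℝ) := EuclideanSpace.equiv (Fin N) ℝ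
  let V : ι → E := fun k => e.symm (v k)
  let G : E := e.symm g
  have heV : ∀ k, e (V k) = v k := fun k => e.apply_symm_apply _
  have heG : e G = g := e.apply_symm_apply _
  -- coordinates of a conic combination
  have hcoord : ∀ (y : ι → ℝ) (i : Fin N), e (∑ k, y k • V k) i = ∑ k, y k * v k i := by
    intro y i
    rw [map_sum]
    rw [Finset.sum_apply]
    refine Finset.sum_congr rfl fun k _ => ?_
    rw [map_smul, heV]
    rfl
  -- the cone
  set S : Set E := {x | ∃ y : ι → ℝ, (∀ k, 0 ≤ y k) ∧ x = ∑ k, y k • V k} with hS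
  have hSzero : (0 : E) ∈ S := ⟨0, fun k => le_rfl, by simp⟩
  let K : ConvexCone ℝ E :=
    { carrier := S
      smul_mem' := by
        rintro c hc x ⟨y, hy, rfl⟩
        exact ⟨fun k => c * y k, fun k => mul_nonneg hc.le (hy k), by
          rw [Finset.smul_sum]
          exact Finset.sum_congr rfl fun k _ => smul_smul _ _ _⟩
      add_mem' := by
        rintro x ⟨y, hy, rfl⟩ x' ⟨y', hy', rfl⟩
        exact ⟨y + y', fun k => add_nonneg (hy k) (hy' k), by
          rw [← Finset.sum_add_distrib]
          exact Finset.sum_congr rfl fun k _ => (add_smul _ _ _).symm⟩ }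
  -- the linear functional φ = sum of coordinates
  let φ : E → ℝ := fun x => ∑ i, e x i
  have hφc : Continuous φ := by
    apply continuous_finset_sum
    intro i _
    exact (continuous_apply i).comp e.continuous
  have hφV : ∀ k, 1 ≤ φ (V k) := by
    intro k; simpa [φ, heV] using hv k
  have hφsum : ∀ y : ι → ℝ, φ (∑ k, y k • V k) = ∑ k, y k * φ (V k) := by
    intro y
    simp only [φ, hcoord, heV]
    rw [Finset.sum_comm]
    congr 1; ext k
    rw [Finset.mul_sum]
  -- closedness of the cone
  have hclosed : IsClosed S := by
    rcases isEmpty_or_nonempty ι with hemp | ⟨⟨k₀⟩⟩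
    · have : S = {0} := by
        ext x
        simp only [hS, mem_setOf_eq, mem_singleton_iff]
        constructor
        · rintro ⟨y, -, rfl⟩; simp [Finset.univ_eq_empty]
        · rintro rfl; exact hSzero
      rw [this]; exact isClosed_singleton
    · -- compact slices
      let Φ : ℝ × (ι → ℝ) → E := fun q => ∑ k, (q.1 * q.2 k) • V k
      have hΦc : Continuous Φ := by
        apply continuous_finset_sum
        intro k _
        exact Continuous.smul (f := fun q : ℝ × (ι → ℝ) => q.1 * q.2 k) (by fun_prop) continuous_const
      have hSB : ∀ B : ℝ, IsCompact (Φ '' (Icc (0:ℝ) B ×ˢ stdSimplex ℝ ι)) := by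
        intro B
        exact ((isCompact_Icc).prod (isCompact_stdSimplex ℝ ι)).image hΦc
      have hSBsub : ∀ B : ℝ, Φ '' (Icc (0:ℝ) B ×ˢ stdSimplex ℝ ι) ⊆ S := by
        rintro B x ⟨⟨t, w⟩, ⟨⟨ht0, -⟩, hw⟩, rfl⟩
        exact ⟨fun k => t * w k, fun k => mul_nonneg ht0 (hw.1 k), rfl⟩
      have hkey : ∀ B : ℝ, ∀ x ∈ S, φ x ≤ B → x ∈ Φ '' (Icc (0:ℝ) B ×ˢ stdSimplex ℝ ι) := by
        rintro B x ⟨y, hy, rfl⟩ hB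
        set s := ∑ k, y k with hs
        have hs0 : 0 ≤ s := Finset.sum_nonneg fun k _ => hy k
        have hφx : φ (∑ k, y k • V k) = ∑ k, y k * φ (V k) := hφsum y
        have hsle : s ≤ φ (∑ k, y k • V k) := by
          rw [hφx]
          apply Finset.sum_le_sum
          intro k _
          exact le_mul_of_one_le_right (hy k) (hφV k)
        rcases eq_or_lt_of_le hs0 with hseq | hspos
        · -- all y k = 0
          have hy0 : ∀ k ∈ Finset.univ, y k = 0 :=
            (Finset.sum_eq_zero_iff_of_nonneg (fun k _ => hy k)).mp hseq.symm
          have hx0 : (∑ k, y k • V k) = 0 := by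
            apply Finset.sum_eq_zero
            intro k hk; rw [hy0 k hk, zero_smul]
          refine ⟨(0, fun k => if k = k₀ then 1 else 0), ⟨⟨le_rfl, ?_⟩, ?_⟩, ?_⟩
          · -- 0 ≤ B
            rw [hx0] at hB
            show (0:ℝ) ≤ B
            simpa [φ] using hB
          · constructor
            · intro k; dsimp only; split <;> norm_num
            · simp [Finset.sum_ite_eq' Finset.univ k₀]
          · simp only [Φ, zero_mul, zero_smul, Finset.sum_const_zero]
            exact hx0.symm
        · refine ⟨(s, fun k => y k / s), ⟨⟨hs0, le_trans hsle hB⟩, ?_, ?_⟩, ?_⟩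
          · intro k; exact div_nonneg (hy k) hs0
          · rw [← Finset.sum_div, ← hs, div_self hspos.ne']
          · simp only [Φ]
            congr 1; ext k
            rw [mul_div_cancel₀ _ hspos.ne']
      -- conclude closedness
      rw [← closure_subset_iff_isClosed]
      intro x hx
      set B := φ x + 1 with hB
      have hU : IsOpen {z : E | φ z < B} := isOpen_lt hφc continuous_const
      have hxU : x ∈ {z : E | φ z < B} := by simp [hB]
      have hx2 : x ∈ closure (S ∩ {z : E | φ z < B}) := by
        rw [mem_closure_iff_nhds] at hx ⊢
        intro t ht
        have := hx (t ∩ {z : E | φ z < B}) (Filter.inter_mem ht (hU.mem_nhds hxU))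
        obtain ⟨z, ⟨⟨hzt, hzU⟩, hzS⟩⟩ := this
        exact ⟨z, hzt, hzS, hzU⟩
      have hsub : S ∩ {z : E | φ z < B} ⊆ Φ '' (Icc (0:ℝ) B ×ˢ stdSimplex ℝ ι) := by
        rintro z ⟨hzS, hzU⟩
        exact hkey B z hzS (le_of_lt hzU)
      have := closure_mono hsub
      rw [(hSB B).isClosed.closure_eq] at this
      exact hSBsub B (this hx2)
  -- G is not in the cone
  have hG : G ∉ K := by
    rintro ⟨y, hy, hGe⟩
    apply h
    refine ⟨y, hy, fun i => ?_⟩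
    have := congrArg (fun x => e x i) hGe
    simpa [heG, hcoord] using this
  -- separation
  let P : ProperCone ℝ E :=
    { carrier := S
      add_mem' := fun {a b} ha hb => K.add_mem' ha hb
      zero_mem' := hSzero
      smul_mem' := by
        rintro ⟨c, hc⟩ x ⟨y, hy, rfl⟩
        exact ⟨fun k => c * y k, fun k => mul_nonneg hc (hy k), by
          show c • (∑ k, y k • V k) = ∑ k, (c * y k) • V k
          rw [Finset.smul_sum]
          exact Finset.sum_congr rfl fun k _ => smul_smul _ _ _⟩
      isClosed' := hclosed }
  obtain ⟨y0, hy0, hy0G⟩ :=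
    ProperCone.hyperplane_separation' P hG
  refine ⟨fun i => -(e y0 i), ?_, ?_⟩
  · intro k
    have hVk : V k ∈ K := by
      refine ⟨fun k' => if k' = k then 1 else 0,
        fun k' => by dsimp only; split <;> norm_num, ?_⟩
      have : (∑ k' : ι, (if k' = k then (1:ℝ) else 0) • V k') = V k := by
        simp [ite_smul]
      exact this.symm
    have h0 := hy0 _ hVk
    have hinner : ⟪V k, y0⟫_ℝ = ∑ i, v k i * e y0 i := by
      rw [PiLp.inner_apply]
      refine Finset.sum_congr rfl fun i _ => ?_
      rw [RCLike.inner_apply, conj_trivial]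
      show e y0 i * e (V k) i = v k i * e y0 i
      rw [heV, mul_comm]
    rw [hinner] at h0
    calc (∑ i, v k i * -(e y0 i)) = -(∑ i, v k i * e y0 i) := by
          rw [← Finset.sum_neg_distrib]; congr 1; ext i; ring
      _ ≤ 0 := neg_nonpos_of_nonneg h0
  · have hinner : ⟪y0, G⟫_ℝ = ∑ i, g i * e y0 i := by
      rw [PiLp.inner_apply]
      refine Finset.sum_congr rfl fun i _ => ?_
      rw [RCLike.inner_apply, conj_trivial]
      have hGi : G i = g i := congrFun heG i
      rw [hGi]
      rfl
    rw [real_inner_comm] at hy0G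
    rw [hinner] at hy0G
    calc (0:ℝ) < -(∑ i, g i * e y0 i) := by linarith
      _ = ∑ i, g i * -(e y0 i) := by rw [← Finset.sum_neg_distrib]; congr 1; ext i; ring

noncomputable def fval (α u : ℝ) : ℝ := if α = 1 then Real.log u else u ^ (1 - α) / (1 - α)

lemma grad_ineq {α x y : ℝ} (hα : 0 < α) (hx : 0 < x) (hy : 0 ≤ y) (hy1 : 1 ≤ α → 0 < y) :
    fval α y ≤ fval α x + x ^ (-α) * (y - x) := by
  have e1 : x ^ (-α) * x = x ^ (1 - α) := by
    rw [show (1 - α) = -α + 1 by ring, Real.rpow_add hx, Real.rpow_one]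
  rcases lt_trichotomy α 1 with h1 | h1 | h1
  · have hβ : 0 < 1 - α := by linarith
    have amgm := Real.geom_mean_le_arith_mean2_weighted hβ.le hα.le hy hx.le (by ring)
    -- amgm : y ^ (1-α) * x ^ α ≤ (1-α) * y + α * x
    have hq : 0 ≤ x ^ (-α) := (Real.rpow_pos_of_pos hx _).le
    have e0 : x ^ α * x ^ (-α) = 1 := by
      rw [← Real.rpow_add hx]; simp
    have hkey : y ^ (1 - α) ≤ (1 - α) * (x ^ (-α) * y) + α * x ^ (1 - α) := by
      have := mul_le_mul_of_nonneg_right amgm hq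
      calc y ^ (1 - α) = y ^ (1 - α) * (x ^ α * x ^ (-α)) := by rw [e0, mul_one]
        _ = y ^ (1 - α) * x ^ α * x ^ (-α) := by ring
        _ ≤ ((1 - α) * y + α * x) * x ^ (-α) := this
        _ = (1 - α) * (x ^ (-α) * y) + α * (x ^ (-α) * x) := by ring
        _ = (1 - α) * (x ^ (-α) * y) + α * x ^ (1 - α) := by rw [e1]
    simp only [fval, h1.ne, if_false]
    have h9 : y ^ (1 - α) / (1 - α) ≤ ((1 - α) * (x ^ (-α) * y) + α * x ^ (1 - α)) / (1 - α) :=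
      (div_le_div_iff_of_pos_right hβ).mpr hkey
    calc y ^ (1 - α) / (1 - α) ≤ ((1 - α) * (x ^ (-α) * y) + α * x ^ (1 - α)) / (1 - α) := h9
      _ = x ^ (1 - α) / (1 - α) + x ^ (-α) * (y - x) := by
          rw [← e1]; field_simp; ring
  · subst h1
    have hy' : 0 < y := hy1 le_rfl
    simp only [fval, if_true, if_pos rfl]
    have hlog := Real.log_le_sub_one_of_pos (div_pos hy' hx)
    rw [Real.log_div hy'.ne' hx.ne'] at hlog
    have : x ^ (-(1:ℝ)) = x⁻¹ := by
      rw [Real.rpow_neg_one]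
    rw [this]
    have hx' : x⁻¹ * (y - x) = y / x - 1 := by field_simp
    linarith
  · have hy' : 0 < y := hy1 h1.le
    have hβ : 1 - α < 0 := by linarith
    have hs : 0 < y / x := div_pos hy' hx
    have h2 : (1 - α) * Real.log (y / x) + 1 ≤ (y / x) ^ (1 - α) := by
      rw [Real.rpow_def_of_pos hs, mul_comm (Real.log (y / x)) (1 - α)]
      exact Real.add_one_le_exp _
    have h3 : Real.log (y / x) ≤ y / x - 1 := Real.log_le_sub_one_of_pos hs
    have h4 : (1 - α) * (y / x - 1) ≤ (1 - α) * Real.log (y / x) :=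
      mul_le_mul_of_nonpos_left h3 hβ.le
    have h5 : 1 + (1 - α) * (y / x - 1) ≤ (y / x) ^ (1 - α) := by linarith
    have h6 : (y / x) ^ (1 - α) = y ^ (1 - α) / x ^ (1 - α) := Real.div_rpow hy hx.le _
    have hxp : 0 < x ^ (1 - α) := Real.rpow_pos_of_pos hx _
    have h7 : x ^ (1 - α) * (1 + (1 - α) * (y / x - 1)) ≤ y ^ (1 - α) := by
      rw [h6] at h5
      calc x ^ (1 - α) * (1 + (1 - α) * (y / x - 1)) 
          ≤ x ^ (1 - α) * (y ^ (1 - α) / x ^ (1 - α)) := by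
            exact mul_le_mul_of_nonneg_left h5 hxp.le
        _ = y ^ (1 - α) := by field_simp
    have e2 : x ^ (1 - α) * (y / x) = x ^ (-α) * y := by
      rw [← e1]; field_simp
    have h8 : x ^ (1 - α) + (1 - α) * (x ^ (-α) * y) - (1 - α) * x ^ (1 - α) ≤ y ^ (1 - α) := by
      have : x ^ (1 - α) * (1 + (1 - α) * (y / x - 1))
          = x ^ (1 - α) + (1 - α) * (x ^ (1 - α) * (y / x)) - (1 - α) * x ^ (1 - α) := by ring
      rw [this, e2] at h7; exact h7
    simp only [fval, h1.ne', if_false]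
    calc y ^ (1 - α) / (1 - α)
        ≤ (x ^ (1 - α) + (1 - α) * (x ^ (-α) * y) - (1 - α) * x ^ (1 - α)) / (1 - α) :=
          (div_le_div_right_of_neg hβ).mpr h8
      _ = x ^ (1 - α) / (1 - α) + x ^ (-α) * (y - x) := by
          rw [← e1]; field_simp [hβ.ne]; ring

lemma Gfun_eq_sum {I : ℕ} (α : ℝ) (κ n L : Fin I → ℝ)
    (hnb : ¬ (1 ≤ α ∧ ∃ i, 0 < n i ∧ L i = 0)) :
    Gfun α κ n L = ((∑ i, if 0 < n i then κ i * n i ^ α * fval α (L i) else 0 : ℝ) : EReal) := by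
  rw [Gfun, if_neg hnb]
  by_cases h1 : α = 1
  · subst h1
    rw [if_pos rfl]
    congr 1
    refine Finset.sum_congr rfl fun i _ => ?_
    by_cases hi : 0 < n i
    · rw [if_pos hi, if_pos hi]
      simp [fval, Real.rpow_one]
    · rw [if_neg hi, if_neg hi]
  · rw [if_neg h1]
    congr 1
    refine Finset.sum_congr rfl fun i _ => ?_
    by_cases hi : 0 < n i
    · rw [if_pos hi, if_pos hi]
      simp only [fval, if_neg h1]
      ring
    · rw [if_neg hi, if_neg hi]

lemma rpow_calc {α a k q : ℝ} (hα : 0 < α) (ha : 0 < a) (hk : 0 < k) (hq : 0 < q) :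
    k * a ^ α * (a * (k / q) ^ (1/α)) ^ (-α) = q := by
  have hkq : 0 < k / q := div_pos hk hq
  rw [Real.mul_rpow ha.le (Real.rpow_pos_of_pos hkq _).le]
  rw [← Real.rpow_mul hkq.le]
  have h1 : (1/α) * (-α) = -1 := by field_simp
  rw [h1, Real.rpow_neg_one]
  have h2 : a ^ α * a ^ (-α) = 1 := by rw [← Real.rpow_add ha]; simp
  have h3 : (k / q)⁻¹ = q / k := by rw [inv_div]
  rw [h3]
  calc k * a ^ α * (a ^ (-α) * (q / k)) = (a ^ α * a ^ (-α)) * (k * (q / k)) := by ring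
    _ = q := by rw [h2, one_mul, mul_div_cancel₀ _ hk.ne']

lemma rpow_solve {α a k q l : ℝ} (hα : 0 < α) (ha : 0 < a) (hk : 0 < k) (hq : 0 < q)
    (hl : 0 < l) (h : k * a ^ α * l ^ (-α) = q) : l = a * (k / q) ^ (1/α) := by
  set l' := a * (k / q) ^ (1/α) with hl'def
  have hl'pos : 0 < l' := mul_pos ha (Real.rpow_pos_of_pos (div_pos hk hq) _)
  have h' : k * a ^ α * l' ^ (-α) = q := rpow_calc hα ha hk hq
  have hka : 0 < k * a ^ α := mul_pos hk (Real.rpow_pos_of_pos ha _)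
  have heq : l ^ (-α) = l' ^ (-α) := by
    have : k * a ^ α * l ^ (-α) = k * a ^ α * l' ^ (-α) := by rw [h, h']
    exact mul_left_cancel₀ hka.ne' this
  have hrec : ∀ z : ℝ, 0 < z → (z ^ (-α)) ^ (-(1/α)) = z := by
    intro z hz
    rw [← Real.rpow_mul hz.le]
    have : (-α) * (-(1/α)) = 1 := by field_simp
    rw [this, Real.rpow_one]
  calc l = (l ^ (-α)) ^ (-(1/α)) := (hrec l hl).symm
    _ = (l' ^ (-α)) ^ (-(1/α)) := by rw [heq]
    _ = l' := hrec l' hl'pos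

lemma eps_pos {I J : ℕ} (hI : 0 < I) (hJ : 0 < J) (C : Fin J → ℝ) (hC : ∀ j, 0 < C j) : 0 < (Finset.univ.inf' ⟨⟨0, hJ⟩, Finset.mem_univ _⟩ C) / (I : ℝ) := by
  apply div_pos
  · apply (Finset.lt_inf'_iff _).2
    exact fun j _ => hC j
  · exact_mod_cast hI

lemma eps_feasible {I J : ℕ} (hI : 0 < I) (hJ : 0 < J)
    (A : Fin J → Fin I → ℝ) (hA01 : ∀ j i, A j i = 0 ∨ A j i = 1)
    (C : Fin J → ℝ) (hC : ∀ j, 0 < C j) (n : Fin I → ℝ) :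
    (fun i => if 0 < n i then (Finset.univ.inf' ⟨⟨0, hJ⟩, Finset.mem_univ _⟩ C) / (I : ℝ) else 0)
      ∈ Feasible A C n := by
  set ε := (Finset.univ.inf' ⟨⟨0, hJ⟩, Finset.mem_univ _⟩ C) / (I : ℝ) with hεdef
  have hε : 0 < ε := eps_pos hI hJ C hC
  refine ⟨fun i => ?_, fun i hi => ?_, fun j => ?_⟩
  · dsimp only; split
    · exact hε.le
    · exact le_rfl
  · dsimp only; rw [if_neg (by rw [hi]; exact lt_irrefl 0)]
  · have hle : ∀ i : Fin I, A j i * (if 0 < n i then ε else 0) ≤ ε := by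
      intro i
      rcases hA01 j i with h | h
      · rw [h, zero_mul]; exact hε.le
      · rw [h, one_mul]; split
        · exact le_rfl
        · exact hε.le
    calc (∑ i, A j i * (if 0 < n i then ε else 0)) ≤ ∑ _i : Fin I, ε :=
          Finset.sum_le_sum fun i _ => hle i
      _ = (I : ℝ) * ε := by
          rw [Finset.sum_const, Finset.card_univ, Fintype.card_fin, nsmul_eq_mul]
      _ = Finset.univ.inf' ⟨⟨0, hJ⟩, Finset.mem_univ _⟩ C := by
          rw [hεdef, mul_comm, div_mul_cancel₀]
          exact_mod_cast hI.ne'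
      _ ≤ C j := Finset.inf'_le _ (Finset.mem_univ j)

set_option maxHeartbeats 2000000 in
lemma hpos_of_isAlloc {I J : ℕ} (hI : 0 < I) (hJ : 0 < J)
    (A : Fin J → Fin I → ℝ) (hA01 : ∀ j i, A j i = 0 ∨ A j i = 1)
    (C : Fin J → ℝ) (hC : ∀ j, 0 < C j)
    {α : ℝ} (hα : 0 < α) (κ n L : Fin I → ℝ) (hκ : ∀ i, 0 < κ i) (hn : ∀ i, 0 ≤ n i)
    (hal : IsAlloc A C α κ n L) :
    ∀ i, 0 < n i → 0 < L i := by
  classical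
  set ε := (Finset.univ.inf' ⟨⟨0, hJ⟩, Finset.mem_univ _⟩ C) / (I : ℝ) with hεdef
  have hε : 0 < ε := eps_pos hI hJ C hC
  set Lε : Fin I → ℝ := fun i => if 0 < n i then ε else 0 with hLεdef
  have hLεf : Lε ∈ Feasible A C n := eps_feasible hI hJ A hA01 C hC n
  by_contra hcon
  push_neg at hcon
  obtain ⟨i₀, hi₀n, hi₀⟩ := hcon
  have hi₀0 : L i₀ = 0 := le_antisymm hi₀ (hal.1.1 i₀)
  have hLεnb : ¬ (1 ≤ α ∧ ∃ i, 0 < n i ∧ Lε i = 0) := by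
    rintro ⟨-, i, hi, h0⟩
    rw [hLεdef] at h0; dsimp only at h0
    rw [if_pos hi] at h0
    exact hε.ne' h0
  rcases le_or_gt 1 α with h1 | hlt
  · -- α ≥ 1 : Gfun L = ⊥ < Gfun Lε
    have hbotL : Gfun α κ n L = ⊥ := by rw [Gfun, if_pos ⟨h1, i₀, hi₀n, hi₀0⟩]
    have hle := hal.2 Lε hLεf
    rw [hbotL, le_bot_iff, Gfun_eq_sum α κ n Lε hLεnb] at hle
    exact EReal.coe_ne_bot _ hle
  · -- α < 1 : mixing argument
    have hαne : ¬ (1:ℝ) ≤ α := not_le.mpr hlt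
    have hβ : 0 < 1 - α := by linarith
    set β := 1 - α with hβdef
    set c : Fin I → ℝ := fun i => κ i * n i ^ α with hcdef
    have hcpos : ∀ i, 0 < n i → 0 < c i := fun i hi =>
      mul_pos (hκ i) (Real.rpow_pos_of_pos hi _)
    have hcnn : ∀ i, 0 ≤ c i := fun i =>
      mul_nonneg (hκ i).le (Real.rpow_nonneg (hn i) _)
    set Δ : Fin I → ℝ := fun i => Lε i - L i with hΔdef
    set M : Fin I → ℝ := fun i =>
      if 0 < n i ∧ 0 < L i then c i * (L i / 2) ^ (-α) * |Δ i| else 0 with hMdef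
    have hMnn : ∀ i, 0 ≤ M i := by
      intro i; rw [hMdef]; dsimp only; split
      · have h := ‹0 < n i ∧ 0 < L i›
        exact mul_nonneg (mul_nonneg (hcnn i) (Real.rpow_nonneg (by linarith [h.2]) _))
          (abs_nonneg _)
      · exact le_rfl
    set Msum := ∑ i, M i with hMsumdef
    have hMsnn : 0 ≤ Msum := Finset.sum_nonneg fun i _ => hMnn i
    set K := c i₀ * ε ^ β / β with hKdef
    have hK : 0 < K := div_pos (mul_pos (hcpos i₀ hi₀n) (Real.rpow_pos_of_pos hε _)) hβ
    set ti : Fin I → ℝ := fun i => if 0 < L i then L i / (2 * (|Δ i| + 1)) else 1 with htidef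
    have hti : ∀ i, 0 < ti i := by
      intro i; rw [htidef]; dsimp only; split
      · have h := ‹0 < L i›
        apply div_pos h
        positivity
      · norm_num
    have hFinI : (Finset.univ : Finset (Fin I)).Nonempty := ⟨⟨0, hI⟩, Finset.mem_univ _⟩
    set t₁ := Finset.univ.inf' hFinI ti with ht₁def
    have ht₁ : 0 < t₁ := by
      rw [ht₁def, Finset.lt_inf'_iff]
      exact fun i _ => hti i
    set B := (K / (Msum + 1)) ^ (1/α) with hBdef
    have hBpos : 0 < B := Real.rpow_pos_of_pos (div_pos hK (by linarith)) _
    set t := min t₁ (min (1/2) (B/2)) with htdef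
    have ht : 0 < t := lt_min ht₁ (lt_min (by norm_num) (by linarith))
    have hthalf : t ≤ 1/2 := le_trans (min_le_right _ _) (min_le_left _ _)
    have htB : t ≤ B/2 := le_trans (min_le_right _ _) (min_le_right _ _)
    have htt1 : ∀ i, t ≤ ti i := fun i =>
      le_trans (min_le_left _ _) (Finset.inf'_le _ (Finset.mem_univ i))
    set Lt : Fin I → ℝ := fun i => L i + t * Δ i with hLtdef
    -- pointwise positivity on I₊
    have hLtpos : ∀ i, 0 < n i → 0 < Lt i := by
      intro i hi
      have : Lt i = (1 - t) * L i + t * ε := by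
        rw [hLtdef]; dsimp only
        rw [hΔdef]; dsimp only
        rw [hLεdef]; dsimp only
        rw [if_pos hi]; ring
      rw [this]
      have h1 : 0 ≤ (1 - t) * L i := mul_nonneg (by linarith) (hal.1.1 i)
      have h2 : 0 < t * ε := mul_pos ht hε
      linarith
    -- feasibility of Lt
    have hLtf : Lt ∈ Feasible A C n := by
      refine ⟨fun i => ?_, fun i hi => ?_, fun j => ?_⟩
      · rcases (hn i).lt_or_eq with hi | hi
        · exact (hLtpos i hi).le
        · have hni : n i = 0 := hi.symm
          have h0 : L i = 0 := hal.1.2.1 i hni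
          have h0' : Lε i = 0 := hLεf.2.1 i hni
          simp [hLtdef, hΔdef, h0, h0']
      · have h0 : L i = 0 := hal.1.2.1 i hi
        have h0' : Lε i = 0 := hLεf.2.1 i hi
        simp [hLtdef, hΔdef, h0, h0']
      · have e : ∀ i, A j i * Lt i = (1-t) * (A j i * L i) + t * (A j i * Lε i) := by
          intro i; rw [hLtdef]; dsimp only; rw [hΔdef]; dsimp only; ring
        rw [Finset.sum_congr rfl fun i _ => e i, Finset.sum_add_distrib,
          ← Finset.mul_sum, ← Finset.mul_sum]
        have hS := hal.1.2.2 j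
        have hSε := hLεf.2.2 j
        have h1t : (0:ℝ) ≤ 1 - t := by linarith
        nlinarith [mul_le_mul_of_nonneg_left hS h1t, mul_le_mul_of_nonneg_left hSε ht.le]
    -- compare values
    have hnbL : ¬ (1 ≤ α ∧ ∃ i, 0 < n i ∧ L i = 0) := fun h => hαne h.1
    have hnbLt : ¬ (1 ≤ α ∧ ∃ i, 0 < n i ∧ Lt i = 0) := fun h => hαne h.1
    have hcmp := hal.2 Lt hLtf
    rw [Gfun_eq_sum α κ n Lt hnbLt, Gfun_eq_sum α κ n L hnbL, EReal.coe_le_coe_iff] at hcmp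
    simp only [show ∀ i, κ i * n i ^ α = c i from fun i => by rw [hcdef]] at hcmp
    -- gain estimates
    set φ : Fin I → ℝ := fun i => (if i = i₀ then c i₀ * (t*ε) ^ β / β else 0) - t * M i
      with hφdef
    clear_value ε Lε β c Δ M Msum K ti t₁ B t Lt φ
    have hfval : ∀ u : ℝ, fval α u = u ^ β / β := fun u => by
      rw [fval, if_neg hlt.ne, hβdef]
    have hfval0 : fval α 0 = 0 := by
      rw [hfval, Real.zero_rpow hβ.ne', zero_div]
    have hstep : ∀ i, (if 0 < n i then c i * fval α (L i) else 0) + φ i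
        ≤ (if 0 < n i then c i * fval α (Lt i) else 0) := by
      intro i
      rw [hφdef]; dsimp only
      by_cases hii : i = i₀
      · subst hii
        rw [if_pos rfl, if_pos hi₀n, if_pos hi₀n]
        have hM0 : M i = 0 := by
          rw [hMdef]; dsimp only
          rw [if_neg (by rw [hi₀0]; rintro ⟨-, h⟩; exact lt_irrefl 0 h)]
        have hLti : Lt i = t * ε := by
          rw [hLtdef]; dsimp only
          rw [hΔdef]; dsimp only
          rw [hLεdef]; dsimp only
          rw [if_pos hi₀n, hi₀0]; ring
        rw [hM0, hi₀0, hfval0, hLti, hfval]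
        ring_nf
        exact le_rfl
      · rw [if_neg hii]
        by_cases hi : 0 < n i
        · rw [if_pos hi, if_pos hi]
          by_cases hLi : 0 < L i
          · -- main estimate
            have hMi : M i = c i * (L i / 2) ^ (-α) * |Δ i| := by
              rw [hMdef]; dsimp only; rw [if_pos ⟨hi, hLi⟩]
            have htle : t ≤ L i / (2 * (|Δ i| + 1)) := by
              have := htt1 i
              rw [htidef] at this; dsimp only at this
              rwa [if_pos hLi] at this
            have hdiv : t * (2 * (|Δ i| + 1)) ≤ L i := by
              rw [le_div_iff₀ (by positivity)] at htle
              exact htle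
            have habs : t * |Δ i| ≤ L i / 2 := by
              nlinarith [ht.le, abs_nonneg (Δ i)]
            have hLti : Lt i = L i + t * Δ i := by rw [hLtdef]
            have htΔ : t * (-|Δ i|) ≤ t * Δ i :=
              mul_le_mul_of_nonneg_left (neg_abs_le (Δ i)) ht.le
            have hL2 : L i / 2 ≤ Lt i := by
              rw [hLti]
              nlinarith [htΔ, habs]
            have hLtipos : 0 < Lt i := lt_of_lt_of_le (by linarith) hL2
            have hgi := grad_ineq hα hLtipos (hal.1.1 i) (fun h1 => absurd h1 hαne)
            -- fval (L i) ≤ fval (Lt i) + Lt i ^ (-α) * (L i - Lt i)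
            have hr1 : Lt i ^ (-α) ≤ (L i / 2) ^ (-α) :=
              Real.rpow_le_rpow_of_nonpos (by linarith) hL2 (by linarith)
            have hrnn : (0:ℝ) ≤ Lt i ^ (-α) := Real.rpow_nonneg hLtipos.le _
            have s1 : Lt i ^ (-α) * (L i - Lt i) ≤ (L i / 2) ^ (-α) * (t * |Δ i|) := by
              have e : L i - Lt i = -(t * Δ i) := by rw [hLti]; ring
              have e2 : -(t * Δ i) ≤ t * |Δ i| := by linarith [htΔ]
              calc Lt i ^ (-α) * (L i - Lt i) ≤ Lt i ^ (-α) * (t * |Δ i|) := by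
                    apply mul_le_mul_of_nonneg_left _ hrnn
                    rw [e]; exact e2
                _ ≤ (L i / 2) ^ (-α) * (t * |Δ i|) := by
                    apply mul_le_mul_of_nonneg_right hr1
                    exact mul_nonneg ht.le (abs_nonneg _)
            have s2 := mul_le_mul_of_nonneg_left hgi (hcnn i)
            rw [mul_add] at s2
            have s3 : c i * (Lt i ^ (-α) * (L i - Lt i)) ≤ t * M i := by
              have := mul_le_mul_of_nonneg_left s1 (hcnn i)
              rw [hMi]
              calc c i * (Lt i ^ (-α) * (L i - Lt i))
                  ≤ c i * ((L i / 2) ^ (-α) * (t * |Δ i|)) := this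
                _ = t * (c i * (L i / 2) ^ (-α) * |Δ i|) := by ring
            linarith
          · -- L i = 0, gain is nonnegative
            have hLi0 : L i = 0 := le_antisymm (not_lt.mp hLi) (hal.1.1 i)
            have hM0 : M i = 0 := by
              rw [hMdef]; dsimp only
              rw [if_neg (by rintro ⟨-, h⟩; exact hLi h)]
            have hLti : Lt i = t * ε := by
              rw [hLtdef]; dsimp only
              rw [hΔdef]; dsimp only
              rw [hLεdef]; dsimp only
              rw [if_pos hi, hLi0]; ring
            rw [hM0, hLi0, hfval0, hLti, hfval]
            have : 0 ≤ c i * ((t * ε) ^ β / β) := by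
              apply mul_nonneg (hcnn i)
              exact div_nonneg (Real.rpow_nonneg (mul_nonneg ht.le hε.le) _) hβ.le
            linarith
        · -- n i = 0
          rw [if_neg hi, if_neg hi]
          have hni : n i = 0 := le_antisymm (not_lt.mp hi) (hn i)
          have hM0 : M i = 0 := by
            rw [hMdef]; dsimp only
            rw [if_neg (by rintro ⟨h, -⟩; exact hi h)]
          rw [hM0]
          norm_num
    have hsum := Finset.sum_le_sum fun i (_ : i ∈ Finset.univ) => hstep i
    rw [Finset.sum_add_distrib] at hsum
    have hφsum : ∑ i, φ i = c i₀ * (t*ε) ^ β / β - t * Msum := by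
      rw [hφdef]; dsimp only
      rw [Finset.sum_sub_distrib, Finset.sum_ite_eq' Finset.univ i₀, if_pos (Finset.mem_univ _),
        ← Finset.mul_sum, hMsumdef]
    have hφpos : 0 < ∑ i, φ i := by
      rw [hφsum]
      have htε : (t*ε) ^ β = t ^ β * ε ^ β := Real.mul_rpow ht.le hε.le
      have hKt : c i₀ * (t*ε) ^ β / β = K * t ^ β := by
        rw [htε, hKdef]; ring
      rw [hKt]
      -- K * t^β > Msum * t
      have hBα : B ^ α = K / (Msum + 1) := by
        rw [hBdef, ← Real.rpow_mul (div_pos hK (by linarith)).le]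
        rw [one_div, inv_mul_cancel₀ hα.ne', Real.rpow_one]
      have htα : t ^ α < K / (Msum + 1) := by
        calc t ^ α ≤ (B/2) ^ α := Real.rpow_le_rpow ht.le htB hα.le
          _ < B ^ α := Real.rpow_lt_rpow (by linarith) (by linarith) hα
          _ = K / (Msum + 1) := hBα
      have h5 : (Msum + 1) * t ^ α < K := by
        rw [lt_div_iff₀ (by linarith : (0:ℝ) < Msum + 1)] at htα
        linarith
      have h6 : t ^ α * t ^ β = t := by
        rw [← Real.rpow_add ht, hβdef]
        norm_num
      have h7 : (Msum + 1) * t < K * t ^ β := by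
        have := mul_lt_mul_of_pos_right h5 (Real.rpow_pos_of_pos ht β)
        calc (Msum + 1) * t = (Msum + 1) * (t ^ α * t ^ β) := by rw [h6]
          _ = (Msum + 1) * t ^ α * t ^ β := by ring
          _ < K * t ^ β := this
      nlinarith [ht]
    linarith

lemma backward {I J : ℕ} (A : Fin J → Fin I → ℝ) (C : Fin J → ℝ) {α : ℝ} (hα : 0 < α)
    (κ n L : Fin I → ℝ) (hκ : ∀ i, 0 < κ i) (hn : ∀ i, 0 ≤ n i)
    (hL0 : ∀ i, n i = 0 → L i = 0)
    (p : Fin J → ℝ) (hp : ∀ j, 0 ≤ p j)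
    (hcs : ∀ j, p j * (C j - ∑ i, A j i * L i) = 0)
    (hqpos : ∀ i, 0 < n i → 0 < ∑ j, p j * A j i)
    (hLf : ∀ i, 0 < n i → L i = n i * (κ i / ∑ j, p j * A j i) ^ (1 / α))
    (hfeas : ∀ j, (∑ i, A j i * L i) ≤ C j) :
    IsAlloc A C α κ n L := by
  set q : Fin I → ℝ := fun i => ∑ j, p j * A j i with hq
  have hLpos : ∀ i, 0 < n i → 0 < L i := fun i hi => by
    rw [hLf i hi]
    exact mul_pos hi (Real.rpow_pos_of_pos (div_pos (hκ i) (hqpos i hi)) _)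
  have hLnn : ∀ i, 0 ≤ L i := fun i => by
    rcases (hn i).lt_or_eq with hi | hi
    · exact (hLpos i hi).le
    · rw [hL0 i hi.symm]
  refine ⟨⟨hLnn, hL0, hfeas⟩, ?_⟩
  intro L' hL'
  obtain ⟨hL'nn, hL'0, hL'f⟩ := hL'
  by_cases hbot : 1 ≤ α ∧ ∃ i, 0 < n i ∧ L' i = 0
  · rw [Gfun, if_pos hbot]; exact bot_le
  · have hnbL : ¬ (1 ≤ α ∧ ∃ i, 0 < n i ∧ L i = 0) := by
      rintro ⟨h1, i, hi, h0⟩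
      exact (hLpos i hi).ne' h0
    rw [Gfun_eq_sum α κ n L' hbot, Gfun_eq_sum α κ n L hnbL, EReal.coe_le_coe_iff]
    have key : ∀ i, 0 < n i → κ i * n i ^ α * (L i) ^ (-α) = q i := by
      intro i hi
      have := rpow_calc (α := α) (a := n i) (k := κ i) (q := q i) hα hi (hκ i) (hqpos i hi)
      rw [← hLf i hi] at this
      exact this
    have hL'posα : 1 ≤ α → ∀ i, 0 < n i → 0 < L' i := by
      intro h1 i hi
      rcases (hL'nn i).lt_or_eq with h | h
      · exact h
      · exact absurd ⟨h1, i, hi, h.symm⟩ hbot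
    have step : ∀ i, (if 0 < n i then κ i * n i ^ α * fval α (L' i) else 0)
        ≤ (if 0 < n i then κ i * n i ^ α * fval α (L i) else 0)
          + (if 0 < n i then q i * (L' i - L i) else 0) := by
      intro i
      by_cases hi : 0 < n i
      · simp only [if_pos hi]
        have hgi := grad_ineq hα (hLpos i hi) (hL'nn i) (fun h1 => hL'posα h1 i hi)
        have hci : 0 ≤ κ i * n i ^ α :=
          mul_nonneg (hκ i).le (Real.rpow_nonneg (hn i) _)
        have hmul := mul_le_mul_of_nonneg_left hgi hci
        rw [mul_add] at hmul
        have e : κ i * n i ^ α * (L i ^ (-α) * (L' i - L i)) = q i * (L' i - L i) := by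
          rw [← mul_assoc, key i hi]
        rw [e] at hmul
        exact hmul
      · simp only [if_neg hi]; norm_num
    have hsum := Finset.sum_le_sum (fun i (_ : i ∈ Finset.univ) => step i)
    rw [Finset.sum_add_distrib] at hsum
    have corr : (∑ i, if 0 < n i then q i * (L' i - L i) else 0) ≤ 0 := by
      have e1 : (∑ i, if 0 < n i then q i * (L' i - L i) else 0)
          = ∑ i, q i * (L' i - L i) := by
        refine Finset.sum_congr rfl fun i _ => ?_
        by_cases hi : 0 < n i
        · rw [if_pos hi]
        · rw [if_neg hi]
          have hni : n i = 0 := le_antisymm (not_lt.mp hi) (hn i)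
          rw [hL0 i hni, hL'0 i hni]
          norm_num
      have e2 : ∑ i, q i * (L' i - L i)
          = ∑ j, p j * ((∑ i, A j i * L' i) - (∑ i, A j i * L i)) := by
        simp only [hq, Finset.sum_mul]
        rw [Finset.sum_comm]
        refine Finset.sum_congr rfl fun j _ => ?_
        rw [mul_sub, Finset.mul_sum, Finset.mul_sum, ← Finset.sum_sub_distrib]
        refine Finset.sum_congr rfl fun i _ => by ring
      rw [e1, e2]
      apply Finset.sum_nonpos
      intro j _
      have h3 : p j * (∑ i, A j i * L i) = p j * C j := by
        have := hcs j
        have expand : p j * C j - p j * (∑ i, A j i * L i) = 0 := by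
          rw [← mul_sub]; exact this
        linarith
      have h4 : p j * (∑ i, A j i * L' i) ≤ p j * C j :=
        mul_le_mul_of_nonneg_left (hL'f j) (hp j)
      rw [mul_sub, h3]
      linarith
    linarith

set_option maxHeartbeats 2000000 in
lemma forward {I J : ℕ} (hI : 0 < I) (hJ : 0 < J)
    (A : Fin J → Fin I → ℝ) (hA01 : ∀ j i, A j i = 0 ∨ A j i = 1)
    (C : Fin J → ℝ) (hC : ∀ j, 0 < C j)
    {α : ℝ} (hα : 0 < α) (κ n L : Fin I → ℝ) (hκ : ∀ i, 0 < κ i) (hn : ∀ i, 0 ≤ n i)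
    (hal : IsAlloc A C α κ n L) :
    ∃ p : Fin J → ℝ, (∀ j, 0 ≤ p j) ∧
        (∀ j, p j * (C j - ∑ i, A j i * L i) = 0) ∧
        (∀ i, 0 < n i → 0 < ∑ j, p j * A j i) ∧
        (∀ i, 0 < n i → L i = n i * (κ i / ∑ j, p j * A j i) ^ (1 / α)) ∧
        ∀ j, (∑ i, A j i * L i) ≤ C j := by
  classical
  obtain ⟨⟨hLnn, hL0, hfeas⟩, hopt⟩ := hal
  have hpos := hpos_of_isAlloc hI hJ A hA01 C hC hα κ n L hκ hn ⟨⟨hLnn, hL0, hfeas⟩, hopt⟩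
  set g : Fin I → ℝ := fun i => if 0 < n i then κ i * n i ^ α * L i ^ (-α) else 0 with hgdef
  set bind : Fin J → Prop := fun j => ∑ i, A j i * L i = C j with hbinddef
  set v : {j // bind j} → Fin I → ℝ := fun k i => if 0 < n i then A k.1 i else 0 with hvdef
  have hv1 : ∀ k : {j // bind j}, 1 ≤ ∑ i, v k i := by
    rintro ⟨j, hj⟩
    have hCj : 0 < ∑ i, A j i * L i := by
      rw [show (∑ i, A j i * L i) = C j from hj]; exact hC j
    have hex : ∃ i, 0 < A j i * L i := by
      by_contra hno
      push_neg at hno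
      have : (∑ i, A j i * L i) ≤ 0 := Finset.sum_nonpos fun i _ => hno i
      linarith
    obtain ⟨i, hi⟩ := hex
    have hA1 : A j i = 1 := by
      rcases hA01 j i with h | h
      · rw [h, zero_mul] at hi; linarith
      · exact h
    have hLi : 0 < L i := by rwa [hA1, one_mul] at hi
    have hni : 0 < n i := by
      rcases (hn i).lt_or_eq with h | h
      · exact h
      · exact absurd (hL0 i h.symm) hLi.ne'
    have hnn : ∀ i' : Fin I, (0:ℝ) ≤ if 0 < n i' then A j i' else 0 := by
      intro i'
      split
      · rcases hA01 j i' with h | h <;> simp [h]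
      · exact le_rfl
    calc (1:ℝ) = (if 0 < n i then A j i else 0) := by rw [if_pos hni, hA1]
      _ ≤ ∑ i', (if 0 < n i' then A j i' else 0) :=
          Finset.single_le_sum (fun i' _ => hnn i') (Finset.mem_univ i)
      _ = ∑ i', v ⟨j, hj⟩ i' := by rw [hvdef]
  have claim : ∃ y : {j // bind j} → ℝ, (∀ k, 0 ≤ y k) ∧ ∀ i, g i = ∑ k, y k * v k i := by
    by_contra hno
    obtain ⟨d, hd1, hd2⟩ := farkas v hv1 g hno
    set d' : Fin I → ℝ := fun i => if 0 < n i then d i else 0 with hd'def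
    have hvd : ∀ k : {j // bind j}, ∑ i, A k.1 i * d' i ≤ 0 := by
      intro k
      calc ∑ i, A k.1 i * d' i = ∑ i, v k i * d i := by
            refine Finset.sum_congr rfl fun i _ => ?_
            rw [hvdef, hd'def]; dsimp only
            by_cases hi : 0 < n i
            · rw [if_pos hi, if_pos hi]
            · rw [if_neg hi, if_neg hi, mul_zero, zero_mul]
        _ ≤ 0 := hd1 k
    have hgd : 0 < ∑ i, g i * d' i := by
      have e : ∑ i, g i * d' i = ∑ i, g i * d i := by
        refine Finset.sum_congr rfl fun i _ => ?_
        rw [hgdef, hd'def]; dsimp only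
        by_cases hi : 0 < n i
        · rw [if_pos hi, if_pos hi]
        · rw [if_neg hi, if_neg hi, zero_mul, zero_mul]
      rw [e]; exact hd2
    set F := nhdsWithin (0:ℝ) (Ioi 0) with hFdef
    have hev1 : ∀ᶠ s in F, ∀ i, 0 < n i → 0 < L i + s * d' i := by
      rw [Filter.eventually_all]
      intro i
      by_cases hi : 0 < n i
      · have hopen : IsOpen {s : ℝ | 0 < L i + s * d' i} := by
          apply isOpen_lt continuous_const
          exact continuous_const.add (continuous_id.mul continuous_const)
        have h0 : (0:ℝ) ∈ {s : ℝ | 0 < L i + s * d' i} := by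
          simp only [mem_setOf_eq, zero_mul, add_zero]
          exact hpos i hi
        exact Filter.eventually_of_mem (nhdsWithin_le_nhds (hopen.mem_nhds h0))
          (fun s hs _ => hs)
      · exact Filter.Eventually.of_forall fun s h => absurd h hi
    have hev2 : ∀ᶠ s in F, ∀ j, ∑ i, A j i * (L i + s * d' i) ≤ C j := by
      rw [Filter.eventually_all]
      intro j
      have hexp : ∀ s : ℝ, ∑ i, A j i * (L i + s * d' i)
          = (∑ i, A j i * L i) + s * ∑ i, A j i * d' i := by
        intro s
        rw [Finset.mul_sum, ← Finset.sum_add_distrib]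
        exact Finset.sum_congr rfl fun i _ => by ring
      by_cases hb : bind j
      · have hD := hvd ⟨j, hb⟩
        filter_upwards [self_mem_nhdsWithin] with s hs
        rw [hexp s]
        have h1 : s * ∑ i, A j i * d' i ≤ 0 :=
          mul_nonpos_of_nonneg_of_nonpos (le_of_lt hs) hD
        have hSb : (∑ i, A j i * L i) = C j := hb
        linarith
      · have hSlt : (∑ i, A j i * L i) < C j := lt_of_le_of_ne (hfeas j) hb
        have hopen : IsOpen {s : ℝ | (∑ i, A j i * L i) + s * (∑ i, A j i * d' i) < C j} := by
          apply isOpen_lt _ continuous_const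
          exact continuous_const.add (continuous_id.mul continuous_const)
        have h0 : (0:ℝ) ∈ {s : ℝ | (∑ i, A j i * L i) + s * (∑ i, A j i * d' i) < C j} := by
          simp only [mem_setOf_eq, zero_mul, add_zero]
          exact hSlt
        refine Filter.eventually_of_mem (nhdsWithin_le_nhds (hopen.mem_nhds h0))
          (fun s hs => ?_)
        rw [hexp s]
        exact le_of_lt hs
    have hev3 : ∀ᶠ s in F,
        (∑ i, if 0 < n i then (κ i * n i ^ α * (L i + s * d' i) ^ (-α)) * d' i else 0) ≤ 0 := by
      filter_upwards [hev1, hev2, self_mem_nhdsWithin] with s h1 h2 hs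
      have hfe : (fun i => L i + s * d' i) ∈ Feasible A C n := by
        refine ⟨fun i => ?_, fun i hi => ?_, h2⟩
        · show 0 ≤ L i + s * d' i
          by_cases hi : 0 < n i
          · exact (h1 i hi).le
          · have hd0 : d' i = 0 := by rw [hd'def]; dsimp only; rw [if_neg hi]
            rw [hd0, mul_zero, add_zero]
            exact hLnn i
        · show L i + s * d' i = 0
          have hd0 : d' i = 0 := by
            rw [hd'def]; dsimp only
            rw [if_neg (by rw [hi]; exact lt_irrefl 0)]
          rw [hd0, mul_zero, add_zero]
          exact hL0 i hi
      have hcmp := hopt _ hfe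
      have hnbL : ¬(1 ≤ α ∧ ∃ i, 0 < n i ∧ L i = 0) := by
        rintro ⟨-, i, hi, h0⟩; exact (hpos i hi).ne' h0
      have hnbLs : ¬(1 ≤ α ∧ ∃ i, 0 < n i ∧ L i + s * d' i = 0) := by
        rintro ⟨-, i, hi, h0⟩; exact (h1 i hi).ne' h0
      rw [Gfun_eq_sum α κ n _ hnbLs, Gfun_eq_sum α κ n L hnbL, EReal.coe_le_coe_iff] at hcmp
      have step : ∀ i, (if 0 < n i then κ i * n i ^ α * fval α (L i) else 0)
          + s * (if 0 < n i then (κ i * n i ^ α * (L i + s * d' i) ^ (-α)) * d' i else 0)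
          ≤ (if 0 < n i then κ i * n i ^ α * fval α (L i + s * d' i) else 0) := by
        intro i
        by_cases hi : 0 < n i
        · rw [if_pos hi, if_pos hi, if_pos hi]
          have hgi := grad_ineq hα (h1 i hi) (hLnn i) (fun _ => hpos i hi)
          have hci : 0 ≤ κ i * n i ^ α := mul_nonneg (hκ i).le (Real.rpow_nonneg (hn i) _)
          have hm := mul_le_mul_of_nonneg_left hgi hci
          rw [mul_add] at hm
          have e : κ i * n i ^ α * ((L i + s * d' i) ^ (-α) * (L i - (L i + s * d' i)))
              = -(s * ((κ i * n i ^ α * (L i + s * d' i) ^ (-α)) * d' i)) := by ring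
          rw [e] at hm
          linarith
        · rw [if_neg hi, if_neg hi, if_neg hi]; norm_num
      have hsum := Finset.sum_le_sum fun i (_ : i ∈ Finset.univ) => step i
      rw [Finset.sum_add_distrib, ← Finset.mul_sum] at hsum
      by_contra hX
      push_neg at hX
      have := mul_pos hs hX
      linarith
    have htend : Filter.Tendsto
        (fun s => (∑ i, if 0 < n i then (κ i * n i ^ α * (L i + s * d' i) ^ (-α)) * d' i else 0))
        F (nhds (∑ i, g i * d' i)) := by
      apply tendsto_finset_sum
      intro i _
      by_cases hi : 0 < n i
      · have hg : g i * d' i = κ i * n i ^ α * L i ^ (-α) * d' i := by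
          rw [hgdef]; dsimp only; rw [if_pos hi]
        rw [hg]
        simp only [if_pos hi]
        have T1 : Filter.Tendsto (fun s : ℝ => L i + s * d' i) (nhds 0) (nhds (L i)) := by
          have hcont : Continuous (fun s : ℝ => L i + s * d' i) :=
            continuous_const.add (continuous_id.mul continuous_const)
          have := hcont.tendsto 0
          simpa using this
        have T2 : ContinuousAt (fun x : ℝ => x ^ (-α)) (L i) :=
          Real.continuousAt_rpow_const _ _ (Or.inl (hpos i hi).ne')
        have T3 : Filter.Tendsto (fun s : ℝ => (L i + s * d' i) ^ (-α)) (nhds 0)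
            (nhds (L i ^ (-α))) := T2.tendsto.comp T1
        have T4 := (T3.const_mul (κ i * n i ^ α)).mul_const (d' i)
        exact T4.mono_left nhdsWithin_le_nhds
      · simp only [if_neg hi]
        have hg : g i * d' i = 0 := by
          rw [hgdef]; dsimp only; rw [if_neg hi, zero_mul]
        rw [hg]
        exact tendsto_const_nhds
    have hlim := le_of_tendsto htend hev3
    linarith
  obtain ⟨y, hy, hgy⟩ := claim
  set p : Fin J → ℝ := fun j => if h : bind j then y ⟨j, h⟩ else 0 with hpdef
  have hpnn : ∀ j, 0 ≤ p j := by
    intro j; rw [hpdef]; dsimp only; split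
    · exact hy _
    · exact le_rfl
  have hq : ∀ i, 0 < n i → (∑ j, p j * A j i) = g i := by
    intro i hi
    have e1 : (∑ j, p j * A j i) = ∑ j ∈ Finset.univ.filter bind, p j * A j i := by
      symm
      apply Finset.sum_subset (Finset.filter_subset _ _)
      intro j _ hj
      have hb : ¬ bind j := by simpa using hj
      rw [hpdef]; dsimp only; rw [dif_neg hb, zero_mul]
    have e2 : (∑ j ∈ Finset.univ.filter bind, p j * A j i)
        = ∑ k : {j // bind j}, p k.1 * A k.1 i := by
      apply Finset.sum_subtype
      intro j; simp
    have e3 : (∑ k : {j // bind j}, p k.1 * A k.1 i) = ∑ k : {j // bind j}, y k * v k i := by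
      refine Finset.sum_congr rfl fun k _ => ?_
      rw [hpdef, hvdef]; dsimp only
      rw [dif_pos k.2, if_pos hi, Subtype.coe_eta]
    rw [e1, e2, e3, ← hgy i]
  refine ⟨p, hpnn, ?_, ?_, ?_, hfeas⟩
  · intro j
    rw [hpdef]; dsimp only
    by_cases hb : bind j
    · rw [dif_pos hb, show (∑ i, A j i * L i) = C j from hb, sub_self, mul_zero]
    · rw [dif_neg hb, zero_mul]
  · intro i hi
    rw [hq i hi, hgdef]; dsimp only
    rw [if_pos hi]
    exact mul_pos (mul_pos (hκ i) (Real.rpow_pos_of_pos hi _))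
      (Real.rpow_pos_of_pos (hpos i hi) _)
  · intro i hi
    rw [hq i hi]
    have hgi : g i = κ i * n i ^ α * L i ^ (-α) := by
      rw [hgdef]; dsimp only; rw [if_pos hi]
    have hgpos : 0 < g i := by
      rw [hgi]
      exact mul_pos (mul_pos (hκ i) (Real.rpow_pos_of_pos hi _))
        (Real.rpow_pos_of_pos (hpos i hi) _)
    exact rpow_solve hα hi (hκ i) hgpos (hpos i hi) hgi.symm

theorem stmt3 {I J : ℕ} (hI : 0 < I) (hJ : 0 < J)
    (A : Fin J → Fin I → ℝ) (hA01 : ∀ j i, A j i = 0 ∨ A j i = 1)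
    (hAcol : ∀ i, ∃ j, A j i = 1) (hArank : LinearIndependent ℝ A)
    (C : Fin J → ℝ) (hC : ∀ j, 0 < C j)
    (α : ℝ) (hα : 0 < α) (κ : Fin I → ℝ) (hκ : ∀ i, 0 < κ i)
    (n : Fin I → ℝ) (hn : ∀ i, 0 ≤ n i) (hne : n ≠ 0)
    (L : Fin I → ℝ) (hL0 : ∀ i, n i = 0 → L i = 0) :
    IsAlloc A C α κ n L ↔
      ∃ p : Fin J → ℝ, (∀ j, 0 ≤ p j) ∧
        (∀ j, p j * (C j - ∑ i, A j i * L i) = 0) ∧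
        (∀ i, 0 < n i → 0 < ∑ j, p j * A j i) ∧
        (∀ i, 0 < n i → L i = n i * (κ i / ∑ j, p j * A j i) ^ (1 / α)) ∧
        ∀ j, (∑ i, A j i * L i) ≤ C j := by
  constructor
  · intro hal
    exact forward hI hJ A hA01 C hC hα κ n L hκ hn hal
  · rintro ⟨p, hp, hcs, hqpos, hLf, hfeas⟩
    exact backward A C hα κ n L hκ hn hL0 p hp hcs hqpos hLf hfeas
end
end

section
/- The set of invariant states M_α equals {n ∈ ℝ₊^I : Λ_i(n) = ρ_i for all i ∈ I₊(n)}. -/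
open Real Set

noncomputable section

theorem stmt5 {I J : ℕ} (hI : 0 < I) (hJ : 0 < J)
    (A : Fin J → Fin I → ℝ) (hA01 : ∀ j i, A j i = 0 ∨ A j i = 1)
    (hAcol : ∀ i, ∃ j, A j i = 1) (hArank : LinearIndependent ℝ A)
    (C : Fin J → ℝ) (hC : ∀ j, 0 < C j)
    (α : ℝ) (hα : 0 < α) (κ : Fin I → ℝ) (hκ : ∀ i, 0 < κ i)
    (ν μ : Fin I → ℝ) (hν : ∀ i, 0 < ν i) (hμ : ∀ i, 0 < μ i)
    (hload : ∀ j, (∑ i, A j i * (ν i / μ i)) ≤ C j)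
    (hJs : (Jstar A C ν μ).Nonempty)
    (Λ : (Fin I → ℝ) → Fin I → ℝ)
    (hΛ : ∀ n : Fin I → ℝ, (∀ i, 0 ≤ n i) → IsAlloc A C α κ n (Λ n)) :
    {n₀ : Fin I → ℝ | (∀ i, 0 ≤ n₀ i) ∧ IsFluidSol A C ν μ Λ fun _ => n₀} =
      {n : Fin I → ℝ | (∀ i, 0 ≤ n i) ∧ ∀ i, 0 < n i → Λ n i = ν i / μ i} := by
  ext n
  simp only [Set.mem_setOf_eq]
  constructor
  · rintro ⟨hn, -, -, hfl⟩
    refine ⟨hn, fun i hi => ?_⟩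
    obtain ⟨hder, -⟩ := hfl 0 (Set.mem_Ici.mpr le_rfl)
      (fun i => differentiableWithinAt_const _)
    have h1 := (hder i).1 hi
    have h2 : HasDerivWithinAt (fun _ : ℝ => n i) 0 (Set.Ici 0) 0 :=
      hasDerivWithinAt_const _ _ _
    have hu : UniqueDiffWithinAt ℝ (Set.Ici (0:ℝ)) 0 :=
      uniqueDiffOn_Ici 0 0 (Set.mem_Ici.mpr le_rfl)
    have h3 := h1.derivWithin hu
    rw [h2.derivWithin hu] at h3
    have hμi := (hμ i).ne'
    rw [eq_div_iff hμi]
    nlinarith [h3]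
  · rintro ⟨hn, hΛn⟩
    refine ⟨hn, ⟨fun i T hT ε hε => ⟨1, one_pos, fun m a b _ _ _ => by simpa using hε⟩,
      fun t _ i => hn i, fun t ht _ => ⟨fun i => ⟨fun hi => ?_, fun _ => hasDerivWithinAt_const _ _ _⟩, fun j => ?_⟩⟩⟩
    · have h0 : ν i - μ i * Λ n i = 0 := by
        rw [hΛn i hi]; field_simp [(hμ i).ne']; ring
      rw [h0]; exact hasDerivWithinAt_const _ _ _
    · have : (∑ i, A j i * (if 0 < n i then Λ n i else ν i / μ i))
          = ∑ i, A j i * (ν i / μ i) := by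
        refine Finset.sum_congr rfl fun i _ => ?_
        by_cases hi : 0 < n i
        · rw [if_pos hi, hΛn i hi]
        · rw [if_neg hi]
      rw [this]; exact hload j
end
end

section
/- A state n ∈ ℝ₊^I is an invariant state if and only if there exists q ∈ ℝ₊^{J*} such that n_i = ρ_i ((Σ_{j∈J*} q_j A_{ji}) / κ_i)^{1/α} for all routes i. -/
open Real Set

noncomputable section

private def dotp {m : ℕ} (x y : Fin m → ℝ) : ℝ := ∑ i, x i * y i

private lemma dotp_sub_smul {m : ℕ} (x y z : Fin m → ℝ) (c : ℝ) :
    dotp x (fun i => y i - c * z i) = dotp x y - c * dotp x z := by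
  simp only [dotp, mul_sub, Finset.sum_sub_distrib, Finset.mul_sum]
  congr 1
  exact Finset.sum_congr rfl fun i _ => by ring

private lemma dotp_sub_smul_left {m : ℕ} (x y z : Fin m → ℝ) (c : ℝ) :
    dotp (fun i => x i - c * y i) z = dotp x z - c * dotp y z := by
  simp only [dotp, sub_mul, Finset.sum_sub_distrib, Finset.mul_sum]
  congr 1
  exact Finset.sum_congr rfl fun i _ => by ring

lemma farkas_aux : ∀ (k : ℕ) {m : ℕ} (a : Fin k → (Fin m → ℝ)) (g : Fin m → ℝ),
    (∀ d : Fin m → ℝ, (∀ j, dotp (a j) d ≤ 0) → dotp g d ≤ 0) →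
    ∃ q : Fin k → ℝ, (∀ j, 0 ≤ q j) ∧ ∀ i, g i = ∑ j, q j * a j i := by
  intro k
  induction k with
  | zero =>
      intro m a g h
      refine ⟨fun _ => 0, fun j => le_rfl, fun i => ?_⟩
      have h0 := h g (fun j => j.elim0)
      have hz : ∀ i ∈ Finset.univ (α := Fin m), g i * g i = 0 := by
        rw [← Finset.sum_eq_zero_iff_of_nonneg (fun i _ => mul_self_nonneg (g i))]
        exact le_antisymm h0 (Finset.sum_nonneg fun i _ => mul_self_nonneg (g i))
      have h1 := hz i (Finset.mem_univ i)
      have : g i = 0 := by nlinarith [h1]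
      simp [this]
  | succ k IH =>
      intro m a g h
      by_cases hcase : ∀ d : Fin m → ℝ,
          (∀ j : Fin k, dotp (a j.castSucc) d ≤ 0) → dotp g d ≤ 0
      · obtain ⟨q, hq0, hq⟩ := IH (fun j => a j.castSucc) g hcase
        refine ⟨Fin.snoc q 0, ?_, fun i => ?_⟩
        · intro j
          refine Fin.lastCases ?_ (fun j => ?_) j
          · simp
          · simp only [Fin.snoc_castSucc]; exact hq0 j
        · rw [Fin.sum_univ_castSucc]
          simp [Fin.snoc_castSucc, Fin.snoc_last, hq i]
      · push_neg at hcase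
        obtain ⟨d₀, hd₀, hgd₀⟩ := hcase
        set w : ℝ := dotp (a (Fin.last k)) d₀ with hw
        have hwpos : 0 < w := by
          by_contra hwle
          push_neg at hwle
          have := h d₀ (fun j => Fin.lastCases hwle hd₀ j)
          linarith
        set γ : ℝ := dotp g d₀ with hγ
        set b : Fin k → ℝ := fun j => dotp (a j.castSucc) d₀ with hb
        set a' : Fin k → Fin m → ℝ :=
          fun j i => a j.castSucc i - (b j / w) * a (Fin.last k) i with ha'
        set g' : Fin m → ℝ := fun i => g i - (γ / w) * a (Fin.last k) i with hg'
        have key : ∀ d : Fin m → ℝ, (∀ j : Fin k, dotp (a' j) d ≤ 0) →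
            dotp g' d ≤ 0 := by
          intro d hd
          set s : ℝ := dotp (a (Fin.last k)) d with hs
          set d' : Fin m → ℝ := fun i => d i - (s / w) * d₀ i with hd'
          have hlast : dotp (a (Fin.last k)) d' = 0 := by
            rw [hd', dotp_sub_smul, ← hs, ← hw]
            field_simp
            ring
          have hcs : ∀ j : Fin k, dotp (a j.castSucc) d' ≤ 0 := by
            intro j
            have h2 : dotp (a' j) d
                = dotp (a j.castSucc) d - (b j / w) * s := by
              have h2' : dotp (fun i => a j.castSucc i - b j / w * a (Fin.last k) i) d
                  = dotp (a j.castSucc) d - (b j / w) * dotp (a (Fin.last k)) d :=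
                dotp_sub_smul_left _ _ _ _
              exact h2'
            have hbj : dotp (a j.castSucc) d₀ = b j := rfl
            have h1 : dotp (a j.castSucc) d' = dotp (a' j) d := by
              rw [hd', dotp_sub_smul, h2, hbj]
              ring
            rw [h1]; exact hd j
          have hgd' : dotp g d' ≤ 0 :=
            h d' (fun j => Fin.lastCases (le_of_eq hlast) hcs j)
          have h3 : dotp g' d = dotp g d' := by
            rw [hg', hd', dotp_sub_smul, dotp_sub_smul_left, ← hγ, ← hs]
            ring
          rw [h3]; exact hgd'
        obtain ⟨q', hq'0, hq'⟩ := IH a' g' key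
        set μc : ℝ := (γ - ∑ j, q' j * b j) / w with hμc
        have hμc0 : 0 ≤ μc := by
          apply div_nonneg _ hwpos.le
          have : ∑ j, q' j * b j ≤ 0 :=
            Finset.sum_nonpos fun j _ => mul_nonpos_of_nonneg_of_nonpos (hq'0 j) (hd₀ j)
          linarith
        refine ⟨Fin.snoc q' μc, ?_, fun i => ?_⟩
        · intro j
          refine Fin.lastCases ?_ (fun j => ?_) j
          · simpa using hμc0
          · simp only [Fin.snoc_castSucc]; exact hq'0 j
        · rw [Fin.sum_univ_castSucc]
          simp only [Fin.snoc_castSucc, Fin.snoc_last]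
          have h4 : g i = g' i + (γ / w) * a (Fin.last k) i := by rw [hg']; ring
          rw [h4, hq' i]
          have h5 : ∀ j : Fin k, q' j * a' j i
              = q' j * a j.castSucc i - (q' j * b j / w) * a (Fin.last k) i := by
            intro j; rw [ha']; ring
          rw [Finset.sum_congr rfl fun j _ => h5 j, Finset.sum_sub_distrib]
          have h6 : ∑ j, (q' j * b j / w) * a (Fin.last k) i
              = (∑ j, q' j * b j) / w * a (Fin.last k) i := by
            rw [← Finset.sum_mul, ← Finset.sum_div]
          rw [h6, hμc]
          ring


private noncomputable def psi (α x : ℝ) : ℝ := if α = 1 then Real.log x else x ^ (1 - α) / (1 - α)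

private lemma log_tangent {s t : ℝ} (hs : 0 < s) (ht : 0 < t) (hne : t ≠ s) :
    Real.log t < Real.log s + (t - s) / s := by
  have hts : t / s ≠ 1 := by
    intro h; apply hne; field_simp at h; exact h
  have h := Real.log_lt_sub_one_of_pos (div_pos ht hs) hts
  rw [Real.log_div ht.ne' hs.ne'] at h
  have h2 : t / s - 1 = (t - s) / s := by field_simp
  linarith

private lemma amgm_lt {β x : ℝ} (hβ0 : 0 < β) (hβ1 : β < 1) (hx : 0 < x) (hx1 : x ≠ 1) :
    x ^ β < 1 + β * (x - 1) := by
  set u : ℝ := 1 + β * (x - 1) with hu_def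
  have hu : 0 < u := by rw [hu_def]; nlinarith
  have hxu : x ≠ u := by
    rw [hu_def]; intro hc
    have : (1 - β) * (x - 1) = 0 := by linarith
    rcases mul_eq_zero.1 this with h | h
    · linarith
    · exact hx1 (by linarith)
  have h1u : (1:ℝ) ≠ u := by
    rw [hu_def]; intro hc
    have : β * (x - 1) = 0 := by linarith
    rcases mul_eq_zero.1 this with h | h
    · linarith
    · exact hx1 (by linarith)
  have h1 : Real.log x < Real.log u + (x - u) / u := log_tangent hu hx hxu
  have h2 : (0:ℝ) < Real.log u + (1 - u) / u := by
    have := log_tangent hu one_pos h1u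
    simpa using this
  have hA : β * ((x - u) / u) + (1 - β) * ((1 - u) / u) = 0 := by
    field_simp
    rw [hu_def]; ring
  have h3 : β * Real.log x < Real.log u := by
    have e1 := mul_lt_mul_of_pos_left h1 hβ0
    have e2 := mul_lt_mul_of_pos_left h2 (by linarith : (0:ℝ) < 1 - β)
    nlinarith [e1, e2, hA]
  have h4 : x ^ β = Real.exp (Real.log x * β) := Real.rpow_def_of_pos hx β
  calc x ^ β = Real.exp (Real.log x * β) := h4
    _ < Real.exp (Real.log u) := Real.exp_lt_exp.2 (by linarith [mul_comm (Real.log x) β])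
    _ = u := Real.exp_log hu

private lemma bern_gt {β x : ℝ} (hβ : β < 0) (hx : 0 < x) (hx1 : x ≠ 1) :
    1 + β * (x - 1) < x ^ β := by
  have hlog : Real.log x ≠ 0 := by
    intro h
    rcases Real.log_eq_zero.1 h with h' | h' | h' <;> [linarith; exact hx1 h'; linarith]
  have h1 : Real.log x ≤ x - 1 := Real.log_le_sub_one_of_pos hx
  have h2 : β * Real.log x + 1 < Real.exp (β * Real.log x) :=
    Real.add_one_lt_exp (mul_ne_zero (ne_of_lt hβ) hlog)
  have h4 : β * (x - 1) ≤ β * Real.log x := by nlinarith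
  have h3 : x ^ β = Real.exp (Real.log x * β) := Real.rpow_def_of_pos hx β
  rw [h3, mul_comm (Real.log x) β]
  linarith

/-- Strict tangent-line inequality for `psi`. -/
private lemma psi_tangent_lt {α s t : ℝ} (hα : 0 < α) (hs : 0 < s) (ht : 0 ≤ t)
    (ht1 : 1 ≤ α → 0 < t) (hne : t ≠ s) :
    psi α t < psi α s + s ^ (-α) * (t - s) := by
  rcases lt_trichotomy α 1 with hlt | heq | hgt
  · -- 0 < α < 1
    have hβ0 : 0 < 1 - α := by linarith
    have hα1 : α ≠ 1 := ne_of_lt hlt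
    simp only [psi, if_neg hα1]
    have hsb : 0 < s ^ (1 - α) := Real.rpow_pos_of_pos hs _
    have hkey : s ^ (-α) * s = s ^ (1 - α) := by
      rw [show s ^ (-α) * s = s ^ (-α) * s ^ (1:ℝ) by rw [Real.rpow_one],
        ← Real.rpow_add hs]
      rw [show -α + 1 = 1 - α by ring]
    rcases eq_or_lt_of_le ht with h0 | htpos
    · -- t = 0
      rw [← h0, Real.zero_rpow (by linarith : (1:ℝ) - α ≠ 0)]
      have : s ^ (-α) * (0 - s) = -(s ^ (1 - α)) := by
        rw [zero_sub, mul_neg, hkey]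
      rw [this]
      rw [zero_div]
      have h5 : s ^ (1 - α) / (1 - α) = s ^ (1 - α) * (1 / (1 - α)) := by ring
      have h6 : 1 < 1 / (1 - α) := by
        rw [lt_div_iff₀ hβ0]; nlinarith
      nlinarith
    · -- t > 0
      have hx : 0 < t / s := div_pos htpos hs
      have hx1 : t / s ≠ 1 := by intro h; apply hne; field_simp at h; exact h
      have hcore := amgm_lt hβ0 (by linarith) hx hx1
      have hdiv : (t / s) ^ (1 - α) = t ^ (1 - α) / s ^ (1 - α) :=
        Real.div_rpow ht hs.le _
      have hmul := mul_lt_mul_of_pos_left hcore hsb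
      rw [hdiv] at hmul
      have e1 : s ^ (1 - α) * (t ^ (1 - α) / s ^ (1 - α)) = t ^ (1 - α) := by
        field_simp
      have e2 : s ^ (1 - α) * (1 + (1 - α) * (t / s - 1))
          = s ^ (1 - α) + (1 - α) * (s ^ (-α) * (t - s)) := by
        have e3 : s ^ (1 - α) * (t / s) = s ^ (-α) * t := by
          rw [← hkey]; field_simp
        have e4 : s ^ (1 - α) * (1 + (1 - α) * (t / s - 1))
            = s ^ (1-α) + (1-α) * (s ^ (1-α) * (t/s)) - (1-α) * s ^ (1-α) := by ring
        rw [e4, e3, ← hkey]; ring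
      rw [e1, e2] at hmul
      have hfin : s ^ (1 - α) / (1 - α) + s ^ (-α) * (t - s)
          = (s ^ (1 - α) + (1 - α) * (s ^ (-α) * (t - s))) / (1 - α) := by
        field_simp
      rw [hfin, div_lt_div_iff_of_pos_right hβ0]
      exact hmul
  · -- α = 1
    subst heq
    have htpos : 0 < t := ht1 le_rfl
    simp only [psi, if_true, eq_self_iff_true, ite_true]
    have : s ^ (-(1:ℝ)) = 1 / s := by
      rw [Real.rpow_neg_one]; exact (one_div s).symm
    rw [this]
    have := log_tangent hs htpos hne
    have e : 1 / s * (t - s) = (t - s) / s := by ring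
    linarith [e ▸ this]
  · -- α > 1
    have htpos : 0 < t := ht1 hgt.le
    have hβ : 1 - α < 0 := by linarith
    have hα1 : α ≠ 1 := ne_of_gt hgt
    simp only [psi, if_neg hα1]
    have hx : 0 < t / s := div_pos htpos hs
    have hx1 : t / s ≠ 1 := by intro h; apply hne; field_simp at h; exact h
    have hcore := bern_gt hβ hx hx1
    have hsb : 0 < s ^ (1 - α) := Real.rpow_pos_of_pos hs _
    have hkey : s ^ (-α) * s = s ^ (1 - α) := by
      rw [show s ^ (-α) * s = s ^ (-α) * s ^ (1:ℝ) by rw [Real.rpow_one],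
        ← Real.rpow_add hs]
      rw [show -α + 1 = 1 - α by ring]
    have hmul := mul_lt_mul_of_pos_left hcore hsb
    have hdiv : (t / s) ^ (1 - α) = t ^ (1 - α) / s ^ (1 - α) :=
      Real.div_rpow ht hs.le _
    rw [hdiv] at hmul
    have e1 : s ^ (1 - α) * (t ^ (1 - α) / s ^ (1 - α)) = t ^ (1 - α) := by
      field_simp
    have e2 : s ^ (1 - α) * (1 + (1 - α) * (t / s - 1))
        = s ^ (1 - α) + (1 - α) * (s ^ (-α) * (t - s)) := by
      have e3 : s ^ (1 - α) * (t / s) = s ^ (-α) * t := by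
        rw [← hkey]; field_simp
      have e4 : s ^ (1 - α) * (1 + (1 - α) * (t / s - 1))
          = s ^ (1-α) + (1-α) * (s ^ (1-α) * (t/s)) - (1-α) * s ^ (1-α) := by ring
      rw [e4, e3, ← hkey]; ring
    rw [e1, e2] at hmul
    -- hmul : s^(1-α) + (1-α)*(s^(-α)*(t-s)) < t^(1-α), and 1-α < 0
    have hnum : 0 < t ^ (1 - α) - (s ^ (1 - α) + (1 - α) * (s ^ (-α) * (t - s))) := by
      linarith
    have hq : (t ^ (1 - α) - (s ^ (1 - α) + (1 - α) * (s ^ (-α) * (t - s)))) / (1 - α) < 0 :=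
      div_neg_of_pos_of_neg hnum hβ
    have hβne : (1:ℝ) - α ≠ 0 := ne_of_lt hβ
    have hsplit : (t ^ (1 - α) - (s ^ (1 - α) + (1 - α) * (s ^ (-α) * (t - s)))) / (1 - α)
        = t ^ (1 - α) / (1 - α) - s ^ (1 - α) / (1 - α) - s ^ (-α) * (t - s) := by
      field_simp
      ring
    rw [hsplit] at hq
    linarith

private lemma psi_tangent_le {α s t : ℝ} (hα : 0 < α) (hs : 0 < s) (ht : 0 ≤ t)
    (ht1 : 1 ≤ α → 0 < t) :
    psi α t ≤ psi α s + s ^ (-α) * (t - s) := by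
  rcases eq_or_ne t s with rfl | hne
  · simp only [sub_self, mul_zero, add_zero, le_refl]
  · exact (psi_tangent_lt hα hs ht ht1 hne).le

private lemma Gfun_eq {I : ℕ} (α : ℝ) (κ n L : Fin I → ℝ)
    (h : ¬(1 ≤ α ∧ ∃ i, 0 < n i ∧ L i = 0)) :
    Gfun α κ n L = ((∑ i, if 0 < n i then κ i * n i ^ α * psi α (L i) else 0 : ℝ) : EReal) := by
  rw [Gfun, if_neg h]
  by_cases hα1 : α = 1
  · subst hα1
    rw [if_pos rfl]
    congr 1
    refine Finset.sum_congr rfl fun i _ => ?_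
    by_cases hni : 0 < n i
    · rw [if_pos hni, if_pos hni, psi, if_pos rfl, Real.rpow_one]
    · rw [if_neg hni, if_neg hni]
  · rw [if_neg hα1]
    congr 1
    refine Finset.sum_congr rfl fun i _ => ?_
    by_cases hni : 0 < n i
    · rw [if_pos hni, if_pos hni, psi, if_neg hα1, mul_div_assoc]
    · rw [if_neg hni, if_neg hni]

private lemma Lrho_feasible {I J : ℕ} (A : Fin J → Fin I → ℝ)
    (hA01 : ∀ j i, A j i = 0 ∨ A j i = 1) (C : Fin J → ℝ)
    (ν μ : Fin I → ℝ) (hν : ∀ i, 0 < ν i) (hμ : ∀ i, 0 < μ i)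
    (hload : ∀ j, (∑ i, A j i * (ν i / μ i)) ≤ C j) (n : Fin I → ℝ) :
    (fun i => if 0 < n i then ν i / μ i else 0) ∈ Feasible A C n := by
  refine ⟨fun i => ?_, fun i hi => ?_, fun j => ?_⟩
  · show 0 ≤ if 0 < n i then ν i / μ i else 0
    by_cases hni : 0 < n i
    · rw [if_pos hni]; exact div_nonneg (hν i).le (hμ i).le
    · rw [if_neg hni]
  · show (if 0 < n i then ν i / μ i else 0) = 0
    simp only [hi, lt_irrefl, if_false]
  · show ∑ i, A j i * (if 0 < n i then ν i / μ i else 0) ≤ C j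
    refine le_trans (Finset.sum_le_sum fun i _ => ?_) (hload j)
    have hA : 0 ≤ A j i := by rcases hA01 j i with h | h <;> rw [h] <;> norm_num
    refine mul_le_mul_of_nonneg_left ?_ hA
    by_cases hni : 0 < n i
    · rw [if_pos hni]
    · rw [if_neg hni]; exact div_nonneg (hν i).le (hμ i).le

private lemma sum_swap_q {I J : ℕ} (A : Fin J → Fin I → ℝ) (q : Fin J → ℝ) (L : Fin I → ℝ) :
    (∑ i, (∑ j, q j * A j i) * L i) = ∑ j, q j * (∑ i, A j i * L i) := by
  have h1 : ∀ i, (∑ j, q j * A j i) * L i = ∑ j, q j * (A j i * L i) := by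
    intro i
    rw [Finset.sum_mul]
    exact Finset.sum_congr rfl fun j _ => by ring
  rw [Finset.sum_congr rfl fun i _ => h1 i, Finset.sum_comm]
  exact Finset.sum_congr rfl fun j _ => by rw [Finset.mul_sum]


private lemma key_backward {I J : ℕ} (A : Fin J → Fin I → ℝ)
    (hA01 : ∀ j i, A j i = 0 ∨ A j i = 1) (C : Fin J → ℝ)
    (α : ℝ) (hα : 0 < α) (κ : Fin I → ℝ) (hκ : ∀ i, 0 < κ i)
    (ν μ : Fin I → ℝ) (hν : ∀ i, 0 < ν i) (hμ : ∀ i, 0 < μ i)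
    (hload : ∀ j, (∑ i, A j i * (ν i / μ i)) ≤ C j)
    (Λ : (Fin I → ℝ) → Fin I → ℝ)
    (hΛ : ∀ n : Fin I → ℝ, (∀ i, 0 ≤ n i) → IsAlloc A C α κ n (Λ n))
    (n : Fin I → ℝ) (hn : ∀ i, 0 ≤ n i)
    (q : Fin J → ℝ) (hq0 : ∀ j, 0 ≤ q j) (hqJ : ∀ j, j ∉ Jstar A C ν μ → q j = 0)
    (hnf : ∀ i, n i = (ν i / μ i) * ((∑ j, q j * A j i) / κ i) ^ (1 / α)) :
    ∀ i, 0 < n i → Λ n i = ν i / μ i := by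
  set ρ : Fin I → ℝ := fun i => ν i / μ i with hρ_def
  have hρ : ∀ i, 0 < ρ i := fun i => div_pos (hν i) (hμ i)
  set S : Fin I → ℝ := fun i => ∑ j, q j * A j i with hS_def
  have hnf' : ∀ i, n i = ρ i * (S i / κ i) ^ (1 / α) := fun i => hnf i
  have hS0 : ∀ i, 0 ≤ S i := fun i => Finset.sum_nonneg fun j _ =>
    mul_nonneg (hq0 j) (by rcases hA01 j i with h | h <;> rw [h] <;> norm_num)
  have hαne : α ≠ 0 := hα.ne'
  have hpos_iff : ∀ i, (0 < n i ↔ 0 < S i) := by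
    intro i
    constructor
    · intro hni
      rcases (hS0 i).lt_or_eq with h | h
      · exact h
      · exfalso
        rw [hnf' i, ← h, zero_div, Real.zero_rpow (by positivity), mul_zero] at hni
        exact lt_irrefl 0 hni
    · intro hSi
      rw [hnf' i]
      exact mul_pos (hρ i) (Real.rpow_pos_of_pos (div_pos hSi (hκ i)) _)
  have hSn : ∀ i, 0 < n i → κ i * n i ^ α * ρ i ^ (-α) = S i := by
    intro i hni
    have hSi : 0 < S i := (hpos_iff i).1 hni
    have hX : ((S i / κ i) ^ (1 / α)) ^ α = S i / κ i := by
      rw [← Real.rpow_mul (div_pos hSi (hκ i)).le, one_div, inv_mul_cancel₀ hαne,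
        Real.rpow_one]
    have hnα : n i ^ α = ρ i ^ α * (S i / κ i) := by
      rw [hnf' i, Real.mul_rpow (hρ i).le
        (Real.rpow_nonneg (div_nonneg hSi.le (hκ i).le) _), hX]
    have hρρ : ρ i ^ α * ρ i ^ (-α) = 1 := by
      rw [← Real.rpow_add (hρ i), add_neg_cancel, Real.rpow_zero]
    have hre : κ i * (ρ i ^ α * (S i / κ i)) * ρ i ^ (-α)
        = (ρ i ^ α * ρ i ^ (-α)) * (κ i * (S i / κ i)) := by ring
    rw [hnα, hre, hρρ, one_mul, mul_div_cancel₀ _ (hκ i).ne']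
  set Lρ : Fin I → ℝ := fun i => if 0 < n i then ρ i else 0 with hLρ_def
  have hfeasLρ : Lρ ∈ Feasible A C n := Lrho_feasible A hA01 C ν μ hν hμ hload n
  have hLρ_pos : ∀ i, 0 < n i → Lρ i = ρ i := fun i hni => if_pos hni
  have hLρ_zero : ∀ i, ¬0 < n i → Lρ i = 0 := fun i hni => if_neg hni
  have hbρ : ¬(1 ≤ α ∧ ∃ i, 0 < n i ∧ Lρ i = 0) := by
    rintro ⟨-, i, hni, hLi⟩
    rw [hLρ_pos i hni] at hLi
    exact (hρ i).ne' hLi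
  have hVI0 : ∀ L' ∈ Feasible A C n, (∑ i, S i * L' i) ≤ ∑ i, S i * Lρ i := by
    intro L' hL'
    have h1 : (∑ i, S i * L' i) = ∑ j, q j * (∑ i, A j i * L' i) := sum_swap_q A q L'
    have h2 : (∑ i, S i * Lρ i) = ∑ j, q j * (∑ i, A j i * Lρ i) := sum_swap_q A q Lρ
    rw [h1, h2]
    refine Finset.sum_le_sum fun j _ => ?_
    rcases (hq0 j).lt_or_eq with hqj | hqj
    · have hjJ : j ∈ Jstar A C ν μ := by
        by_contra hj
        exact absurd (hqJ j hj) (ne_of_gt hqj)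
      have hALρ : (∑ i, A j i * Lρ i) = ∑ i, A j i * ρ i := by
        refine Finset.sum_congr rfl fun i _ => ?_
        by_cases hni : 0 < n i
        · rw [hLρ_pos i hni]
        · have hSi : S i = 0 := le_antisymm (not_lt.1 ((hpos_iff i).not.1 hni)) (hS0 i)
          have hterm : ∀ j' ∈ Finset.univ (α := Fin J), q j' * A j' i = 0 := by
            rw [← Finset.sum_eq_zero_iff_of_nonneg (fun j' _ => mul_nonneg (hq0 j')
              (by rcases hA01 j' i with h | h <;> rw [h] <;> norm_num))]
            exact hSi
          have hAji : A j i = 0 := by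
            rcases mul_eq_zero.1 (hterm j (Finset.mem_univ j)) with h | h
            · exact absurd h hqj.ne'
            · exact h
          rw [hAji, zero_mul, zero_mul]
      have hCj : (∑ i, A j i * ρ i) = C j := hjJ
      rw [hALρ, hCj]
      exact mul_le_mul_of_nonneg_left (hL'.2.2 j) (hq0 j)
    · rw [← hqj, zero_mul, zero_mul]
  have hGopt : ∀ L', L' ∈ Feasible A C n → Gfun α κ n L' ≤ Gfun α κ n Lρ := by
    intro L' hL'
    by_cases hb : 1 ≤ α ∧ ∃ i, 0 < n i ∧ L' i = 0
    · rw [Gfun, if_pos hb]; exact bot_le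
    · rw [Gfun_eq α κ n L' hb, Gfun_eq α κ n Lρ hbρ, EReal.coe_le_coe_iff]
      push_neg at hb
      have hterm : ∀ i, (if 0 < n i then κ i * n i ^ α * psi α (L' i) else 0)
          ≤ (if 0 < n i then κ i * n i ^ α * psi α (Lρ i) else 0) + S i * (L' i - Lρ i) := by
        intro i
        by_cases hni : 0 < n i
        · rw [if_pos hni, if_pos hni, hLρ_pos i hni]
          have hw : 0 < κ i * n i ^ α := mul_pos (hκ i) (Real.rpow_pos_of_pos hni α)
          have ht1 : 1 ≤ α → 0 < L' i := fun h1 => (hL'.1 i).lt_of_ne (Ne.symm (hb h1 i hni))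
          have htan := psi_tangent_le hα (hρ i) (hL'.1 i) ht1
          have hmul := mul_le_mul_of_nonneg_left htan hw.le
          have hSn' := hSn i hni
          calc κ i * n i ^ α * psi α (L' i)
              ≤ κ i * n i ^ α * (psi α (ρ i) + ρ i ^ (-α) * (L' i - ρ i)) := hmul
            _ = κ i * n i ^ α * psi α (ρ i)
                + (κ i * n i ^ α * ρ i ^ (-α)) * (L' i - ρ i) := by ring
            _ = κ i * n i ^ α * psi α (ρ i) + S i * (L' i - ρ i) := by rw [hSn']
        · rw [if_neg hni, if_neg hni]
          have hL0 : L' i = 0 := hL'.2.1 i (le_antisymm (not_lt.1 hni) (hn i))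
          rw [hL0, hLρ_zero i hni]
          simp
      have hsum := Finset.sum_le_sum (fun i (_ : i ∈ Finset.univ) => hterm i)
      rw [Finset.sum_add_distrib] at hsum
      have hexp : (∑ i, S i * (L' i - Lρ i)) = (∑ i, S i * L' i) - ∑ i, S i * Lρ i := by
        rw [← Finset.sum_sub_distrib]
        exact Finset.sum_congr rfl fun i _ => by ring
      have hlin : (∑ i, S i * (L' i - Lρ i)) ≤ 0 := by
        rw [hexp]
        have := hVI0 L' hL'
        linarith
      linarith
  intro i0 hni0
  by_contra hneq
  obtain ⟨hfeasΛ, hoptΛ⟩ := hΛ n hn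
  have heq : Gfun α κ n (Λ n) = Gfun α κ n Lρ :=
    le_antisymm (hGopt (Λ n) hfeasΛ) (hoptΛ Lρ hfeasLρ)
  by_cases hbΛ : 1 ≤ α ∧ ∃ i, 0 < n i ∧ Λ n i = 0
  · rw [Gfun, if_pos hbΛ, Gfun_eq α κ n Lρ hbρ] at heq
    exact (EReal.coe_ne_bot _) heq.symm
  · rw [Gfun_eq α κ n (Λ n) hbΛ, Gfun_eq α κ n Lρ hbρ, EReal.coe_eq_coe_iff] at heq
    push_neg at hbΛ
    set M : Fin I → ℝ := fun i => (Λ n i + Lρ i) / 2 with hM_def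
    have hfeasM : M ∈ Feasible A C n := by
      refine ⟨fun i => ?_, fun i hi => ?_, fun j => ?_⟩
      · show 0 ≤ (Λ n i + Lρ i) / 2
        have h1 := hfeasΛ.1 i
        have h2 := hfeasLρ.1 i
        linarith
      · show (Λ n i + Lρ i) / 2 = 0
        rw [hfeasΛ.2.1 i hi, hfeasLρ.2.1 i hi]
        norm_num
      · show (∑ i, A j i * ((Λ n i + Lρ i) / 2)) ≤ C j
        have hexp : (∑ i, A j i * ((Λ n i + Lρ i) / 2))
            = ((∑ i, A j i * Λ n i) + ∑ i, A j i * Lρ i) / 2 := by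
          rw [Finset.sum_congr rfl fun i (_ : i ∈ Finset.univ) =>
            (by ring : A j i * ((Λ n i + Lρ i) / 2) = (A j i * Λ n i + A j i * Lρ i) / 2),
            ← Finset.sum_div, Finset.sum_add_distrib]
        rw [hexp]
        have h1 := hfeasΛ.2.2 j
        have h2 := hfeasLρ.2.2 j
        linarith
    have hbM : ¬(1 ≤ α ∧ ∃ i, 0 < n i ∧ M i = 0) := by
      rintro ⟨-, i, hni, hMi⟩
      have h1 : 0 ≤ Λ n i := hfeasΛ.1 i
      have h2 : (Λ n i + Lρ i) / 2 = 0 := hMi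
      rw [hLρ_pos i hni] at h2
      have := hρ i
      linarith
    have hmid : ∀ i, 0 < n i → Λ n i ≠ ρ i →
        ((κ i * n i ^ α * psi α (Λ n i)) + (κ i * n i ^ α * psi α (Lρ i))) / 2
          < κ i * n i ^ α * psi α (M i) := by
      intro i hni hne
      have hw : 0 < κ i * n i ^ α := mul_pos (hκ i) (Real.rpow_pos_of_pos hni α)
      have hMi : M i = (Λ n i + ρ i) / 2 := by
        show (Λ n i + Lρ i) / 2 = _
        rw [hLρ_pos i hni]
      have hmpos : 0 < M i := by
        rw [hMi]
        have := hfeasΛ.1 i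
        have := hρ i
        linarith
      have hsm : Λ n i ≠ M i := by
        rw [hMi]; intro h; apply hne; linarith [h]
      have htm : ρ i ≠ M i := by
        rw [hMi]; intro h; apply hne; linarith [h]
      have ht1 : 1 ≤ α → 0 < Λ n i := fun h1 => (hfeasΛ.1 i).lt_of_ne (Ne.symm (hbΛ h1 i hni))
      have h1 := psi_tangent_lt hα hmpos (hfeasΛ.1 i) ht1 hsm
      have h2 := psi_tangent_lt hα hmpos (hρ i).le (fun _ => hρ i) htm
      have hcancel : M i ^ (-α) * (Λ n i - M i) + M i ^ (-α) * (ρ i - M i) = 0 := by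
        rw [hMi]; ring
      have hψ : psi α (Λ n i) + psi α (ρ i) < 2 * psi α (M i) := by linarith
      rw [hLρ_pos i hni]
      nlinarith [mul_lt_mul_of_pos_left hψ hw]
    have hhalf : ∀ i, ((if 0 < n i then κ i * n i ^ α * psi α (Λ n i) else 0)
          + (if 0 < n i then κ i * n i ^ α * psi α (Lρ i) else 0)) / 2
        ≤ (if 0 < n i then κ i * n i ^ α * psi α (M i) else 0) := by
      intro i
      by_cases hni : 0 < n i
      · rw [if_pos hni, if_pos hni, if_pos hni]
        by_cases hne : Λ n i = ρ i
        · have hMi : M i = Λ n i := by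
            show (Λ n i + Lρ i) / 2 = Λ n i
            rw [hLρ_pos i hni, hne]; ring
          rw [hMi, hLρ_pos i hni, hne]
          linarith
        · exact (hmid i hni hne).le
      · rw [if_neg hni, if_neg hni, if_neg hni]
        norm_num
    have hstrict0 : ((if 0 < n i0 then κ i0 * n i0 ^ α * psi α (Λ n i0) else 0)
          + (if 0 < n i0 then κ i0 * n i0 ^ α * psi α (Lρ i0) else 0)) / 2
        < (if 0 < n i0 then κ i0 * n i0 ^ α * psi α (M i0) else 0) := by
      rw [if_pos hni0, if_pos hni0, if_pos hni0]
      exact hmid i0 hni0 hneq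
    have hsum := Finset.sum_lt_sum (fun i (_ : i ∈ Finset.univ) => hhalf i)
      ⟨i0, Finset.mem_univ i0, hstrict0⟩
    rw [← Finset.sum_div, Finset.sum_add_distrib] at hsum
    have hMle := hGopt M hfeasM
    rw [Gfun_eq α κ n M hbM, Gfun_eq α κ n Lρ hbρ, EReal.coe_le_coe_iff] at hMle
    rw [heq] at hsum
    linarith


private lemma hasDerivAt_psi_affine {α c e : ℝ} (hα : 0 < α) (hc : 0 < c) :
    HasDerivAt (fun θ : ℝ => psi α (c + θ * e)) (c ^ (-α) * e) 0 := by
  have hbase : HasDerivAt (fun θ : ℝ => c + θ * e) e 0 := by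
    simpa using ((hasDerivAt_id (0:ℝ)).mul_const e).const_add c
  have hval : c + 0 * e = c := by ring
  by_cases hα1 : α = 1
  · subst hα1
    have hψ : (fun θ : ℝ => psi 1 (c + θ * e)) = fun θ => Real.log (c + θ * e) := by
      funext θ; rw [psi, if_pos rfl]
    rw [hψ]
    have hlog := hbase.log (by rw [hval]; exact hc.ne')
    convert hlog using 1
    rw [hval, Real.rpow_neg_one]
    rw [div_eq_inv_mul]
  · have hψ : (fun θ : ℝ => psi α (c + θ * e)) = fun θ => (c + θ * e) ^ (1 - α) / (1 - α) := by
      funext θ; rw [psi, if_neg hα1]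
    rw [hψ]
    have hrpow := hbase.rpow_const (p := 1 - α) (Or.inl (by rw [hval]; exact hc.ne'))
    have hd := hrpow.div_const (1 - α)
    refine hd.congr_deriv ?_
    rw [hval, show (1 - α - 1 : ℝ) = -α by ring]
    have h1α : (1:ℝ) - α ≠ 0 := sub_ne_zero.2 (Ne.symm hα1)
    field_simp

private lemma key_forward {I J : ℕ} (A : Fin J → Fin I → ℝ)
    (hA01 : ∀ j i, A j i = 0 ∨ A j i = 1) (C : Fin J → ℝ)
    (α : ℝ) (hα : 0 < α) (κ : Fin I → ℝ) (hκ : ∀ i, 0 < κ i)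
    (ν μ : Fin I → ℝ) (hν : ∀ i, 0 < ν i) (hμ : ∀ i, 0 < μ i)
    (hload : ∀ j, (∑ i, A j i * (ν i / μ i)) ≤ C j)
    (Λ : (Fin I → ℝ) → Fin I → ℝ)
    (hΛ : ∀ n : Fin I → ℝ, (∀ i, 0 ≤ n i) → IsAlloc A C α κ n (Λ n))
    (n : Fin I → ℝ) (hn : ∀ i, 0 ≤ n i)
    (hl : ∀ i, 0 < n i → Λ n i = ν i / μ i) :
    ∃ q : Fin J → ℝ, (∀ j, 0 ≤ q j) ∧ (∀ j, j ∉ Jstar A C ν μ → q j = 0) ∧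
      ∀ i, n i = (ν i / μ i) * ((∑ j, q j * A j i) / κ i) ^ (1 / α) := by
  set ρ : Fin I → ℝ := fun i => ν i / μ i with hρ_def
  have hρ : ∀ i, 0 < ρ i := fun i => div_pos (hν i) (hμ i)
  have hαne : α ≠ 0 := hα.ne'
  set Lρ : Fin I → ℝ := fun i => if 0 < n i then ρ i else 0 with hLρ_def
  have hLρ_pos : ∀ i, 0 < n i → Lρ i = ρ i := fun i hni => if_pos hni
  have hLρ_zero : ∀ i, ¬0 < n i → Lρ i = 0 := fun i hni => if_neg hni
  have hfeasLρ : Lρ ∈ Feasible A C n := Lrho_feasible A hA01 C ν μ hν hμ hload n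
  have hbρ : ¬(1 ≤ α ∧ ∃ i, 0 < n i ∧ Lρ i = 0) := by
    rintro ⟨-, i, hni, hLi⟩
    rw [hLρ_pos i hni] at hLi
    exact (hρ i).ne' hLi
  obtain ⟨hfeasΛ, hoptΛ⟩ := hΛ n hn
  have hΛeq : Λ n = Lρ := by
    funext i
    by_cases hni : 0 < n i
    · rw [hl i hni, hLρ_pos i hni]
    · rw [hfeasΛ.2.1 i (le_antisymm (not_lt.1 hni) (hn i)), hLρ_zero i hni]
  rw [hΛeq] at hoptΛ
  set g : Fin I → ℝ := fun i => κ i * n i ^ α * ρ i ^ (-α) with hg_def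
  have hg0 : ∀ i, ¬0 < n i → g i = 0 := by
    intro i hni
    have hzero : n i = 0 := le_antisymm (not_lt.1 hni) (hn i)
    show κ i * n i ^ α * ρ i ^ (-α) = 0
    rw [hzero, Real.zero_rpow hαne, mul_zero, zero_mul]
  -- Variational inequality via one-sided derivative
  have hVI : ∀ L' ∈ Feasible A C n, (∑ i, g i * L' i) ≤ ∑ i, g i * Lρ i := by
    intro L' hL'
    set d : Fin I → ℝ := fun i => L' i - Lρ i with hd_def
    set f : ℝ → ℝ := fun θ => ∑ i, if 0 < n i then κ i * n i ^ α * psi α (ρ i + θ * d i) else 0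
      with hf_def
    have hf_le : ∀ θ ∈ Ioo (0:ℝ) 1, f θ ≤ f 0 := by
      intro θ hθ
      set Lθ : Fin I → ℝ := fun i => Lρ i + θ * d i with hLθ_def
      have hLθi : ∀ i, Lθ i = (1 - θ) * Lρ i + θ * L' i := by
        intro i; show Lρ i + θ * (L' i - Lρ i) = _; ring
      have hfeasθ : Lθ ∈ Feasible A C n := by
        refine ⟨fun i => ?_, fun i hi => ?_, fun j => ?_⟩
        · rw [hLθi i]
          have h1 := hfeasLρ.1 i
          have h2 := hL'.1 i
          nlinarith [hθ.1, hθ.2]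
        · rw [hLθi i, hfeasLρ.2.1 i hi, hL'.2.1 i hi]; ring
        · show (∑ i, A j i * Lθ i) ≤ C j
          have hexp : (∑ i, A j i * Lθ i)
              = (1 - θ) * (∑ i, A j i * Lρ i) + θ * (∑ i, A j i * L' i) := by
            rw [Finset.mul_sum, Finset.mul_sum, ← Finset.sum_add_distrib]
            refine Finset.sum_congr rfl fun i _ => ?_
            rw [hLθi i]; ring
          rw [hexp]
          have h1 := hfeasLρ.2.2 j
          have h2 := hL'.2.2 j
          nlinarith [hθ.1, hθ.2]
      have hbθ : ¬(1 ≤ α ∧ ∃ i, 0 < n i ∧ Lθ i = 0) := by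
        rintro ⟨-, i, hni, h0⟩
        rw [hLθi i, hLρ_pos i hni] at h0
        have h1 := hρ i
        have h2 := hL'.1 i
        nlinarith [hθ.1, hθ.2]
      have hle := hoptΛ Lθ hfeasθ
      rw [Gfun_eq α κ n Lθ hbθ, Gfun_eq α κ n Lρ hbρ, EReal.coe_le_coe_iff] at hle
      have e1 : f θ = ∑ i, if 0 < n i then κ i * n i ^ α * psi α (Lθ i) else 0 := by
        refine Finset.sum_congr rfl fun i _ => ?_
        by_cases hni : 0 < n i
        · rw [if_pos hni, if_pos hni]
          have : Lθ i = ρ i + θ * d i := by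
            show Lρ i + θ * d i = _
            rw [hLρ_pos i hni]
          rw [this]
        · rw [if_neg hni, if_neg hni]
      have e0 : f 0 = ∑ i, if 0 < n i then κ i * n i ^ α * psi α (Lρ i) else 0 := by
        refine Finset.sum_congr rfl fun i _ => ?_
        by_cases hni : 0 < n i
        · rw [if_pos hni, if_pos hni]
          have : ρ i + 0 * d i = Lρ i := by rw [hLρ_pos i hni]; ring
          rw [this]
        · rw [if_neg hni, if_neg hni]
      rw [e1, e0]
      exact hle
    have hderiv : HasDerivAt f (∑ i, g i * d i) 0 := by
      rw [hf_def]
      refine HasDerivAt.fun_sum fun i _ => ?_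
      by_cases hni : 0 < n i
      · simp only [if_pos hni]
        have h := (hasDerivAt_psi_affine (e := d i) hα (hρ i)).const_mul (κ i * n i ^ α)
        refine h.congr_deriv ?_
        show κ i * n i ^ α * (ρ i ^ (-α) * d i) = g i * d i
        rw [hg_def]
        ring
      · simp only [if_neg hni]
        have hz : g i * d i = 0 := by rw [hg0 i hni, zero_mul]
        rw [hz]
        exact hasDerivAt_const 0 0
    have hslope : Filter.Tendsto (slope f 0) (nhdsWithin 0 (Ioi (0:ℝ)))
        (nhds (∑ i, g i * d i)) :=
      (hasDerivAt_iff_tendsto_slope.1 hderiv).mono_left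
        (nhdsWithin_mono 0 fun x hx => ne_of_gt hx)
    have hev : ∀ᶠ θ in nhdsWithin 0 (Ioi (0:ℝ)), slope f 0 θ ≤ 0 := by
      filter_upwards [Ioo_mem_nhdsGT_of_mem (Set.mem_Ico.2 ⟨le_rfl, zero_lt_one⟩)] with θ hθ
      rw [slope_def_field]
      apply div_nonpos_iff.2
      right
      constructor
      · linarith [hf_le θ hθ]
      · linarith [hθ.1]
    have hle0 : (∑ i, g i * d i) ≤ 0 := le_of_tendsto hslope hev
    have hexp : (∑ i, g i * d i) = (∑ i, g i * L' i) - ∑ i, g i * Lρ i := by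
      rw [← Finset.sum_sub_distrib]
      refine Finset.sum_congr rfl fun i _ => ?_
      show g i * (L' i - Lρ i) = _
      ring
    rw [hexp] at hle0
    linarith
  -- structure of active rows
  have hact : ∀ j, (∑ i, A j i * Lρ i) = C j →
      (j ∈ Jstar A C ν μ ∧ ∀ i, ¬0 < n i → A j i = 0) := by
    intro j hj
    have hAn : ∀ i, 0 ≤ A j i := fun i => by
      rcases hA01 j i with h | h <;> rw [h] <;> norm_num
    have hle : ∀ i, A j i * Lρ i ≤ A j i * ρ i := by
      intro i
      refine mul_le_mul_of_nonneg_left ?_ (hAn i)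
      by_cases hni : 0 < n i
      · rw [hLρ_pos i hni]
      · rw [hLρ_zero i hni]; exact (hρ i).le
    have h1 : (∑ i, A j i * Lρ i) ≤ ∑ i, A j i * ρ i := Finset.sum_le_sum fun i _ => hle i
    have h2 : (∑ i, A j i * ρ i) = C j := le_antisymm (hload j) (by rw [← hj]; exact h1)
    refine ⟨h2, fun i hni => ?_⟩
    have hz : ∀ i' ∈ Finset.univ (α := Fin I), A j i' * ρ i' - A j i' * Lρ i' = 0 := by
      rw [← Finset.sum_eq_zero_iff_of_nonneg (fun i' _ => by linarith [hle i'])]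
      rw [Finset.sum_sub_distrib, h2, hj, sub_self]
    have hzi := hz i (Finset.mem_univ i)
    rw [hLρ_zero i hni, mul_zero, sub_zero] at hzi
    rcases mul_eq_zero.1 hzi with h | h
    · exact h
    · exact absurd h (hρ i).ne'
  -- Farkas
  set Aa : Fin J → Fin I → ℝ := fun j i => if (∑ i', A j i' * Lρ i') = C j then A j i else 0
    with hAa_def
  have hfark : ∀ dd : Fin I → ℝ, (∀ j, dotp (Aa j) dd ≤ 0) → dotp g dd ≤ 0 := by
    intro dd hdd
    set dt : Fin I → ℝ := fun i => if 0 < n i then dd i else 0 with hdt_def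
    have hgd : dotp g dd = dotp g dt := by
      refine Finset.sum_congr rfl fun i _ => ?_
      by_cases hni : 0 < n i
      · have : dt i = dd i := if_pos hni
        rw [this]
      · show g i * dd i = g i * dt i
        rw [hg0 i hni, zero_mul, zero_mul]
    have hAdt : ∀ j, (∑ i, A j i * Lρ i) = C j → (∑ i, A j i * dt i) ≤ 0 := by
      intro j hactj
      have hAd : (∑ i, A j i * dt i) = ∑ i, Aa j i * dd i := by
        refine Finset.sum_congr rfl fun i _ => ?_
        have hAaj : Aa j i = A j i := if_pos hactj
        by_cases hni : 0 < n i
        · have : dt i = dd i := if_pos hni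
          rw [this, hAaj]
        · have h1 : dt i = 0 := if_neg hni
          have h2 : A j i = 0 := (hact j hactj).2 i hni
          rw [h1, h2, hAaj, h2, mul_zero, zero_mul]
      rw [hAd]
      exact hdd j
    have hev : ∀ᶠ ε in nhdsWithin 0 (Ioi (0:ℝ)),
        (fun i => Lρ i + ε * dt i) ∈ Feasible A C n := by
      have hev1 : ∀ᶠ ε in nhdsWithin 0 (Ioi (0:ℝ)), ∀ i, 0 ≤ Lρ i + ε * dt i := by
        rw [Filter.eventually_all]
        intro i
        by_cases hni : 0 < n i
        · have hcont : Filter.Tendsto (fun ε : ℝ => Lρ i + ε * dt i) (nhds 0) (nhds (Lρ i)) := by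
            exact Continuous.tendsto' (continuous_const.add (continuous_id.mul continuous_const))
              0 (Lρ i) (by simp [hLρ_def])
          have hLρi : 0 < Lρ i := by rw [hLρ_pos i hni]; exact hρ i
          exact ((hcont.mono_left nhdsWithin_le_nhds).eventually (lt_mem_nhds hLρi)).mono
            fun ε hε => hε.le
        · refine Filter.Eventually.of_forall fun ε => ?_
          have h1 : dt i = 0 := if_neg hni
          rw [hLρ_zero i hni, h1, mul_zero, add_zero]
      have hev2 : ∀ᶠ ε in nhdsWithin 0 (Ioi (0:ℝ)),
          ∀ j, (∑ i, A j i * (Lρ i + ε * dt i)) ≤ C j := by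
        rw [Filter.eventually_all]
        intro j
        have hexp : ∀ ε : ℝ, (∑ i, A j i * (Lρ i + ε * dt i))
            = (∑ i, A j i * Lρ i) + ε * ∑ i, A j i * dt i := by
          intro ε
          rw [Finset.mul_sum, ← Finset.sum_add_distrib]
          refine Finset.sum_congr rfl fun i _ => ?_
          ring
        by_cases hactj : (∑ i, A j i * Lρ i) = C j
        · filter_upwards [eventually_mem_nhdsWithin] with ε hε
          rw [hexp ε, hactj]
          have h1 := hAdt j hactj
          have h2 : (0:ℝ) < ε := hε
          nlinarith
        · have hlt : (∑ i, A j i * Lρ i) < C j := (hfeasLρ.2.2 j).lt_of_ne hactj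
          have hcont : Filter.Tendsto
              (fun ε : ℝ => (∑ i, A j i * Lρ i) + ε * ∑ i, A j i * dt i) (nhds 0)
              (nhds (∑ i, A j i * Lρ i)) := by
            exact Continuous.tendsto' (continuous_const.add (continuous_id.mul continuous_const))
              0 _ (by simp)
          have hev' := (hcont.mono_left (nhdsWithin_le_nhds
            (s := Ioi (0:ℝ)))).eventually (gt_mem_nhds hlt)
          filter_upwards [hev'] with ε hε
          rw [hexp ε]
          exact hε.le
      filter_upwards [hev1, hev2] with ε h1 h2
      exact ⟨h1, fun i hi => by
        have hdt0 : dt i = 0 := if_neg (by rw [hi]; exact lt_irrefl 0)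
        show Lρ i + ε * dt i = 0
        rw [hfeasLρ.2.1 i hi, hdt0, mul_zero, add_zero], h2⟩
    obtain ⟨ε, hfeasε, hεpos⟩ :=
      (hev.and (eventually_mem_nhdsWithin.mono fun x hx => hx)).exists
    have hvi := hVI (fun i => Lρ i + ε * dt i) hfeasε
    have hexp2 : (∑ i, g i * (Lρ i + ε * dt i))
        = (∑ i, g i * Lρ i) + ε * ∑ i, g i * dt i := by
      rw [Finset.mul_sum, ← Finset.sum_add_distrib]
      refine Finset.sum_congr rfl fun i _ => ?_
      ring
    rw [hexp2] at hvi
    have hdt_le : (∑ i, g i * dt i) ≤ 0 := by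
      by_contra hpos
      push_neg at hpos
      have : 0 < ε * ∑ i, g i * dt i := mul_pos hεpos hpos
      linarith
    rw [hgd]
    exact hdt_le
  obtain ⟨q0, hq00, hq0f⟩ := farkas_aux J Aa g hfark
  refine ⟨fun j => if (∑ i', A j i' * Lρ i') = C j then q0 j else 0, fun j => ?_, fun j hj => ?_,
    fun i => ?_⟩
  · show 0 ≤ if (∑ i', A j i' * Lρ i') = C j then q0 j else 0
    by_cases hc : (∑ i', A j i' * Lρ i') = C j
    · rw [if_pos hc]; exact hq00 j
    · rw [if_neg hc]
  · show (if (∑ i', A j i' * Lρ i') = C j then q0 j else 0) = 0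
    by_cases hc : (∑ i', A j i' * Lρ i') = C j
    · exact absurd ((hact j hc).1) hj
    · rw [if_neg hc]
  · show n i = (ν i / μ i) * ((∑ j, (if (∑ i', A j i' * Lρ i') = C j then q0 j else 0) * A j i) / κ i) ^ (1 / α)
    have hqA : (∑ j, (if (∑ i', A j i' * Lρ i') = C j then q0 j else 0) * A j i) = g i := by
      rw [hq0f i]
      refine Finset.sum_congr rfl fun j _ => ?_
      by_cases hc : (∑ i', A j i' * Lρ i') = C j
      · have : Aa j i = A j i := if_pos hc
        rw [if_pos hc, this]
      · have : Aa j i = 0 := if_neg hc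
        rw [if_neg hc, this, zero_mul, mul_zero]
    rw [hqA]
    by_cases hni : 0 < n i
    · have hgi : g i = κ i * (n i / ρ i) ^ α := by
        show κ i * n i ^ α * ρ i ^ (-α) = _
        rw [Real.div_rpow (hn i) (hρ i).le, Real.rpow_neg (hρ i).le]
        ring
      rw [hgi, mul_div_cancel_left₀ _ (hκ i).ne',
        ← Real.rpow_mul (div_nonneg (hn i) (hρ i).le), mul_one_div, div_self hαne,
        Real.rpow_one]
      show n i = ρ i * (n i / ρ i)
      rw [mul_comm, div_mul_eq_mul_div, mul_div_assoc, div_self (hρ i).ne', mul_one]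
    · have hzero : n i = 0 := le_antisymm (not_lt.1 hni) (hn i)
      rw [hzero, hg0 i hni, zero_div, Real.zero_rpow (one_div_ne_zero hαne), mul_zero]

theorem stmt6 {I J : ℕ} (hI : 0 < I) (hJ : 0 < J)
    (A : Fin J → Fin I → ℝ) (hA01 : ∀ j i, A j i = 0 ∨ A j i = 1)
    (hAcol : ∀ i, ∃ j, A j i = 1) (hArank : LinearIndependent ℝ A)
    (C : Fin J → ℝ) (hC : ∀ j, 0 < C j)
    (α : ℝ) (hα : 0 < α) (κ : Fin I → ℝ) (hκ : ∀ i, 0 < κ i)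
    (ν μ : Fin I → ℝ) (hν : ∀ i, 0 < ν i) (hμ : ∀ i, 0 < μ i)
    (hload : ∀ j, (∑ i, A j i * (ν i / μ i)) ≤ C j)
    (hJs : (Jstar A C ν μ).Nonempty)
    (Λ : (Fin I → ℝ) → Fin I → ℝ)
    (hΛ : ∀ n : Fin I → ℝ, (∀ i, 0 ≤ n i) → IsAlloc A C α κ n (Λ n))
    (n : Fin I → ℝ) (hn : ∀ i, 0 ≤ n i) :
    (IsFluidSol A C ν μ Λ fun _ => n) ↔
      ∃ q : Fin J → ℝ, (∀ j, 0 ≤ q j) ∧ (∀ j, j ∉ Jstar A C ν μ → q j = 0) ∧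
        ∀ i, n i = (ν i / μ i) * ((∑ j, q j * A j i) / κ i) ^ (1 / α) := by
  have hfluid : (IsFluidSol A C ν μ Λ fun _ => n) ↔ ∀ i, 0 < n i → Λ n i = ν i / μ i := by
    constructor
    · intro hF i hni
      obtain ⟨-, -, h3⟩ := hF
      obtain ⟨hd, -⟩ := h3 0 self_mem_Ici (fun i => differentiableWithinAt_const _)
      have h1 := (hd i).1 hni
      have hu : UniqueDiffWithinAt ℝ (Ici (0:ℝ)) 0 := uniqueDiffOn_Ici 0 0 self_mem_Ici
      have h2 := (hasDerivWithinAt_const (0:ℝ) (Ici (0:ℝ)) (n i) :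
        HasDerivWithinAt (fun s : ℝ => (fun _ : ℝ => n) s i) 0 (Ici (0:ℝ)) 0)
      have he := h1.derivWithin hu
      rw [h2.derivWithin hu] at he
      have hμi := hμ i
      rw [eq_div_iff (hμ i).ne']
      have : Λ ((fun _ : ℝ => n) 0) i = Λ n i := rfl
      rw [this] at he
      linarith
    · intro hl
      refine ⟨fun i => ?_, fun t _ i => hn i,
        fun t _ _ => ⟨fun i => ⟨fun hni => ?_, fun h0 => ?_⟩, fun j => ?_⟩⟩
      · intro T hT ε hε
        exact ⟨1, one_pos, fun m a b _ _ _ => by simpa using hε⟩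
      · show HasDerivWithinAt (fun _ : ℝ => n i) (ν i - μ i * Λ n i) (Ici (0:ℝ)) t
        have hz : ν i - μ i * Λ n i = 0 := by
          rw [hl i hni, mul_comm, div_mul_cancel₀ _ (hμ i).ne', sub_self]
        rw [hz]
        exact hasDerivWithinAt_const _ _ _
      · exact hasDerivWithinAt_const _ _ _
      · show (∑ i, A j i * (if 0 < n i then Λ n i else ν i / μ i)) ≤ C j
        refine le_trans (le_of_eq (Finset.sum_congr rfl fun i _ => ?_)) (hload j)
        by_cases hni : 0 < n i
        · rw [if_pos hni, hl i hni]
        · rw [if_neg hni]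
  rw [hfluid]
  constructor
  · intro hl
    exact key_forward A hA01 C α hα κ hκ ν μ hν hμ hload Λ hΛ n hn hl
  · rintro ⟨q, hq0, hqJ, hnf⟩ i hni
    exact key_backward A hA01 C α hα κ hκ ν μ hν hμ hload Λ hΛ n hn q hq0 hqJ hnf i hni
end
end
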